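/- arXiv:2402.14173 — 13 statements merged into one kernel-verified Lean document; each statement's English description precedes it below -/
import Mathlib

section
/- For every constant C ≥ 1 there is no incentive-compatible mechanism in the traditional model that C-approximates the Nash Social Welfare for two players with additive valuations over two items. Precisely: let M = {a, b} be a set of two items, let V be the class of all additive valuations v : 2^M → ℝ with v(∅) = 0 and nonnegative item values, let f : V × V → (allocations of M to the two players) be a social choice function and p : V × V → ℝ² payment functions such that (f, p) is incentive compatible in the traditional model. Then there exists an instance (v₁, v₂) ∈ V × V such that, writing (S₁, S₂) = f(v₁, v₂), one has v₁(S₁)·v₂(S₂) < (1/C²)·max_{(O₁,O₂) allocation} v₁(O₁)·v₂(O₂). -/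
/-- The class of additive valuations over the two items, with nonnegative item
values (additivity forces `v ∅ = 0`). -/
def AdditiveVal : Set (Finset (Fin 2) → ℝ) :=
  {v | v ∅ = 0 ∧ (∀ j : Fin 2, 0 ≤ v {j}) ∧ ∀ S : Finset (Fin 2), v S = ∑ j ∈ S, v {j}}

/-- The additive valuation with item values `α` (item `0`) and `β` (item `1`). -/
def mkVal (α β : ℝ) : Finset (Fin 2) → ℝ := fun S => ∑ j ∈ S, (if j = (0 : Fin 2) then α else β)

@[simp] lemma mkVal_empty (α β : ℝ) : mkVal α β ∅ = 0 := rfl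
@[simp] lemma mkVal_s0 (α β : ℝ) : mkVal α β {0} = α := by simp [mkVal]
@[simp] lemma mkVal_s1 (α β : ℝ) : mkVal α β {1} = β := by simp [mkVal]
@[simp] lemma mkVal_pair (α β : ℝ) : mkVal α β {0,1} = α + β := by simp [mkVal, Finset.sum_pair]

lemma mkVal_mem {α β : ℝ} (hα : 0 ≤ α) (hβ : 0 ≤ β) : mkVal α β ∈ AdditiveVal := by
  refine ⟨rfl, ?_, ?_⟩
  · intro j; fin_cases j <;> simpa
  · intro S; simp [mkVal]

lemma split_cases (B : Finset (Fin 2)) : B = ∅ ∨ B = {0} ∨ B = {1} ∨ B = {0,1} := by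
  revert B; decide

/-- If an approximation bound `K` is positive and exceeds the product of the
crossed allocation, the allocation is forced to be `({0},{1})`. -/
lemma forced01 {K α β γ δ : ℝ}
    {B₁ B₂ : Finset (Fin 2)} (hd : Disjoint B₁ B₂)
    (h0 : 0 < K) (h1 : β*γ < K)
    (hap : K ≤ mkVal α β B₁ * mkVal γ δ B₂) :
    B₁ = {0} ∧ B₂ = {1} := by
  rcases split_cases B₁ with h|h|h|h <;> subst h <;>
    rcases split_cases B₂ with h|h|h|h <;> subst h <;>
    simp_all <;> nlinarith

/-- Symmetric version: the allocation is forced to be `({1},{0})`. -/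
lemma forced10 {K α β γ δ : ℝ}
    {B₁ B₂ : Finset (Fin 2)} (hd : Disjoint B₁ B₂)
    (h0 : 0 < K) (h1 : α*δ < K)
    (hap : K ≤ mkVal α β B₁ * mkVal γ δ B₂) :
    B₁ = {1} ∧ B₂ = {0} := by
  rcases split_cases B₁ with h|h|h|h <;> subst h <;>
    rcases split_cases B₂ with h|h|h|h <;> subst h <;>
    simp_all <;> nlinarith

/-- No incentive-compatible mechanism in the traditional model can `C`-approximate
the Nash Social Welfare for two players with additive valuations over two items. -/
theorem no_traditional_nsw_approx (C : ℝ) (hC : 1 ≤ C)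
    (f : AdditiveVal → AdditiveVal → {P : Finset (Fin 2) × Finset (Fin 2) // Disjoint P.1 P.2})
    (p : AdditiveVal → AdditiveVal → ℝ × ℝ)
    (hIC1 : ∀ v₁ v₁' v₂ : AdditiveVal,
      v₁.1 (f v₁ v₂).1.1 - (p v₁ v₂).1 ≥ v₁.1 (f v₁' v₂).1.1 - (p v₁' v₂).1)
    (hIC2 : ∀ v₁ v₂ v₂' : AdditiveVal,
      v₂.1 (f v₁ v₂).1.2 - (p v₁ v₂).2 ≥ v₂.1 (f v₁ v₂').1.2 - (p v₁ v₂').2) :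
    ∃ (v₁ v₂ : AdditiveVal) (O₁ O₂ : Finset (Fin 2)), Disjoint O₁ O₂ ∧
      v₁.1 (f v₁ v₂).1.1 * v₂.1 (f v₁ v₂).1.2 < (1 / C ^ 2) * (v₁.1 O₁ * v₂.1 O₂) := by
  by_contra hcon
  push_neg at hcon
  have hC0 : (0:ℝ) < C := lt_of_lt_of_le one_pos hC
  have hC2 : (0:ℝ) < C^2 := by positivity
  have hd01 : Disjoint ({0} : Finset (Fin 2)) {1} := by simp
  have hd10 : Disjoint ({1} : Finset (Fin 2)) {0} := by simp
  -- the fixed valuation (2,1) of player 2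
  obtain ⟨w, hw⟩ : ∃ w : AdditiveVal, w.1 = mkVal 2 1 :=
    ⟨⟨_, mkVal_mem (by norm_num) (by norm_num)⟩, rfl⟩
  -- player-1 report forced to receive item 0 against w
  obtain ⟨vT, hvT⟩ : ∃ v : AdditiveVal, v.1 = mkVal (3*C^2) 1 :=
    ⟨⟨_, mkVal_mem (by positivity) (by norm_num)⟩, rfl⟩
  -- player-1 report forced to receive item 1 against w
  obtain ⟨vT', hvT'⟩ : ∃ v : AdditiveVal, v.1 = mkVal 1 (C^2) :=
    ⟨⟨_, mkVal_mem (by norm_num) (by positivity)⟩, rfl⟩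
  -- f vT w = ({0},{1})
  have hapT := hcon vT w {0} {1} hd01
  rw [hvT, hw] at hapT
  simp only [mkVal_s0, mkVal_s1] at hapT
  obtain ⟨hT1, hT2⟩ := forced01 (f vT w).2
    (show (0:ℝ) < 1/C^2 * (3*C^2*1) by
      have : 1/C^2 * (3*C^2*1) = 3 := by field_simp
      rw [this]; norm_num)
    (show (1:ℝ)*2 < 1/C^2 * (3*C^2*1) by
      have : 1/C^2 * (3*C^2*1) = 3 := by field_simp
      rw [this]; norm_num) hapT
  -- f vT' w = ({1},{0})
  have hapT' := hcon vT' w {1} {0} hd10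
  rw [hvT', hw] at hapT'
  simp only [mkVal_s0, mkVal_s1] at hapT'
  obtain ⟨hT'1, hT'2⟩ := forced10 (f vT' w).2
    (show (0:ℝ) < 1/C^2 * (C^2*2) by
      have : 1/C^2 * (C^2*2) = 2 := by field_simp
      rw [this]; norm_num)
    (show (1:ℝ)*1 < 1/C^2 * (C^2*2) by
      have : 1/C^2 * (C^2*2) = 2 := by field_simp
      rw [this]; norm_num) hapT'
  set qa := (p vT w).1 with hqa
  set qb := (p vT' w).1 with hqb
  set lam := max 1 (qa - qb) with hlamdef
  have hlam1 : (1:ℝ) ≤ lam := le_max_left _ _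
  have hlam2 : qa - qb ≤ lam := le_max_right _ _
  have hlam0 : (0:ℝ) < lam := lt_of_lt_of_le one_pos hlam1
  -- the big valuation of player 1
  obtain ⟨vS, hvS⟩ : ∃ v : AdditiveVal, v.1 = mkVal (3*lam) lam :=
    ⟨⟨_, mkVal_mem (by positivity) (le_of_lt hlam0)⟩, rfl⟩
  -- f vS w = ({0},{1}), using player 1's incentive constraints
  have hapS := hcon vS w {0} {1} hd01
  rw [hvS, hw] at hapS
  simp only [mkVal_s0, mkVal_s1] at hapS
  have hKS : (0:ℝ) < 1/C^2 * (3*lam*1) := by positivity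
  have hS : (f vS w).1.1 = {0} ∧ (f vS w).1.2 = {1} := by
    rcases split_cases (f vS w).1.1 with h1|h1|h1|h1
    · rw [h1] at hapS; simp only [mkVal_empty] at hapS; nlinarith
    · -- player 1 got {0}; player 2 must get {1}
      refine ⟨h1, ?_⟩
      have hd := (f vS w).2
      rw [h1] at hd hapS
      rcases split_cases (f vS w).1.2 with h2|h2|h2|h2
      · rw [h2] at hapS; simp only [mkVal_empty, mkVal_s0] at hapS; nlinarith
      · rw [h2] at hd; simp at hd
      · exact h2
      · rw [h2] at hd; simp [Finset.disjoint_left] at hd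
    · -- player 1 got {1}: contradicts incentive compatibility
      exfalso
      have IC_a := hIC1 vS vT w
      rw [hvS, h1, hT1] at IC_a
      simp only [mkVal_s0, mkVal_s1] at IC_a
      have IC_b := hIC1 vT' vS w
      rw [hvT', h1, hT'1] at IC_b
      simp only [mkVal_s1] at IC_b
      -- IC_a : lam - (p vS w).1 ≥ 3*lam - qa ; IC_b : C^2 - qb ≥ C^2 - (p vS w).1
      linarith
    · -- player 1 got everything: player 2 gets nothing, zero product
      exfalso
      have hd := (f vS w).2
      rw [h1] at hd hapS
      have h2 : (f vS w).1.2 = ∅ := by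
        rcases split_cases (f vS w).1.2 with h2|h2|h2|h2
        · exact h2
        · rw [h2] at hd; simp [Finset.disjoint_left] at hd
        · rw [h2] at hd; simp [Finset.disjoint_left] at hd
        · rw [h2] at hd; simp [Finset.disjoint_left] at hd
      rw [h2] at hapS; simp only [mkVal_empty] at hapS; nlinarith
  -- the tiny valuation of player 2
  obtain ⟨vt, hvt⟩ : ∃ v : AdditiveVal, v.1 = mkVal ((3*C^2+1)*(1/(6*C^2))) (1/(6*C^2)) :=
    ⟨⟨_, mkVal_mem (by positivity) (by positivity)⟩, rfl⟩
  -- f vS vt = ({1},{0})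
  have hapt := hcon vS vt {1} {0} hd10
  rw [hvS, hvt] at hapt
  simp only [mkVal_s0, mkVal_s1] at hapt
  have heq : 1/C^2 * (lam * ((3*C^2+1)*(1/(6*C^2)))) = 3*lam*(1/(6*C^2)) + lam*(1/(6*C^2))/C^2 := by
    field_simp
  have hpos : (0:ℝ) < 3*lam*(1/(6*C^2)) + lam*(1/(6*C^2))/C^2 := by positivity
  obtain ⟨ht1, ht2⟩ := forced10 (f vS vt).2
    (show (0:ℝ) < 1/C^2 * (lam * ((3*C^2+1)*(1/(6*C^2)))) by rw [heq]; exact hpos)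
    (show 3*lam*(1/(6*C^2)) < 1/C^2 * (lam * ((3*C^2+1)*(1/(6*C^2)))) by
      rw [heq]
      have : (0:ℝ) < lam*(1/(6*C^2))/C^2 := by positivity
      linarith) hapt
  -- incentive constraints for player 2 between w and vt give a contradiction
  have E1 := hIC2 vS w vt
  rw [hw, hS.2, ht2] at E1
  simp only [mkVal_s0, mkVal_s1] at E1
  have E2 := hIC2 vS vt w
  rw [hvt, hS.2, ht2] at E2
  simp only [mkVal_s0, mkVal_s1] at E2
  -- E1 : 1 - (p vS w).2 ≥ 2 - (p vS vt).2
  -- E2 : (3*C^2+1)*(1/(6*C^2)) - (p vS vt).2 ≥ 1/(6*C^2) - (p vS w).2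
  have hcalc : (3*C^2+1)*(1/(6*C^2)) - 1/(6*C^2) = 1/2 := by field_simp; ring
  linarith
end

section
/- Let A be a nonempty finite set of alternatives, let V be a set of valuations v : A → ℝ with v(a) > 0 for every a ∈ A, and let n ≥ 1. Let f : V^n → A be any social choice function such that for every instance (v₁,…,vₙ), f(v₁,…,vₙ) ∈ argmax_{a ∈ A} ∏ᵢ vᵢ(a), i.e., f selects an alternative maximizing the Nash Social Welfare. Then f is implementable in the percentage fee model: there exist payment functions pᵢ : V^n → [0,1) such that for every player i, every vᵢ, vᵢ' ∈ V and every v₋ᵢ ∈ V^{n−1}: (1 − pᵢ(vᵢ, v₋ᵢ))·vᵢ(f(vᵢ, v₋ᵢ)) ≥ (1 − pᵢ(vᵢ', v₋ᵢ))·vᵢ(f(vᵢ', v₋ᵢ)). -/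
/-- In the percentage fee model, any social choice function that always selects an
alternative maximizing the Nash Social Welfare (the product of the positive valuations)
is implementable. -/
theorem nsw_maximizer_implementable_percentage_fee
    {A : Type} [Fintype A] [Nonempty A]
    (V : Set (A → ℝ)) (hV : ∀ v ∈ V, ∀ a : A, 0 < v a)
    (n : ℕ) (hn : 1 ≤ n)
    (f : (Fin n → V) → A)
    (hf : ∀ vv : Fin n → V, ∀ a : A,
      ∏ i, (vv i : A → ℝ) a ≤ ∏ i, (vv i : A → ℝ) (f vv)) :
    ∃ p : Fin n → (Fin n → V) → ℝ,
      (∀ i vv, p i vv ∈ Set.Ico (0 : ℝ) 1) ∧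
      ∀ (i : Fin n) (vv : Fin n → V) (v' : V),
        (1 - p i vv) * (vv i : A → ℝ) (f vv) ≥
          (1 - p i (Function.update vv i v')) *
            (vv i : A → ℝ) (f (Function.update vv i v')) := by
  classical
  -- P i vv a : product of others' valuations at a
  set P : Fin n → (Fin n → V) → A → ℝ :=
    fun i vv a => ∏ j ∈ Finset.univ.erase i, (vv j : A → ℝ) a with hP
  set M : Fin n → (Fin n → V) → ℝ :=
    fun i vv => Finset.univ.sup' Finset.univ_nonempty (P i vv) with hM
  have hPpos : ∀ i vv a, 0 < P i vv a := by
    intro i vv a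
    exact Finset.prod_pos fun j _ => hV (vv j) (vv j).2 a
  have hPleM : ∀ i vv a, P i vv a ≤ M i vv := by
    intro i vv a
    exact Finset.le_sup' _ (Finset.mem_univ a)
  have hMpos : ∀ i vv, 0 < M i vv := fun i vv =>
    lt_of_lt_of_le (hPpos i vv (Classical.arbitrary A)) (hPleM i vv _)
  refine ⟨fun i vv => 1 - P i vv (f vv) / M i vv, ?_, ?_⟩
  · intro i vv
    constructor
    · have h1 : P i vv (f vv) / M i vv ≤ 1 :=
        (div_le_one (hMpos i vv)).2 (hPleM i vv _)
      linarith
    · have h2 : 0 < P i vv (f vv) / M i vv := div_pos (hPpos i vv _) (hMpos i vv)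
      linarith
  · intro i vv v'
    set w := Function.update vv i v' with hw
    have hPw : ∀ a, P i w a = P i vv a := by
      intro a
      refine Finset.prod_congr rfl fun j hj => ?_
      have hji : j ≠ i := (Finset.mem_erase.1 hj).1
      rw [hw, Function.update_of_ne hji]
    have hMw : M i w = M i vv := by
      simp only [hM]
      exact Finset.sup'_congr _ rfl fun a _ => hPw a
    have key : ∀ a : A, P i vv a * (vv i : A → ℝ) a = ∏ j, (vv j : A → ℝ) a := by
      intro a
      exact Finset.prod_erase_mul _ _ (Finset.mem_univ i)
    have hge : (∏ j, (vv j : A → ℝ) (f w)) ≤ ∏ j, (vv j : A → ℝ) (f vv) :=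
      hf vv (f w)
    have h1 : (1 - (1 - P i vv (f vv) / M i vv)) * (vv i : A → ℝ) (f vv)
        = (∏ j, (vv j : A → ℝ) (f vv)) / M i vv := by
      rw [sub_sub_cancel, div_mul_eq_mul_div, key]
    have h2 : (1 - (1 - P i w (f w) / M i w)) * (vv i : A → ℝ) (f w)
        = (∏ j, (vv j : A → ℝ) (f w)) / M i vv := by
      rw [sub_sub_cancel, hMw, hPw, div_mul_eq_mul_div, key]
    rw [h1, h2]
    gcongr
    exact (hMpos i vv).le
end

section
/- Let A be a nonempty finite set of alternatives, let null ∈ A, let V be a set of valuations v : A → ℝ with v(a) ≥ 0 for every a ∈ A and v(null) = 0 for every v ∈ V, and let n ≥ 1. Let f : V^n → A be a social choice function such that for every instance (v₁,…,vₙ): if max_{a ∈ A} ∏ᵢ vᵢ(a) > 0 then f(v₁,…,vₙ) ∈ argmax_{a ∈ A} ∏ᵢ vᵢ(a), and if max_{a ∈ A} ∏ᵢ vᵢ(a) = 0 then f(v₁,…,vₙ) = null. Then f is implementable in the percentage fee model: there exist payment functions pᵢ : V^n → [0,1) such that for every player i, every vᵢ, vᵢ' ∈ V and every v₋ᵢ: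 (1 − pᵢ(vᵢ, v₋ᵢ))·vᵢ(f(vᵢ, v₋ᵢ)) ≥ (1 − pᵢ(vᵢ', v₋ᵢ))·vᵢ(f(vᵢ', v₋ᵢ)). -/
/-- Nash Social Welfare maximization with a null alternative: if all valuations are
nonnegative and vanish on `null`, and `f` maximizes the product of valuations
(outputting `null` whenever the maximum product is `0`), then `f` is implementable
in the percentage fee model. -/
theorem nsw_maximizer_with_null_implementable_percentage_fee
    {A : Type} [Fintype A] (null : A)
    (V : Set (A → ℝ)) (hV : ∀ v ∈ V, (∀ a : A, 0 ≤ v a) ∧ v null = 0)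
    (n : ℕ) (hn : 1 ≤ n)
    (f : (Fin n → V) → A)
    (hfmax : ∀ vv : Fin n → V, (∃ a : A, 0 < ∏ i, (vv i : A → ℝ) a) →
      ∀ a : A, ∏ i, (vv i : A → ℝ) a ≤ ∏ i, (vv i : A → ℝ) (f vv))
    (hfnull : ∀ vv : Fin n → V, (¬ ∃ a : A, 0 < ∏ i, (vv i : A → ℝ) a) → f vv = null) :
    ∃ p : Fin n → (Fin n → V) → ℝ,
      (∀ i vv, p i vv ∈ Set.Ico (0 : ℝ) 1) ∧
      ∀ (i : Fin n) (vv : Fin n → V) (v' : V),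
        (1 - p i vv) * (vv i : A → ℝ) (f vv) ≥
          (1 - p i (Function.update vv i v')) *
            (vv i : A → ℝ) (f (Function.update vv i v')) := by
  classical
  have hnonneg : ∀ (v : V) (a : A), 0 ≤ (v : A → ℝ) a := fun v a => (hV v v.2).1 a
  have hnullz : ∀ (v : V), (v : A → ℝ) null = 0 := fun v => (hV v v.2).2
  -- full product
  set P : (Fin n → V) → A → ℝ := fun vv a => ∏ j, (vv j : A → ℝ) a with hPdef
  -- product over others at the chosen alternative
  set Q : Fin n → (Fin n → V) → ℝ :=
    fun i vv => ∏ j ∈ Finset.univ.erase i, (vv j : A → ℝ) (f vv) with hQdef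
  -- normalization constant, depends only on v_{-i}
  set C : Fin n → (Fin n → V) → ℝ :=
    fun i vv => Finset.univ.sup' ⟨null, Finset.mem_univ null⟩
      (fun a => ∏ j ∈ Finset.univ.erase i, (vv j : A → ℝ) a) with hCdef
  have hQnonneg : ∀ i vv, 0 ≤ Q i vv := fun i vv =>
    Finset.prod_nonneg fun j _ => hnonneg _ _
  have hPnonneg : ∀ vv a, 0 ≤ P vv a := fun vv a =>
    Finset.prod_nonneg fun j _ => hnonneg _ _
  have hQleC : ∀ i vv, Q i vv ≤ C i vv := fun i vv =>
    Finset.le_sup' (fun a => ∏ j ∈ Finset.univ.erase i, (vv j : A → ℝ) a)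
      (Finset.mem_univ (f vv))
  have hPsplit : ∀ (vv : Fin n → V) (i : Fin n) (a : A),
      P vv a = (vv i : A → ℝ) a * ∏ j ∈ Finset.univ.erase i, (vv j : A → ℝ) a :=
    fun vv i a => (Finset.mul_prod_erase Finset.univ _ (Finset.mem_univ i)).symm
  -- if Q i vv = 0 then f vv = null
  have hQzero : ∀ (i : Fin n) (vv : Fin n → V), Q i vv = 0 → f vv = null := by
    intro i vv hq
    by_cases hT : ∃ a : A, 0 < P vv a
    · obtain ⟨a, ha⟩ := hT
      have h1 : 0 < P vv (f vv) := lt_of_lt_of_le ha (hfmax vv ⟨a, ha⟩ a)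
      have hq2 : (∏ j ∈ Finset.univ.erase i, (vv j : A → ℝ) (f vv)) = 0 := hq
      rw [hPsplit vv i (f vv), hq2, mul_zero] at h1
      exact absurd h1 (lt_irrefl 0)
    · exact hfnull vv hT
  -- if no positive product, all products vanish
  have hallzero : ∀ (vv : Fin n → V), (¬ ∃ a : A, 0 < P vv a) → ∀ a, P vv a = 0 := by
    intro vv hT a
    exact le_antisymm (not_lt.1 fun h => hT ⟨a, h⟩) (hPnonneg vv a)
  refine ⟨fun i vv => if 0 < Q i vv then 1 - Q i vv / C i vv else 0, ?_, ?_⟩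
  · intro i vv
    by_cases hq : 0 < Q i vv
    · have hC : 0 < C i vv := lt_of_lt_of_le hq (hQleC i vv)
      simp only [if_pos hq, Set.mem_Ico]
      constructor
      · have : Q i vv / C i vv ≤ 1 := div_le_one_of_le₀ (hQleC i vv) (le_of_lt hC)
        linarith
      · have : 0 < Q i vv / C i vv := div_pos hq hC
        linarith
    · simp [if_neg hq]
  · intro i vv v'
    beta_reduce
    set w := Function.update vv i v' with hwdef
    have herase : ∀ a : A, ∏ j ∈ Finset.univ.erase i, (w j : A → ℝ) a
        = ∏ j ∈ Finset.univ.erase i, (vv j : A → ℝ) a := by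
      intro a
      refine Finset.prod_congr rfl fun j hj => ?_
      rw [hwdef, Function.update_of_ne (Finset.ne_of_mem_erase hj)]
    have hCeq : C i w = C i vv := by
      simp only [hCdef]
      exact Finset.sup'_congr _ rfl fun a _ => herase a
    have hQw : Q i w = ∏ j ∈ Finset.univ.erase i, (vv j : A → ℝ) (f w) := herase (f w)
    -- simplify the payments
    by_cases hq' : 0 < Q i w
    · -- lying outcome has positive others-product
      have hC : 0 < C i vv := by
        rw [← hCeq]; exact lt_of_lt_of_le hq' (hQleC i w)
      have hrhs : (1 - (if 0 < Q i w then 1 - Q i w / C i w else 0)) *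
          (vv i : A → ℝ) (f w) = P vv (f w) / C i vv := by
        rw [if_pos hq', hCeq, hQw]
        rw [hPsplit vv i (f w)]
        ring
      rw [hrhs]
      by_cases hq : 0 < Q i vv
      · have hlhs : (1 - (if 0 < Q i vv then 1 - Q i vv / C i vv else 0)) *
            (vv i : A → ℝ) (f vv) = P vv (f vv) / C i vv := by
          rw [if_pos hq, hQdef, hPsplit vv i (f vv)]
          ring
        rw [hlhs, ge_iff_le]
        gcongr
        by_cases hT : ∃ a : A, 0 < P vv a
        · exact hfmax vv hT (f w)
        · rw [hallzero vv hT, hallzero vv hT]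
      · -- Q i vv = 0, so f vv = null and all true products vanish
        have hq0 : Q i vv = 0 := le_antisymm (not_lt.1 hq) (hQnonneg i vv)
        have hfv : f vv = null := hQzero i vv hq0
        have hT : ¬ ∃ a : A, 0 < P vv a := by
          rintro ⟨a, ha⟩
          have h1 : 0 < P vv (f vv) := lt_of_lt_of_le ha (hfmax vv ⟨a, ha⟩ a)
          rw [hfv, hPsplit vv i null, hnullz (vv i), zero_mul] at h1
          exact absurd h1 (lt_irrefl 0)
        rw [if_neg hq, hallzero vv hT (f w), hfv, hnullz (vv i)]
        simp
    · -- lying outcome: f w = null, utility 0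
      have hq'0 : Q i w = 0 := le_antisymm (not_lt.1 hq') (hQnonneg i w)
      have hfw : f w = null := hQzero i w hq'0
      have hrhs : (1 - (if 0 < Q i w then 1 - Q i w / C i w else 0)) *
          (vv i : A → ℝ) (f w) = 0 := by
        rw [hfw, hnullz (vv i), mul_zero]
      rw [hrhs]
      by_cases hq : 0 < Q i vv
      · have hC : 0 < C i vv := lt_of_lt_of_le hq (hQleC i vv)
        rw [if_pos hq]
        have h1 : 0 ≤ Q i vv / C i vv := div_nonneg (hQnonneg i vv) (le_of_lt hC)
        have h2 : 0 ≤ (vv i : A → ℝ) (f vv) := hnonneg _ _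
        nlinarith
      · rw [if_neg hq]
        have h2 : 0 ≤ (vv i : A → ℝ) (f vv) := hnonneg _ _
        nlinarith
end

section
/- Twin mechanism correspondence: let A be a set of alternatives, n ≥ 1, and V a class of valuations v : A → ℝ with v(a) > 0 for every a. For v ∈ V define the valuation log v : A → ℝ by (log v)(a) = log(v(a)), and let log V = { log v : v ∈ V }. Let M be a mechanism in the percentage fee model with allocation function f : V^n → A and payment functions pᵢ : V^n → [0,1), and let M' be a mechanism in the traditional model with allocation function f' : (log V)^n → A and payment functions p'ᵢ : (log V)^n → ℝ such that for every instance (v₁,…,vₙ) ∈ V^n and every player i: f(v₁,…,vₙ) = f'(log v₁,…,log vₙ) and p'ᵢ(log v₁,…,log vₙ) = log(1/(1 − pᵢ(v₁,…,vₙ))). Then M is incentive compatible in the percentage fee model if and only if M' is incentive compatible in the traditional model. -/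
/-- The class `log V` of logarithms of the (positive) valuations in `V`. -/
def LogV {A : Type} (V : Set (A → ℝ)) : Set (A → ℝ) :=
  {w | ∃ v ∈ V, w = fun a => Real.log (v a)}

/-- The valuation `log v` associated to `v ∈ V`. -/
noncomputable def logOf {A : Type} (V : Set (A → ℝ)) (v : V) : LogV V :=
  ⟨fun a => Real.log ((v : A → ℝ) a), ⟨(v : A → ℝ), v.2, rfl⟩⟩

private lemma log_sub_log_one_div (x q : ℝ) (hx : 0 < x) (hq : 0 < q) :
    Real.log x - Real.log (1 / q) = Real.log (q * x) := by
  rw [one_div, Real.log_inv, Real.log_mul (ne_of_gt hq) (ne_of_gt hx)]; ring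

private lemma update_logOf {A : Type} {n : ℕ} (V : Set (A → ℝ))
    (vv : Fin n → V) (i : Fin n) (v' : V) :
    (fun j => logOf V (Function.update vv i v' j)) =
      Function.update (fun j => logOf V (vv j)) i (logOf V v') := by
  funext j
  rcases eq_or_ne j i with h | h
  · subst h; simp
  · simp [Function.update_of_ne h]

/-- Twin mechanism correspondence: a mechanism `(f, p)` in the percentage fee model is
incentive compatible iff its twin `(f', p')` in the traditional model (acting on
logarithms of the valuations) is incentive compatible. -/
theorem twin_mechanism_correspondence
    {A : Type} (n : ℕ) (hn : 1 ≤ n)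
    (V : Set (A → ℝ)) (hV : ∀ v ∈ V, ∀ a : A, 0 < v a)
    (f : (Fin n → V) → A)
    (p : Fin n → (Fin n → V) → ℝ)
    (hp : ∀ i vv, p i vv ∈ Set.Ico (0 : ℝ) 1)
    (f' : (Fin n → LogV V) → A)
    (p' : Fin n → (Fin n → LogV V) → ℝ)
    (hf' : ∀ vv : Fin n → V, f vv = f' (fun i => logOf V (vv i)))
    (hp' : ∀ (i : Fin n) (vv : Fin n → V),
      p' i (fun i => logOf V (vv i)) = Real.log (1 / (1 - p i vv))) :
    (∀ (i : Fin n) (vv : Fin n → V) (v' : V),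
        (1 - p i vv) * (vv i : A → ℝ) (f vv) ≥
          (1 - p i (Function.update vv i v')) *
            (vv i : A → ℝ) (f (Function.update vv i v'))) ↔
    (∀ (i : Fin n) (ww : Fin n → LogV V) (w' : LogV V),
        (ww i : A → ℝ) (f' ww) - p' i ww ≥
          (ww i : A → ℝ) (f' (Function.update ww i w')) -
            p' i (Function.update ww i w')) := by
  -- main equivalence for instances coming from `V`
  have key : ∀ (i : Fin n) (vv : Fin n → V) (v' : V),
      ((1 - p i vv) * (vv i : A → ℝ) (f vv) ≥
        (1 - p i (Function.update vv i v')) *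
          (vv i : A → ℝ) (f (Function.update vv i v'))) ↔
      (((fun j => logOf V (vv j)) i : A → ℝ) (f' (fun j => logOf V (vv j))) -
          p' i (fun j => logOf V (vv j)) ≥
        ((fun j => logOf V (vv j)) i : A → ℝ)
            (f' (Function.update (fun j => logOf V (vv j)) i (logOf V v'))) -
          p' i (Function.update (fun j => logOf V (vv j)) i (logOf V v'))) := by
    intro i vv v'
    set uu := Function.update vv i v' with huu
    have hq1 : 0 < 1 - p i vv := by have := (hp i vv).2; linarith
    have hq2 : 0 < 1 - p i uu := by have := (hp i uu).2; linarith
    have hx1 : 0 < (vv i : A → ℝ) (f vv) := hV _ (vv i).2 _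
    have hx2 : 0 < (vv i : A → ℝ) (f uu) := hV _ (vv i).2 _
    rw [← update_logOf]
    have e1 : ((fun j => logOf V (vv j)) i : A → ℝ) (f' (fun j => logOf V (vv j))) -
        p' i (fun j => logOf V (vv j)) =
        Real.log ((1 - p i vv) * (vv i : A → ℝ) (f vv)) := by
      rw [hp' i vv, ← hf' vv]
      exact log_sub_log_one_div _ _ hx1 hq1
    have e2 : ((fun j => logOf V (vv j)) i : A → ℝ) (f' (fun j => logOf V (uu j))) -
        p' i (fun j => logOf V (uu j)) =
        Real.log ((1 - p i uu) * (vv i : A → ℝ) (f uu)) := by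
      rw [hp' i uu, ← hf' uu]
      exact log_sub_log_one_div _ _ hx2 hq2
    rw [e1, e2, ge_iff_le, ge_iff_le,
      Real.log_le_log_iff (by positivity) (by positivity)]
  constructor
  · intro h i ww w'
    -- represent `ww` and `w'` via elements of `V`
    have hvv : ∀ j : Fin n, ∃ v : V, logOf V v = ww j := by
      intro j
      obtain ⟨v, hvV, hveq⟩ := (ww j).2
      exact ⟨⟨v, hvV⟩, Subtype.ext hveq.symm⟩
    choose vv hvveq using hvv
    obtain ⟨v'0, hv'V, hv'eq⟩ := w'.2
    have hw' : logOf V ⟨v'0, hv'V⟩ = w' := Subtype.ext hv'eq.symm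
    have hww : ww = fun j => logOf V (vv j) := by
      funext j; exact (hvveq j).symm
    rw [hww, ← hw']
    exact (key i vv ⟨v'0, hv'V⟩).mp (h i vv ⟨v'0, hv'V⟩)
  · intro h i vv v'
    exact (key i vv v').mpr (h i (fun j => logOf V (vv j)) (logOf V v'))
end

section
/- Characterization in binary single-parameter domains: let A be a set of alternatives and n ≥ 1 players. For each player i let A be partitioned into winning alternatives W_i and losing alternatives L_i, and fix a constant l_i > 0. Player i's valuation is parameterized by a positive real h_i > 0: its value for alternative a is h_i if a ∈ W_i and l_i if a ∈ L_i; the domain of player i is all h_i > 0. Let f : (ℝ_{>0})^n → A be a social choice function. Then f is implementable in the percentage fee model if and only if f is monotone for every player i, where f is monotone for player i if for all h_i < h_i' and all h₋ᵢ: f(h_i, h₋ᵢ) ∈ W_i implies f(h_i', h₋ᵢ) ∈ W_i. -/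
open scoped Classical

/-- Positive reals, the single-parameter domain of each player. -/
def PosR : Type := {x : ℝ // 0 < x}

/-- The valuation of player `i` with parameter `h` in a binary single-parameter domain:
value `h` on winning alternatives (`W i`) and value `l i` on losing ones. -/
noncomputable def spVal {A : Type} {n : ℕ} (W : Fin n → Set A) (l : Fin n → ℝ)
    (i : Fin n) (h : ℝ) (a : A) : ℝ :=
  if a ∈ W i then h else l i

/-- Winning reports of player `i` against profile `h`. -/
def critSet {A : Type} {n : ℕ} (W : Fin n → Set A)
    (f : (Fin n → PosR) → A) (i : Fin n) (h : Fin n → PosR) : Set ℝ :=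
  {x : ℝ | ∃ hx : 0 < x, f (Function.update h i ⟨x, hx⟩) ∈ W i}

noncomputable def crit {A : Type} {n : ℕ} (W : Fin n → Set A) (l : Fin n → ℝ)
    (f : (Fin n → PosR) → A) (i : Fin n) (h : Fin n → PosR) : ℝ :=
  if 0 < sInf (critSet W f i h) then sInf (critSet W f i h) else l i

noncomputable def gfun {A : Type} {n : ℕ} (W : Fin n → Set A) (l : Fin n → ℝ)
    (f : (Fin n → PosR) → A) (i : Fin n) (h : Fin n → PosR) : ℝ :=
  if f h ∈ W i then min 1 (l i / crit W l f i h) else min 1 (crit W l f i h / l i)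

lemma critSet_update {A : Type} {n : ℕ} (W : Fin n → Set A)
    (f : (Fin n → PosR) → A) (i : Fin n) (h : Fin n → PosR) (h' : PosR) :
    critSet W f i (Function.update h i h') = critSet W f i h := by
  unfold critSet
  ext x; exact exists_congr fun hx => by erw [Function.update_idem]

lemma crit_update {A : Type} {n : ℕ} (W : Fin n → Set A) (l : Fin n → ℝ)
    (f : (Fin n → PosR) → A) (i : Fin n) (h : Fin n → PosR) (h' : PosR) :
    crit W l f i (Function.update h i h') = crit W l f i h := by
  unfold crit
  rw [critSet_update]

lemma crit_pos {A : Type} {n : ℕ} (W : Fin n → Set A) (l : Fin n → ℝ)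
    (f : (Fin n → PosR) → A) (i : Fin n) (h : Fin n → PosR) (hl : 0 < l i) :
    0 < crit W l f i h := by
  unfold crit
  split_ifs with h1
  · exact h1
  · exact hl

lemma min_one_div_mul {a x : ℝ} (ha : 0 < a) : min 1 (x / a) * a = min a x := by
  rw [min_mul_of_nonneg _ _ ha.le, one_mul, div_mul_cancel₀ _ ha.ne']

/-- Characterization of implementability in binary single-parameter domains in the
percentage fee model: a social choice function is implementable iff it is monotone
for every player. -/
theorem single_parameter_characterization_percentage_fee
    {A : Type} (n : ℕ) (hn : 1 ≤ n)
    (W : Fin n → Set A) (l : Fin n → ℝ) (hl : ∀ i, 0 < l i)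
    (f : (Fin n → PosR) → A) :
    (∃ p : Fin n → (Fin n → PosR) → ℝ,
      (∀ i h, p i h ∈ Set.Ico (0 : ℝ) 1) ∧
      ∀ (i : Fin n) (h : Fin n → PosR) (h' : PosR),
        (1 - p i h) * spVal W l i (h i).1 (f h) ≥
          (1 - p i (Function.update h i h')) *
            spVal W l i (h i).1 (f (Function.update h i h'))) ↔
    (∀ (i : Fin n) (h : Fin n → PosR) (h' : PosR),
      (h i).1 < h'.1 → f h ∈ W i → f (Function.update h i h') ∈ W i) := by
  constructor
  · rintro ⟨p, hp, hic⟩ i h h' hlt hfw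
    by_contra hfr
    have h1 := hic i h h'
    have h2 := hic i (Function.update h i h') (h i)
    simp only [Function.update_idem, Function.update_eq_self, Function.update_self,
      spVal, if_pos hfw, if_neg hfr] at h1 h2
    have hp1 : 0 < 1 - p i h := by linarith [(hp i h).2]
    have := mul_lt_mul_of_pos_left hlt hp1
    linarith
  · intro hmono
    -- upward closedness of the winning set
    have hup : ∀ (i : Fin n) (h : Fin n → PosR) {x y : ℝ},
        x ∈ critSet W f i h → x < y → (hy : 0 < y) → y ∈ critSet W f i h := by
      intro i h x y hx hxy hy
      obtain ⟨hx0, hw⟩ := hx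
      refine ⟨hy, ?_⟩
      have := hmono i (Function.update h i ⟨x, hx0⟩) ⟨y, hy⟩
        (by erw [Function.update_self]; exact hxy) hw
      erw [Function.update_idem] at this; exact this
    have hmem : ∀ (i : Fin n) (h : Fin n → PosR), f h ∈ W i →
        (h i).1 ∈ critSet W f i h := by
      intro i h hw
      refine ⟨(h i).2, ?_⟩
      have he : Function.update h i ⟨(h i).1, (h i).2⟩ = h := Function.update_eq_self i h
      rw [he]; exact hw
    refine ⟨fun i h => 1 - gfun W l f i h, ?_, ?_⟩
    · intro i h
      have hc := crit_pos W l f i h (hl i)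
      have hg1 : gfun W l f i h ≤ 1 := by
        unfold gfun; split_ifs <;> exact min_le_left _ _
      have hg0 : 0 < gfun W l f i h := by
        unfold gfun; split_ifs
        · exact lt_min one_pos (div_pos (hl i) hc)
        · exact lt_min one_pos (div_pos hc (hl i))
      show (1 - gfun W l f i h) ∈ Set.Ico (0:ℝ) 1
      constructor <;> [linarith; linarith]
    · intro i h h'
      have hc := crit_pos W l f i h (hl i)
      set c := crit W l f i h with hcdef
      have ht : 0 < (h i).1 := (h i).2
      have hbdd : BddBelow (critSet W f i h) :=
        ⟨0, fun s hs => hs.fst.le⟩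
      by_cases hw : f h ∈ W i <;> by_cases hr : f (Function.update h i h') ∈ W i
      · -- both win
        simp only [spVal, if_pos hw, if_pos hr, gfun, crit_update, sub_sub_cancel, ← hcdef]
        exact le_refl _
      · -- h wins, deviation loses
        have hSne : (h i).1 ∈ critSet W f i h := hmem i h hw
        have hi0 : 0 < sInf (critSet W f i h) := by
          by_contra h0
          push_neg at h0
          have hge : 0 ≤ sInf (critSet W f i h) :=
            le_csInf ⟨_, hSne⟩ (fun s hs => hs.fst.le)
          have heq0 : sInf (critSet W f i h) = 0 := le_antisymm h0 hge
          obtain ⟨s, hsS, hs⟩ := exists_lt_of_csInf_lt ⟨_, hSne⟩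
            (show sInf (critSet W f i h) < h'.1 by rw [heq0]; exact h'.2)
          have : h'.1 ∈ critSet W f i h := hup i h hsS hs h'.2
          obtain ⟨_, hw'⟩ := this
          exact hr hw'
        have hceq : c = sInf (critSet W f i h) := by
          rw [hcdef]; unfold crit; rw [if_pos hi0]
        have hct : c ≤ (h i).1 := by rw [hceq]; exact csInf_le hbdd hSne
        simp only [spVal, if_pos hw, if_neg hr, gfun, crit_update, sub_sub_cancel, ← hcdef]
        have hnn : 0 ≤ min 1 (l i / c) :=
          le_min zero_le_one (div_nonneg (hl i).le hc.le)
        calc min 1 (c / l i) * l i = min (l i) c := min_one_div_mul (hl i)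
          _ = min c (l i) := min_comm _ _
          _ = min 1 (l i / c) * c := (min_one_div_mul hc).symm
          _ ≤ min 1 (l i / c) * (h i).1 := mul_le_mul_of_nonneg_left hct hnn
      · -- h loses, deviation wins
        have hSne : h'.1 ∈ critSet W f i h := by
          have := hmem i (Function.update h i h') hr
          rw [critSet_update] at this
          simpa using this
        have htlb : (h i).1 ≤ sInf (critSet W f i h) := by
          apply le_csInf ⟨_, hSne⟩
          intro s hs
          by_contra hst
          push_neg at hst
          have : (h i).1 ∈ critSet W f i h := hup i h hs hst ht
          obtain ⟨_, hw'⟩ := this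
          have he : Function.update h i ⟨(h i).1, (h i).2⟩ = h := Function.update_eq_self i h
          rw [he] at hw'
          exact hw hw'
        have hi0 : 0 < sInf (critSet W f i h) := lt_of_lt_of_le ht htlb
        have hceq : c = sInf (critSet W f i h) := by
          rw [hcdef]; unfold crit; rw [if_pos hi0]
        have hct : (h i).1 ≤ c := by rw [hceq]; exact htlb
        simp only [spVal, if_neg hw, if_pos hr, gfun, crit_update, sub_sub_cancel, ← hcdef]
        have hnn : 0 ≤ min 1 (l i / c) :=
          le_min zero_le_one (div_nonneg (hl i).le hc.le)
        calc min 1 (l i / c) * (h i).1 ≤ min 1 (l i / c) * c :=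
            mul_le_mul_of_nonneg_left hct hnn
          _ = min c (l i) := min_one_div_mul hc
          _ = min (l i) c := min_comm _ _
          _ = min 1 (c / l i) * l i := (min_one_div_mul (hl i)).symm
      · -- both lose
        simp only [spVal, if_neg hw, if_neg hr, gfun, crit_update, sub_sub_cancel, ← hcdef]
        exact le_refl _
end

section
/- Payment normalization in binary single-parameter domains: consider a binary single-parameter domain with alternatives A, partitions A = W_i ⊔ L_i and constants l_i > 0, and let (f, p) be incentive compatible in the percentage fee model. Fix a player i and a profile h₋ᵢ of the other players' parameters, and suppose there exists w > 0 with f(w, h₋ᵢ) ∈ W_i. Define new payments p'ᵢ for player i by: p'ᵢ(z, h₋ᵢ) = 0 if f(z, h₋ᵢ) ∈ W_i, and p'ᵢ(z, h₋ᵢ) = 1 − (1 − pᵢ(z, h₋ᵢ))/(1 − pᵢ(w, h₋ᵢ)) if f(z, h₋ᵢ) ∈ L_i. Then the incentive constraints for player i at this profile still hold: for every true parameter h_i > 0 and every report u_i > 0, vᵢ(f(h_i, h₋ᵢ))·(1 − p'ᵢ(h_i, h₋ᵢ)) ≥ vᵢ(f(u_i, h₋ᵢ))·(1 − p'ᵢ(u_i,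 h₋ᵢ)), where vᵢ is player i's valuation under the true parameter h_i. -/
open scoped Classical

/-- Payment normalization in binary single-parameter domains: normalizing the payments of
player `i` at a fixed profile of the others (zero payment on winning reports, rescaled
payment on losing reports) preserves the percentage-fee incentive constraints. -/
theorem payment_normalization_single_parameter
    {A : Type} (n : ℕ) (hn : 1 ≤ n)
    (W : Fin n → Set A) (l : Fin n → ℝ) (hl : ∀ i, 0 < l i)
    (f : (Fin n → PosR) → A)
    (p : Fin n → (Fin n → PosR) → ℝ)
    (hp : ∀ i h, p i h ∈ Set.Ico (0 : ℝ) 1)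
    (hIC : ∀ (i : Fin n) (h : Fin n → PosR) (h' : PosR),
      (1 - p i h) * spVal W l i (h i).1 (f h) ≥
        (1 - p i (Function.update h i h')) *
          spVal W l i (h i).1 (f (Function.update h i h')))
    (i : Fin n) (h₀ : Fin n → PosR)
    (w : PosR) (hw : f (Function.update h₀ i w) ∈ W i)
    (p' : PosR → ℝ)
    (hp'W : ∀ z : PosR, f (Function.update h₀ i z) ∈ W i → p' z = 0)
    (hp'L : ∀ z : PosR, f (Function.update h₀ i z) ∉ W i →
      p' z = 1 - (1 - p i (Function.update h₀ i z)) / (1 - p i (Function.update h₀ i w))) :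
    ∀ h u : PosR,
      spVal W l i h.1 (f (Function.update h₀ i h)) * (1 - p' h) ≥
        spVal W l i h.1 (f (Function.update h₀ i u)) * (1 - p' u) := by
  intro h u
  have key : ∀ z z' : PosR,
      (1 - p i (Function.update h₀ i z)) * spVal W l i z.1 (f (Function.update h₀ i z)) ≥
        (1 - p i (Function.update h₀ i z')) * spVal W l i z.1 (f (Function.update h₀ i z')) := by
    intro z z'
    have := hIC i (Function.update h₀ i z) z'
    simpa [Function.update_idem, Function.update_self] using this
  have cw : 0 < 1 - p i (Function.update h₀ i w) := by
    have := (hp i (Function.update h₀ i w)).2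
    linarith
  -- winning payments are all equal to the payment at w
  have hwin : ∀ z : PosR, f (Function.update h₀ i z) ∈ W i →
      p i (Function.update h₀ i z) = p i (Function.update h₀ i w) := by
    intro z hz
    have h1 := key z w
    have h2 := key w z
    simp only [spVal, if_pos hz, if_pos hw] at h1 h2
    have hz0 := z.2
    have hw0 := w.2
    nlinarith
  -- new utility is old utility divided by (1 - p i w)
  have main : ∀ x : PosR,
      spVal W l i h.1 (f (Function.update h₀ i x)) * (1 - p' x) =
        ((1 - p i (Function.update h₀ i x)) * spVal W l i h.1 (f (Function.update h₀ i x))) /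
          (1 - p i (Function.update h₀ i w)) := by
    intro x
    by_cases hx : f (Function.update h₀ i x) ∈ W i
    · rw [hp'W x hx, hwin x hx]
      field_simp
      simp
    · rw [hp'L x hx]
      simp only [spVal, if_neg hx]
      field_simp
      ring
  rw [main h, main u]
  have := key h u
  exact div_le_div_of_nonneg_right this cw.le
end

section
/- Maximal-in-range mechanisms are implementable in the percentage fee model: let M be a finite set of items, n ≥ 1 players, and let V be a set of valuations v : 2^M → ℝ that are nondecreasing, nonnegative, and satisfy v(∅) = 0. Let R be a set of allocations of M that contains the empty allocation (∅,…,∅). Let f : V^n → R be any function such that for every instance (v₁,…,vₙ): if max_{(T₁,…,Tₙ) ∈ R} ∏ᵢ vᵢ(Tᵢ) > 0 then f(v₁,…,vₙ) ∈ argmax_{(T₁,…,Tₙ) ∈ R} ∏ᵢ vᵢ(Tᵢ), and otherwise f(v₁,…,vₙ) = (∅,…,∅). Then there exist payment functions pᵢ : V^n → [0,1) such that for every player i, every vᵢ, vᵢ' ∈ V and every v₋ᵢ, writing Sᵢ(·) for player i's bundle in f(·): (1 − pᵢ(vᵢ, v₋ᵢ))·vᵢ(Sᵢ(vᵢ, v₋ᵢ))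 ≥ (1 − pᵢ(vᵢ', v₋ᵢ))·vᵢ(Sᵢ(vᵢ', v₋ᵢ)). -/
/-- An allocation of the items `M` to `n` players: a tuple of pairwise disjoint
subsets of `M`. -/
def Alloc (M : Type) [Fintype M] [DecidableEq M] (n : ℕ) : Type :=
  {S : Fin n → Finset M // ∀ i k : Fin n, i ≠ k → Disjoint (S i) (S k)}

/-- The empty allocation. -/
def emptyAlloc (M : Type) [Fintype M] [DecidableEq M] (n : ℕ) : Alloc M n :=
  ⟨fun _ => ∅, fun _ _ _ => Finset.disjoint_empty_left ∅⟩

/-- Maximal-in-range mechanisms are implementable in the percentage fee model: if `f`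
maximizes the product of the valuations over a fixed range `R` of allocations
(outputting the empty allocation when the maximum over `R` is `0`), then there are
percentage payments making it incentive compatible. -/
theorem maximal_in_range_implementable_percentage_fee
    {M : Type} [Fintype M] [DecidableEq M]
    (n : ℕ) (hn : 1 ≤ n)
    (V : Set (Finset M → ℝ))
    (hV : ∀ v ∈ V, v ∅ = 0 ∧ (∀ S T : Finset M, S ⊆ T → v S ≤ v T) ∧ ∀ S : Finset M, 0 ≤ v S)
    (R : Set (Alloc M n)) (hR : emptyAlloc M n ∈ R)
    (f : (Fin n → V) → Alloc M n)
    (hfR : ∀ vv, f vv ∈ R)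
    (hfmax : ∀ vv : Fin n → V, (∃ T ∈ R, 0 < ∏ i, (vv i : Finset M → ℝ) (T.1 i)) →
      ∀ T ∈ R, ∏ i, (vv i : Finset M → ℝ) (T.1 i) ≤ ∏ i, (vv i : Finset M → ℝ) ((f vv).1 i))
    (hfzero : ∀ vv : Fin n → V, (¬ ∃ T ∈ R, 0 < ∏ i, (vv i : Finset M → ℝ) (T.1 i)) →
      f vv = emptyAlloc M n) :
    ∃ p : Fin n → (Fin n → V) → ℝ,
      (∀ i vv, p i vv ∈ Set.Ico (0 : ℝ) 1) ∧
      ∀ (i : Fin n) (vv : Fin n → V) (v' : V),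
        (1 - p i vv) * (vv i : Finset M → ℝ) ((f vv).1 i) ≥
          (1 - p i (Function.update vv i v')) *
            (vv i : Finset M → ℝ) ((f (Function.update vv i v')).1 i) := by
  classical
  -- dichotomy: either f vv is the empty allocation, or its product is positive
  have dich : ∀ vv : Fin n → V,
      f vv = emptyAlloc M n ∨ 0 < ∏ j, (vv j : Finset M → ℝ) ((f vv).1 j) := by
    intro vv
    by_cases h : ∃ T ∈ R, 0 < ∏ i, (vv i : Finset M → ℝ) (T.1 i)
    · right
      obtain ⟨T, hT, hTpos⟩ := h
      exact lt_of_lt_of_le hTpos (hfmax vv ⟨T, hT, hTpos⟩ T hT)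
    · left; exact hfzero vv h
  refine ⟨fun i vv =>
    if 0 < ∏ j ∈ Finset.univ.erase i, (vv j : Finset M → ℝ) ((f vv).1 j)
    then 1 - (∏ j ∈ Finset.univ.erase i, (vv j : Finset M → ℝ) ((f vv).1 j)) /
      (1 + ∏ j ∈ Finset.univ.erase i, (vv j : Finset M → ℝ) Finset.univ)
    else 0, ?_, ?_⟩
  · intro i vv
    beta_reduce
    set Q := ∏ j ∈ Finset.univ.erase i, (vv j : Finset M → ℝ) ((f vv).1 j) with hQdef
    set B := ∏ j ∈ Finset.univ.erase i, (vv j : Finset M → ℝ) Finset.univ with hBdef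
    have hQ0 : 0 ≤ Q := Finset.prod_nonneg fun j _ => (hV _ (vv j).2).2.2 _
    have hB0 : 0 ≤ B := Finset.prod_nonneg fun j _ => (hV _ (vv j).2).2.2 _
    have hQB : Q ≤ B := Finset.prod_le_prod (fun j _ => (hV _ (vv j).2).2.2 _)
      (fun j _ => (hV _ (vv j).2).2.1 _ _ (Finset.subset_univ _))
    have h1B : (0:ℝ) < 1 + B := by linarith
    by_cases h : 0 < Q
    · simp only [h, if_true, Set.mem_Ico]
      constructor
      · have : Q / (1 + B) ≤ 1 := (div_le_one h1B).2 (by linarith)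
        linarith
      · have : 0 < Q / (1 + B) := div_pos h h1B
        linarith
    · simp [h]
  · intro i vv v'
    set vv' := Function.update vv i v' with hvv'
    have hupd : ∀ j : Fin n, j ≠ i → vv' j = vv j := fun j hj => Function.update_of_ne hj _ _
    have heq : ∀ S : Fin n → Finset M,
        ∏ j ∈ Finset.univ.erase i, (vv' j : Finset M → ℝ) (S j)
          = ∏ j ∈ Finset.univ.erase i, (vv j : Finset M → ℝ) (S j) := by
      intro S
      refine Finset.prod_congr rfl fun j hj => ?_
      rw [hupd j (Finset.ne_of_mem_erase hj)]
    have heqB : ∏ j ∈ Finset.univ.erase i, (vv' j : Finset M → ℝ) Finset.univ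
        = ∏ j ∈ Finset.univ.erase i, (vv j : Finset M → ℝ) Finset.univ := heq _
    set Q := ∏ j ∈ Finset.univ.erase i, (vv j : Finset M → ℝ) ((f vv).1 j) with hQdef
    set Q' := ∏ j ∈ Finset.univ.erase i, (vv j : Finset M → ℝ) ((f vv').1 j) with hQ'def
    set B := ∏ j ∈ Finset.univ.erase i, (vv j : Finset M → ℝ) Finset.univ with hBdef
    have hQ0 : 0 ≤ Q := Finset.prod_nonneg fun j _ => (hV _ (vv j).2).2.2 _
    have hQ'0 : 0 ≤ Q' := Finset.prod_nonneg fun j _ => (hV _ (vv j).2).2.2 _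
    have hB0 : 0 ≤ B := Finset.prod_nonneg fun j _ => (hV _ (vv j).2).2.2 _
    have h1B : (0:ℝ) < 1 + B := by linarith
    have ha0 : 0 ≤ (vv i : Finset M → ℝ) ((f vv).1 i) := (hV _ (vv i).2).2.2 _
    have ha'0 : 0 ≤ (vv i : Finset M → ℝ) ((f vv').1 i) := (hV _ (vv i).2).2.2 _
    -- full products with true valuations
    have hP : ∏ j, (vv j : Finset M → ℝ) ((f vv).1 j)
        = (vv i : Finset M → ℝ) ((f vv).1 i) * Q :=
      (Finset.mul_prod_erase Finset.univ
        (fun j => (vv j : Finset M → ℝ) ((f vv).1 j)) (Finset.mem_univ i)).symm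
    have hP' : ∏ j, (vv j : Finset M → ℝ) ((f vv').1 j)
        = (vv i : Finset M → ℝ) ((f vv').1 i) * Q' :=
      (Finset.mul_prod_erase Finset.univ
        (fun j => (vv j : Finset M → ℝ) ((f vv').1 j)) (Finset.mem_univ i)).symm
    -- rewrite the payment for the deviation
    have hpay' : (if 0 < ∏ j ∈ Finset.univ.erase i, (vv' j : Finset M → ℝ) ((f vv').1 j)
        then 1 - (∏ j ∈ Finset.univ.erase i, (vv' j : Finset M → ℝ) ((f vv').1 j)) /
          (1 + ∏ j ∈ Finset.univ.erase i, (vv' j : Finset M → ℝ) Finset.univ)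
        else 0) = (if 0 < Q' then 1 - Q' / (1 + B) else 0) := by
      rw [heq, heqB]
    -- LHS value
    have hLHS0 : 0 ≤ (1 - (if 0 < Q then 1 - Q / (1 + B) else 0)) *
        (vv i : Finset M → ℝ) ((f vv).1 i) := by
      by_cases h : 0 < Q
      · simp only [h, if_true]
        have : 0 < Q / (1 + B) := div_pos h h1B
        have h1 : Q / (1 + B) ≤ 1 := (div_le_one h1B).2 (by
          have hQB : Q ≤ B := Finset.prod_le_prod (fun j _ => (hV _ (vv j).2).2.2 _)
            (fun j _ => (hV _ (vv j).2).2.1 _ _ (Finset.subset_univ _))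
          linarith)
        nlinarith
      · simp only [h, if_false]
        linarith [ha0]
    show (1 - (if 0 < Q then 1 - Q / (1 + B) else 0)) * (vv i : Finset M → ℝ) ((f vv).1 i)
      ≥ (1 - (if 0 < ∏ j ∈ Finset.univ.erase i, (vv' j : Finset M → ℝ) ((f vv').1 j)
        then 1 - (∏ j ∈ Finset.univ.erase i, (vv' j : Finset M → ℝ) ((f vv').1 j)) /
          (1 + ∏ j ∈ Finset.univ.erase i, (vv' j : Finset M → ℝ) Finset.univ)
        else 0)) * (vv i : Finset M → ℝ) ((f vv').1 i)
    rw [hpay']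
    by_cases h' : 0 < Q'
    · simp only [h', if_true]
      have hRHS : (1 - (1 - Q' / (1 + B))) * (vv i : Finset M → ℝ) ((f vv').1 i)
          = (∏ j, (vv j : Finset M → ℝ) ((f vv').1 j)) / (1 + B) := by
        rw [hP']; ring
      rw [hRHS]
      rcases lt_or_eq_of_le (mul_nonneg ha'0 hQ'0) with hPpos | hPzero
      · rw [← hP'] at hPpos
        have hmax := hfmax vv ⟨f vv', hfR vv', hPpos⟩ (f vv) (hfR vv)
        -- wrong direction; use f vv' as T
        have hmax2 := hfmax vv ⟨f vv', hfR vv', hPpos⟩ (f vv') (hfR vv')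
        have hPpos2 : 0 < ∏ j, (vv j : Finset M → ℝ) ((f vv).1 j) :=
          lt_of_lt_of_le hPpos hmax2
        have hQpos : 0 < Q := by
          rcases lt_or_eq_of_le hQ0 with h | h
          · exact h
          · exfalso; rw [hP, ← h, mul_zero] at hPpos2; exact lt_irrefl _ hPpos2
        simp only [hQpos, if_true]
        have hLHS : (1 - (1 - Q / (1 + B))) * (vv i : Finset M → ℝ) ((f vv).1 i)
            = (∏ j, (vv j : Finset M → ℝ) ((f vv).1 j)) / (1 + B) := by
          rw [hP]; ring
        rw [hLHS]
        exact ge_iff_le.mpr ((div_le_div_iff_of_pos_right h1B).mpr hmax2)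
      · rw [hP', ← hPzero]
        simpa using hLHS0
    · simp only [h', if_false]
      -- Q' = 0, so f vv' is the empty allocation (else full product positive)
      have ha'z : (vv i : Finset M → ℝ) ((f vv').1 i) = 0 := by
        rcases dich vv' with he | hpos
        · rw [he]
          exact (hV _ (vv i).2).1
        · exfalso
          have : ∏ j, (vv' j : Finset M → ℝ) ((f vv').1 j)
              = (vv' i : Finset M → ℝ) ((f vv').1 i) *
                ∏ j ∈ Finset.univ.erase i, (vv' j : Finset M → ℝ) ((f vv').1 j) :=
            (Finset.mul_prod_erase _ _ (Finset.mem_univ i)).symm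
          rw [this, heq] at hpos
          have : Q' ≤ 0 := le_of_not_gt h'
          have hQ'z : Q' = 0 := le_antisymm this hQ'0
          rw [← hQ'def, hQ'z, mul_zero] at hpos
          exact lt_irrefl _ hpos
      rw [ha'z, mul_zero]
      exact hLHS0
end

section
/- Let M be a finite set of m items and n ≥ 1 players with XOS valuations v₁,…,vₙ : 2^M → ℝ_{≥0}. Let D be a probability distribution over functions g : M → {1,…,n} that is n-wise independent with uniform marginals: for every pairwise-distinct items j₁,…,jₙ ∈ M and every players i₁,…,iₙ ∈ {1,…,n}, Pr_{g∼D}[g(j₁)=i₁ ∧ ⋯ ∧ g(jₙ)=iₙ] = 1/nⁿ. Then for every allocation (O₁,…,Oₙ) of M: E_{g∼D}[ ∏ᵢ vᵢ(g⁻¹(i)) ] ≥ (1/nⁿ) · ∏ᵢ vᵢ(Oᵢ). -/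
/-- `v` is an XOS valuation: the pointwise maximum of finitely many additive
valuations with nonnegative item values. -/
def IsXOS {M : Type} [Fintype M] [DecidableEq M] (v : Finset M → ℝ) : Prop :=
  ∃ (t : ℕ) (w : Fin (t + 1) → M → ℝ),
    (∀ k j, 0 ≤ w k j) ∧
    ∀ S : Finset M, v S = Finset.univ.sup' Finset.univ_nonempty (fun k => ∑ j ∈ S, w k j)

/-- For XOS valuations and an `n`-wise independent distribution `D` with uniform
marginals over assignments `g : M → {1,…,n}`, the expected product of the players'
values is at least `(1/nⁿ)` times the product in any fixed allocation. -/
theorem nwise_independent_expected_product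
    {M : Type} [Fintype M] [DecidableEq M]
    (n : ℕ) (hn : 1 ≤ n)
    (v : Fin n → Finset M → ℝ) (hv : ∀ i, IsXOS (v i))
    (D : (M → Fin n) → ℝ)
    (hD0 : ∀ g, 0 ≤ D g) (hD1 : ∑ g : M → Fin n, D g = 1)
    (hind : ∀ j : Fin n → M, Function.Injective j → ∀ ι : Fin n → Fin n,
      ∑ g ∈ Finset.univ.filter (fun g : M → Fin n => ∀ k, g (j k) = ι k), D g
        = 1 / (n : ℝ) ^ n)
    (O : Fin n → Finset M) (hO : ∀ i k : Fin n, i ≠ k → Disjoint (O i) (O k)) :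
    ∑ g : M → Fin n, D g * ∏ i, v i (Finset.univ.filter (fun x => g x = i)) ≥
      (1 / (n : ℝ) ^ n) * ∏ i, v i (O i) := by
  -- choose additive witnesses attaining the value on `O i`
  have hex : ∀ i : Fin n, ∃ a : M → ℝ, (∀ j, 0 ≤ a j) ∧
      (v i (O i) = ∑ j ∈ O i, a j) ∧ (∀ S : Finset M, ∑ j ∈ S, a j ≤ v i S) := by
    intro i
    obtain ⟨t, w, hw0, hw⟩ := hv i
    obtain ⟨k, -, hk⟩ := Finset.exists_mem_eq_sup' Finset.univ_nonempty
      (fun k => ∑ j ∈ O i, w k j)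
    refine ⟨w k, hw0 k, ?_, fun S => ?_⟩
    · rw [hw]; exact hk
    · rw [hw]; exact Finset.le_sup' (fun k => ∑ j ∈ S, w k j) (Finset.mem_univ k)
  choose a ha0 haO haS using hex
  -- members of the pi-set are injective
  have hinj : ∀ p ∈ Fintype.piFinset O, Function.Injective p := by
    intro p hp
    simp only [Fintype.mem_piFinset] at hp
    intro i k hik
    by_contra hne
    exact Finset.disjoint_left.mp (hO i k hne) (hp i) (by rw [hik]; exact hp k)
  rw [ge_iff_le]
  have step1 : ∀ g : M → Fin n,
      ∑ p ∈ Fintype.piFinset O, D g * ∏ i, (a i (p i) * (if g (p i) = i then (1:ℝ) else 0))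
        ≤ D g * ∏ i, v i (Finset.univ.filter fun x => g x = i) := by
    intro g
    rw [← Finset.mul_sum,
      ← Finset.prod_univ_sum O (fun i j => a i j * (if g j = i then (1:ℝ) else 0))]
    refine mul_le_mul_of_nonneg_left ?_ (hD0 g)
    refine Finset.prod_le_prod (fun i _ => Finset.sum_nonneg fun j _ => ?_) (fun i _ => ?_)
    · rcases em (g j = i) with h | h <;> simp [h, ha0]
    · calc ∑ j ∈ O i, a i j * (if g j = i then (1:ℝ) else 0)
          = ∑ j ∈ (O i).filter (fun j => g j = i), a i j := by
            rw [Finset.sum_filter]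
            exact Finset.sum_congr rfl fun j _ => by
              rcases em (g j = i) with h | h <;> simp [h]
        _ ≤ ∑ j ∈ Finset.univ.filter (fun x => g x = i), a i j :=
            Finset.sum_le_sum_of_subset_of_nonneg
              (Finset.filter_subset_filter _ (Finset.subset_univ _))
              (fun j _ _ => ha0 i j)
        _ ≤ v i (Finset.univ.filter (fun x => g x = i)) := haS i _
  calc (1 / (n:ℝ)^n) * ∏ i, v i (O i)
      = ∑ p ∈ Fintype.piFinset O, (1/(n:ℝ)^n) * ∏ i, a i (p i) := by
        rw [← Finset.mul_sum, ← Finset.prod_univ_sum O (fun i j => a i j)]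
        congr 1
        exact Finset.prod_congr rfl fun i _ => haO i
    _ = ∑ p ∈ Fintype.piFinset O,
          ∑ g : M → Fin n, D g * ∏ i, (a i (p i) * (if g (p i) = i then (1:ℝ) else 0)) := by
        refine Finset.sum_congr rfl fun p hp => ?_
        have hcalc : ∀ g : M → Fin n,
            D g * ∏ i, (a i (p i) * (if g (p i) = i then (1:ℝ) else 0))
              = (∏ i, a i (p i)) * (if (∀ k, g (p k) = k) then D g else 0) := by
          intro g
          rw [Finset.prod_mul_distrib, Finset.prod_boole]
          rcases em (∀ k, g (p k) = k) with h | h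
          · simp [h]; ring
          · have : ¬ ∀ k ∈ Finset.univ, g (p k) = k := by
              simpa using h
            simp [h, this]
        rw [Finset.sum_congr rfl fun g _ => hcalc g, ← Finset.mul_sum]
        rw [← Finset.sum_filter, hind p (hinj p hp) (fun i => i)]
        ring
    _ = ∑ g : M → Fin n, ∑ p ∈ Fintype.piFinset O,
          D g * ∏ i, (a i (p i) * (if g (p i) = i then (1:ℝ) else 0)) := Finset.sum_comm
    _ ≤ ∑ g : M → Fin n, D g * ∏ i, v i (Finset.univ.filter fun x => g x = i) :=
        Finset.sum_le_sum fun g _ => step1 g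
end

section
/- Let M be a finite set of m items and n ≥ 1 players with XOS valuations v₁,…,vₙ : 2^M → ℝ_{≥0}. Let D be a probability distribution over functions g : M → {1,…,n} that is n-wise independent with uniform marginals: for every pairwise-distinct items j₁,…,jₙ ∈ M and every players i₁,…,iₙ ∈ {1,…,n}, Pr_{g∼D}[g(j₁)=i₁ ∧ ⋯ ∧ g(jₙ)=iₙ] = 1/nⁿ. Then there exists a function g in the support of D such that ∏ᵢ vᵢ(g⁻¹(i)) ≥ (1/nⁿ) · max_{(O₁,…,Oₙ) allocation of M} ∏ᵢ vᵢ(Oᵢ); in particular the Nash Social Welfare of the allocation (g⁻¹(1),…,g⁻¹(n)) is at least 1/n times the optimal Nash Social Welfare. -/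
/-- For XOS valuations and an `n`-wise independent distribution `D` with uniform
marginals, some assignment `g` in the support of `D` achieves a product of values at
least `(1/nⁿ)` times the optimal product; in particular its Nash Social Welfare is at
least `1/n` times the optimal Nash Social Welfare. -/
theorem nwise_independent_support_approximation
    {M : Type} [Fintype M] [DecidableEq M]
    (n : ℕ) (hn : 1 ≤ n)
    (v : Fin n → Finset M → ℝ) (hv : ∀ i, IsXOS (v i))
    (D : (M → Fin n) → ℝ)
    (hD0 : ∀ g, 0 ≤ D g) (hD1 : ∑ g : M → Fin n, D g = 1)
    (hind : ∀ j : Fin n → M, Function.Injective j → ∀ ι : Fin n → Fin n,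
      ∑ g ∈ Finset.univ.filter (fun g : M → Fin n => ∀ k, g (j k) = ι k), D g
        = 1 / (n : ℝ) ^ n) :
    ∃ g : M → Fin n, D g ≠ 0 ∧
      ∀ O : Fin n → Finset M, (∀ i k : Fin n, i ≠ k → Disjoint (O i) (O k)) →
        ∏ i, v i (Finset.univ.filter (fun x => g x = i)) ≥
          (1 / (n : ℝ) ^ n) * ∏ i, v i (O i) ∧
        (∏ i, v i (Finset.univ.filter (fun x => g x = i))) ^ ((n : ℝ)⁻¹) ≥
          (1 / (n : ℝ)) * (∏ i, v i (O i)) ^ ((n : ℝ)⁻¹) := by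
  classical
  have hn0 : (0:ℝ) < (n:ℝ) := by exact_mod_cast hn
  have hnn : (0:ℝ) < (n:ℝ) ^ n := pow_pos hn0 n
  choose t w hw hval using hv
  have hv0 : ∀ i S, 0 ≤ v i S := by
    intro i S
    rw [hval i S]
    exact le_trans (Finset.sum_nonneg fun j _ => hw i 0 j)
      (Finset.le_sup' (fun κ => ∑ j ∈ S, w i κ j) (Finset.mem_univ (0 : Fin (t i + 1))))
  have hLB : ∀ i κ S, (∑ j ∈ S, w i κ j) ≤ v i S := by
    intro i κ S; rw [hval i S]
    exact Finset.le_sup' (fun κ => ∑ j ∈ S, w i κ j) (Finset.mem_univ κ)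
  set F : (M → Fin n) → ℝ := fun g => ∏ i, v i (Finset.univ.filter (fun x => g x = i))
    with hF
  have hne : (Finset.univ.filter (fun g : M → Fin n => D g ≠ 0)).Nonempty := by
    by_contra h
    rw [Finset.not_nonempty_iff_eq_empty] at h
    have h0 : ∑ g : M → Fin n, D g = 0 := by
      apply Finset.sum_eq_zero
      intro g _
      by_contra hg
      have : g ∈ Finset.univ.filter (fun g : M → Fin n => D g ≠ 0) := by
        simp [hg]
      simp [h] at this
    rw [hD1] at h0; norm_num at h0
  obtain ⟨g, hgmem, hgmax⟩ := Finset.exists_max_image _ F hne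
  have hgne : D g ≠ 0 := (Finset.mem_filter.mp hgmem).2
  refine ⟨g, hgne, ?_⟩
  intro O hO
  have hchoice : ∀ i, ∃ κ, v i (O i) = ∑ j ∈ O i, w i κ j := by
    intro i
    obtain ⟨κ, -, hκ⟩ := Finset.exists_mem_eq_sup' Finset.univ_nonempty
      (fun κ => ∑ j ∈ O i, w i κ j)
    exact ⟨κ, by rw [hval i (O i), hκ]⟩
  choose k hk using hchoice
  set a : Fin n → M → ℝ := fun i j => w i (k i) j with ha
  -- Step 1: pointwise lower bound on F
  have step1 : ∀ g' : M → Fin n,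
      (∑ p ∈ Fintype.piFinset O,
        ∏ i, a i (p i) * (if g' (p i) = i then (1:ℝ) else 0)) ≤ F g' := by
    intro g'
    have hexp := Finset.prod_univ_sum O
      (fun i j => a i j * if g' j = i then (1:ℝ) else 0)
    rw [← hexp]
    apply Finset.prod_le_prod
    · intro i _
      exact Finset.sum_nonneg fun j _ => mul_nonneg (hw i (k i) j) (by positivity)
    · intro i _
      calc ∑ j ∈ O i, a i j * (if g' j = i then (1:ℝ) else 0)
          = ∑ j ∈ (O i).filter (fun j => g' j = i), a i j := by
            rw [Finset.sum_filter]
            exact Finset.sum_congr rfl fun j _ => by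
              rw [mul_ite, mul_one, mul_zero]
        _ ≤ ∑ j ∈ Finset.univ.filter (fun x => g' x = i), a i j := by
            apply Finset.sum_le_sum_of_subset_of_nonneg
            · intro j hj
              exact Finset.mem_filter.mpr ⟨Finset.mem_univ j, (Finset.mem_filter.mp hj).2⟩
            · intro j _ _; exact hw i (k i) j
        _ ≤ v i (Finset.univ.filter (fun x => g' x = i)) := hLB i (k i) _
  -- Step 2: expectation of each term
  have step2 : ∀ p ∈ Fintype.piFinset O,
      (∑ g' : M → Fin n,
        D g' * ∏ i, a i (p i) * (if g' (p i) = i then (1:ℝ) else 0))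
        = (1 / (n:ℝ) ^ n) * ∏ i, a i (p i) := by
    intro p hp
    have hpmem : ∀ i, p i ∈ O i := Fintype.mem_piFinset.mp hp
    have hpinj : Function.Injective p := by
      intro i₁ i₂ h
      by_contra hne'
      exact Finset.disjoint_left.mp (hO i₁ i₂ hne') (hpmem i₁) (h ▸ hpmem i₂)
    have hI := hind p hpinj id
    simp only [id] at hI
    have hterm : ∀ g' : M → Fin n,
        D g' * ∏ i, a i (p i) * (if g' (p i) = i then (1:ℝ) else 0)
          = (∏ i, a i (p i)) *
            (if (∀ i, g' (p i) = i) then D g' else 0) := by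
      intro g'
      rw [Finset.prod_mul_distrib]
      by_cases h : ∀ i, g' (p i) = i
      · simp only [h, if_true]
        simp
        ring
      · push_neg at h
        obtain ⟨i0, hi0⟩ := h
        have hz : (∏ i, if g' (p i) = i then (1:ℝ) else 0) = 0 :=
          Finset.prod_eq_zero (Finset.mem_univ i0) (by simp [hi0])
        rw [hz, if_neg (by push_neg; exact ⟨i0, hi0⟩)]
        ring
    calc (∑ g' : M → Fin n,
          D g' * ∏ i, a i (p i) * (if g' (p i) = i then (1:ℝ) else 0))
        = ∑ g' : M → Fin n, (∏ i, a i (p i)) *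
            (if (∀ i, g' (p i) = i) then D g' else 0) :=
          Finset.sum_congr rfl fun g' _ => hterm g'
      _ = (∏ i, a i (p i)) * ∑ g' : M → Fin n,
            (if (∀ i, g' (p i) = i) then D g' else 0) := by
          rw [Finset.mul_sum]
      _ = (∏ i, a i (p i)) *
            ∑ g' ∈ Finset.univ.filter (fun g' : M → Fin n => ∀ i, g' (p i) = i), D g' := by
          rw [Finset.sum_filter]
      _ = (1 / (n:ℝ) ^ n) * ∏ i, a i (p i) := by rw [hI]; ring
  -- Key expectation bound
  have key : (1 / (n:ℝ) ^ n) * ∏ i, v i (O i) ≤ ∑ g' : M → Fin n, D g' * F g' := by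
    calc (1 / (n:ℝ) ^ n) * ∏ i, v i (O i)
        = (1 / (n:ℝ) ^ n) * ∏ i, ∑ j ∈ O i, a i j := by
          congr 1
          exact Finset.prod_congr rfl fun i _ => hk i
      _ = ∑ p ∈ Fintype.piFinset O, (1 / (n:ℝ) ^ n) * ∏ i, a i (p i) := by
          rw [Finset.prod_univ_sum, Finset.mul_sum]
      _ = ∑ p ∈ Fintype.piFinset O, ∑ g' : M → Fin n,
            D g' * ∏ i, a i (p i) * (if g' (p i) = i then (1:ℝ) else 0) :=
          Finset.sum_congr rfl fun p hp => (step2 p hp).symm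
      _ = ∑ g' : M → Fin n, ∑ p ∈ Fintype.piFinset O,
            D g' * ∏ i, a i (p i) * (if g' (p i) = i then (1:ℝ) else 0) :=
          Finset.sum_comm
      _ = ∑ g' : M → Fin n, D g' * ∑ p ∈ Fintype.piFinset O,
            ∏ i, a i (p i) * (if g' (p i) = i then (1:ℝ) else 0) := by
          exact Finset.sum_congr rfl fun g' _ => (Finset.mul_sum _ _ _).symm
      _ ≤ ∑ g' : M → Fin n, D g' * F g' :=
          Finset.sum_le_sum fun g' _ =>
            mul_le_mul_of_nonneg_left (step1 g') (hD0 g')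
  have EleF : ∑ g' : M → Fin n, D g' * F g' ≤ F g := by
    calc ∑ g' : M → Fin n, D g' * F g' ≤ ∑ g' : M → Fin n, D g' * F g := by
          apply Finset.sum_le_sum
          intro g' _
          rcases eq_or_ne (D g') 0 with h | h
          · simp [h]
          · exact mul_le_mul_of_nonneg_left
              (hgmax g' (Finset.mem_filter.mpr ⟨Finset.mem_univ g', h⟩)) (hD0 g')
      _ = (∑ g' : M → Fin n, D g') * F g := by rw [Finset.sum_mul]
      _ = F g := by rw [hD1, one_mul]
  have main : (1 / (n:ℝ) ^ n) * ∏ i, v i (O i) ≤ F g := key.trans EleF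
  refine ⟨main, ?_⟩
  -- NSW part via rpow monotonicity
  have hP : 0 ≤ ∏ i, v i (O i) := Finset.prod_nonneg fun i _ => hv0 i _
  have hcP : 0 ≤ (1 / (n:ℝ) ^ n) * ∏ i, v i (O i) := by positivity
  have h1 : ((1 / (n:ℝ) ^ n) * ∏ i, v i (O i)) ^ ((n:ℝ)⁻¹) ≤ (F g) ^ ((n:ℝ)⁻¹) :=
    Real.rpow_le_rpow hcP main (by positivity)
  have hc : ((1:ℝ) / (n:ℝ) ^ n) ^ ((n:ℝ)⁻¹) = 1 / (n:ℝ) := by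
    have ha1 : ((1:ℝ) / (n:ℝ) ^ n) = (n:ℝ) ^ (-(n:ℝ)) := by
      rw [Real.rpow_neg hn0.le, Real.rpow_natCast, one_div]
    rw [ha1, ← Real.rpow_mul hn0.le, neg_mul, mul_inv_cancel₀ (ne_of_gt hn0),
      Real.rpow_neg_one, one_div]
  have h2 : ((1 / (n:ℝ) ^ n) * ∏ i, v i (O i)) ^ ((n:ℝ)⁻¹)
      = (1 / (n:ℝ)) * (∏ i, v i (O i)) ^ ((n:ℝ)⁻¹) := by
    rw [Real.mul_rpow (by positivity) hP, hc]
  rw [h2] at h1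
  exact h1
end

section
/- Matching allocations give an m/n approximation for subadditive valuations: let M be a finite set of m items, let n ≤ m, and let v₁,…,vₙ : 2^M → ℝ_{≥0} be subadditive, nondecreasing valuations with vᵢ(∅) = 0. Then for every allocation (O₁,…,Oₙ) of M there exists an injective map a : {1,…,n} → M such that ∏ᵢ vᵢ({a(i)}) ≥ (n/m)ⁿ · ∏ᵢ vᵢ(Oᵢ). -/
/-- Subadditivity bounds a set value by the sum of singleton values. -/
lemma sub_singleton_sum {M : Type} [DecidableEq M] (w : Finset M → ℝ)
    (hzero : w ∅ = 0) (hsub : ∀ S T : Finset M, w (S ∪ T) ≤ w S + w T)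
    (S : Finset M) : w S ≤ ∑ j ∈ S, w {j} := by
  induction S using Finset.induction_on with
  | empty => simp [hzero]
  | @insert a S ha ih =>
    rw [Finset.sum_insert ha]
    calc w (insert a S) = w ({a} ∪ S) := by rw [Finset.insert_eq]
      _ ≤ w {a} + w S := hsub _ _
      _ ≤ w {a} + ∑ j ∈ S, w {j} := by linarith

/-- AM-GM: product of nonneg reals is at most (mean)^n. -/
lemma prod_le_mean_pow (n : ℕ) (hn : 1 ≤ n) (z : Fin n → ℝ) (hz : ∀ i, 0 ≤ z i) :
    ∏ i, z i ≤ ((∑ i, z i) / n) ^ n := by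
  have hn0 : (0:ℝ) < n := by exact_mod_cast hn
  have key := Real.geom_mean_le_arith_mean_weighted Finset.univ (fun _ => 1 / (n:ℝ)) z
    (fun i _ => by positivity) (by simp [Finset.sum_const]; field_simp) (fun i _ => hz i)
  have hsum : ∑ i, (1 / (n:ℝ)) * z i = (∑ i, z i) / n := by
    rw [← Finset.mul_sum]; ring
  rw [hsum] at key
  have hL : 0 ≤ ∏ i, z i ^ (1 / (n:ℝ)) :=
    Finset.prod_nonneg fun i _ => Real.rpow_nonneg (hz i) _
  have := pow_le_pow_left₀ hL key n
  calc ∏ i, z i = (∏ i, z i ^ (1 / (n:ℝ))) ^ n := by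
        rw [← Finset.prod_pow]
        refine Finset.prod_congr rfl fun i _ => ?_
        rw [← Real.rpow_natCast (z i ^ (1 / (n:ℝ))) n, ← Real.rpow_mul (hz i)]
        field_simp
        simp
    _ ≤ ((∑ i, z i) / n) ^ n := this

/-- Matching allocations give an `m/n` approximation for subadditive valuations: for
any allocation `(O₁,…,Oₙ)` there is an injective assignment of single items whose
product of values is at least `(n/m)ⁿ` times the product of the `vᵢ(Oᵢ)`. -/
theorem matching_approximation_subadditive
    {M : Type} [Fintype M] [DecidableEq M]
    (n : ℕ) (hn : 1 ≤ n) (hnm : n ≤ Fintype.card M)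
    (v : Fin n → Finset M → ℝ)
    (hzero : ∀ i, v i ∅ = 0)
    (hnonneg : ∀ i S, 0 ≤ v i S)
    (hmono : ∀ i, ∀ S T : Finset M, S ⊆ T → v i S ≤ v i T)
    (hsub : ∀ i, ∀ S T : Finset M, v i (S ∪ T) ≤ v i S + v i T)
    (O : Fin n → Finset M) (hO : ∀ i k : Fin n, i ≠ k → Disjoint (O i) (O k)) :
    ∃ a : Fin n → M, Function.Injective a ∧
      ∏ i, v i {a i} ≥ ((n : ℝ) / (Fintype.card M : ℝ)) ^ n * ∏ i, v i (O i) := by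
  set m := Fintype.card M with hm
  have hm0 : (0:ℝ) < m := by
    have : 0 < m := lt_of_lt_of_le hn hnm
    exact_mod_cast this
  have hn0 : (0:ℝ) < n := by exact_mod_cast hn
  by_cases hzeros : ∃ i, v i (O i) = 0
  · -- RHS is 0; any injective assignment works
    obtain ⟨i0, hi0⟩ := hzeros
    obtain ⟨f⟩ : Nonempty (Fin n ↪ M) := by
      rw [Function.Embedding.nonempty_iff_card_le]
      simpa using hnm
    refine ⟨f, f.injective, ?_⟩
    have : ∏ i, v i (O i) = 0 := Finset.prod_eq_zero (Finset.mem_univ i0) hi0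
    rw [this, mul_zero]
    exact Finset.prod_nonneg fun i _ => hnonneg _ _
  · push_neg at hzeros
    have hpos : ∀ i, 0 < v i (O i) := fun i => (hnonneg i (O i)).lt_of_ne (Ne.symm (hzeros i))
    have hne : ∀ i, (O i).Nonempty := by
      intro i
      rcases Finset.eq_empty_or_nonempty (O i) with h | h
      · exact absurd (h ▸ hzero i) (hzeros i)
      · exact h
    -- choose a i maximizing v i {·} on O i
    have hch : ∀ i : Fin n, ∃ b ∈ O i, ∀ x ∈ O i, v i {x} ≤ v i {b} :=
      fun i => Finset.exists_max_image (O i) (fun x => v i {x}) (hne i)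
    choose a hamem hamax using hch
    have hainj : Function.Injective a := by
      intro i k hik
      by_contra hne'
      exact Finset.disjoint_left.mp (hO i k hne') (hamem i) (hik ▸ hamem k)
    refine ⟨a, hainj, ?_⟩
    -- per-player bound: v i (O i) ≤ |O i| * v i {a i}
    have hbound : ∀ i, v i (O i) / (O i).card ≤ v i {a i} := by
      intro i
      have h1 : v i (O i) ≤ ∑ j ∈ O i, v i {j} :=
        sub_singleton_sum (v i) (hzero i) (hsub i) (O i)
      have h2 : ∑ j ∈ O i, v i {j} ≤ (O i).card * v i {a i} := by
        calc ∑ j ∈ O i, v i {j} ≤ ∑ _j ∈ O i, v i {a i} :=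
              Finset.sum_le_sum fun j hj => hamax i j hj
          _ = (O i).card * v i {a i} := by rw [Finset.sum_const, nsmul_eq_mul]
      have hc0 : (0:ℝ) < (O i).card := by exact_mod_cast (hne i).card_pos
      rw [div_le_iff₀ hc0]
      calc v i (O i) ≤ (O i).card * v i {a i} := h1.trans h2
        _ = v i {a i} * (O i).card := mul_comm _ _
    -- sum of cards ≤ m
    have hsumcard : ∑ i, ((O i).card : ℝ) ≤ (m : ℝ) := by
      have : ∑ i, (O i).card ≤ m := by
        rw [← Finset.card_biUnion (fun i _ j _ hij => hO i j hij)]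
        exact Finset.card_le_card (Finset.subset_univ _) |>.trans (le_of_eq (by simp [hm]))
      exact_mod_cast this
    -- AM-GM: ∏ |O i| ≤ (m/n)^n
    have hprodcard : ∏ i, ((O i).card : ℝ) ≤ ((m:ℝ) / n) ^ n := by
      calc ∏ i, ((O i).card : ℝ) ≤ ((∑ i, ((O i).card : ℝ)) / n) ^ n :=
            prod_le_mean_pow n hn _ (fun i => by positivity)
        _ ≤ ((m:ℝ) / n) ^ n := by
            gcongr
    have hprodcardpos : (0:ℝ) < ∏ i, ((O i).card : ℝ) :=
      Finset.prod_pos fun i _ => by exact_mod_cast (hne i).card_pos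
    have main : ∏ i, v i {a i} ≥ ∏ i, (v i (O i) / (O i).card) := by
      apply Finset.prod_le_prod
      · intro i _; exact div_nonneg (hnonneg _ _) (Nat.cast_nonneg _)
      · intro i _; exact hbound i
    have hsplit : ∏ i, (v i (O i) / (O i).card) =
        (∏ i, v i (O i)) / ∏ i, ((O i).card : ℝ) := by
      rw [Finset.prod_div_distrib]
    have hprodvpos : (0:ℝ) < ∏ i, v i (O i) := Finset.prod_pos fun i _ => hpos i
    have hone : ((n:ℝ) / m) ^ n * ∏ i, ((O i).card : ℝ) ≤ 1 := by
      have heq : ((n:ℝ)/m)^n * ((m:ℝ)/n)^n = 1 := by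
        rw [← mul_pow]
        have : (n:ℝ)/m * ((m:ℝ)/n) = 1 := by field_simp
        rw [this, one_pow]
      calc ((n:ℝ)/m)^n * ∏ i, ((O i).card : ℝ) ≤ ((n:ℝ)/m)^n * ((m:ℝ)/n)^n := by
            apply mul_le_mul_of_nonneg_left hprodcard (by positivity)
        _ = 1 := heq
    have hfinal : (∏ i, v i (O i)) / ∏ i, ((O i).card : ℝ) ≥
        ((n:ℝ) / m) ^ n * ∏ i, v i (O i) := by
      rw [ge_iff_le, le_div_iff₀ hprodcardpos]
      calc ((n:ℝ)/m)^n * (∏ i, v i (O i)) * ∏ i, ((O i).card : ℝ)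
          = (((n:ℝ)/m)^n * ∏ i, ((O i).card : ℝ)) * ∏ i, v i (O i) := by ring
        _ ≤ 1 * ∏ i, v i (O i) := mul_le_mul_of_nonneg_right hone hprodvpos.le
        _ = ∏ i, v i (O i) := one_mul _
    calc ∏ i, v i {a i} ≥ ∏ i, (v i (O i) / (O i).card) := main
      _ = (∏ i, v i (O i)) / ∏ i, ((O i).card : ℝ) := hsplit
      _ ≥ ((n:ℝ) / m) ^ n * ∏ i, v i (O i) := hfinal
end

section
/- Random partition into n² bundles: let M be a finite set of items, n ≥ 1 players with subadditive, nondecreasing valuations v₁,…,vₙ : 2^M → ℝ_{≥0} with vᵢ(∅) = 0, and let (O₁,…,Oₙ) be any allocation of M. Let g : M → {1,…,n²} be random, where each item is assigned to one of the n² bundles uniformly and independently. Then with probability at least 1/2 over g, there exists an injective map σ : {1,…,n} → {1,…,n²} such that ∏ᵢ vᵢ(g⁻¹(σ(i))) ≥ (1/n²)ⁿ · ∏ᵢ vᵢ(Oᵢ); that is, allocating to each player i the bundle g⁻¹(σ(i)) achieves Nash Social Welfare at least 1/n² times that of (O₁,…,Oₙ). -/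
set_option linter.unusedSectionVars false

open scoped Classical

namespace NSWAux

open Finset

variable {M : Type} [Fintype M] [DecidableEq M] {k : ℕ}

noncomputable def gd (v : Finset M → ℝ) (t : ℝ) (A : Finset M) (g : M → Fin k) :
    Finset (Fin k) :=
  Finset.univ.filter (fun j => t ≤ v (A.filter (fun x => g x = j)))

noncomputable def wt (v : Finset M → ℝ) (t : ℝ) (A : Finset M) (g : M → Fin k) (j : Fin k) :
    ℝ :=
  if j ∈ gd v t A g then ((gd v t A g).card : ℝ)⁻¹ else 0

lemma wt_nonneg (v : Finset M → ℝ) (t : ℝ) (A : Finset M) (g : M → Fin k) (j : Fin k) :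
    0 ≤ wt v t A g j := by
  unfold wt; split <;> positivity

lemma mem_gd_of_wt_ne (v : Finset M → ℝ) (t : ℝ) (A : Finset M) (g : M → Fin k) (j : Fin k)
    (h : wt v t A g j ≠ 0) : j ∈ gd v t A g := by
  by_contra hc
  simp [wt, hc] at h

lemma v_le_sum (v : Finset M → ℝ) (hz : v ∅ = 0)
    (hsub : ∀ S T : Finset M, v (S ∪ T) ≤ v S + v T)
    (A : Finset M) (g : M → Fin k) :
    v A ≤ ∑ j : Fin k, v (A.filter (fun x => g x = j)) := by
  have key : ∀ s : Finset (Fin k),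
      v (A.filter (fun x => g x ∈ s)) ≤ ∑ j ∈ s, v (A.filter (fun x => g x = j)) := by
    intro s
    induction s using Finset.induction_on with
    | empty => simp [hz]
    | insert a s hj ih =>
      have hsplit : A.filter (fun x => g x ∈ insert a s)
          = A.filter (fun x => g x = a) ∪ A.filter (fun x => g x ∈ s) := by
        ext x
        simp only [Finset.mem_filter, Finset.mem_union, Finset.mem_insert, and_or_left]
      rw [hsplit, Finset.sum_insert hj]
      exact le_trans (hsub _ _) (add_le_add_right ih _)
  have hA : A.filter (fun x => g x ∈ (Finset.univ : Finset (Fin k))) = A := by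
    simp
  calc v A = v (A.filter (fun x => g x ∈ (Finset.univ : Finset (Fin k)))) := by rw [hA]
    _ ≤ _ := key Finset.univ

lemma gd_nonempty (v : Finset M → ℝ) (hz : v ∅ = 0)
    (hsub : ∀ S T : Finset M, v (S ∪ T) ≤ v S + v T)
    (A : Finset M) (t : ℝ) (ht : (k : ℝ) * t ≤ v A) (hk : 0 < k) (g : M → Fin k) :
    (gd v t A g).Nonempty := by
  have hsum : ∑ _j : Fin k, t ≤ ∑ j : Fin k, v (A.filter (fun x => g x = j)) := by
    calc ∑ _j : Fin k, t = (k : ℝ) * t := by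
          simp [Finset.sum_const, nsmul_eq_mul]
      _ ≤ v A := ht
      _ ≤ _ := v_le_sum v hz hsub A g
  have hne : (Finset.univ : Finset (Fin k)).Nonempty := by
    have : Nonempty (Fin k) := Fin.pos_iff_nonempty.mp hk
    exact Finset.univ_nonempty
  obtain ⟨j, -, hj⟩ := Finset.exists_le_of_sum_le hne hsum
  exact ⟨j, by simp [gd, hj]⟩

lemma sum_wt (v : Finset M → ℝ) (t : ℝ) (A : Finset M) (g : M → Fin k)
    (h : (gd v t A g).Nonempty) : ∑ j, wt v t A g j = 1 := by
  have hc : ((gd v t A g).card : ℝ) ≠ 0 := by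
    exact Nat.cast_ne_zero.mpr (Finset.card_pos.mpr h).ne'
  unfold wt
  rw [Finset.sum_ite_mem, Finset.univ_inter, Finset.sum_const, nsmul_eq_mul,
    mul_inv_cancel₀ hc]

lemma gd_congr (v : Finset M → ℝ) (t : ℝ) (A : Finset M) {g g' : M → Fin k}
    (h : ∀ x ∈ A, g x = g' x) : gd v t A g = gd v t A g' := by
  have hf : ∀ j : Fin k, A.filter (fun x => g x = j) = A.filter (fun x => g' x = j) := by
    intro j
    apply Finset.filter_congr
    intro x hx
    rw [h x hx]
  unfold gd
  apply Finset.filter_congr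
  intro j _
  rw [hf j]

lemma wt_congr (v : Finset M → ℝ) (t : ℝ) (A : Finset M) {g g' : M → Fin k}
    (h : ∀ x ∈ A, g x = g' x) (j : Fin k) : wt v t A g j = wt v t A g' j := by
  unfold wt
  rw [gd_congr v t A h]

lemma gd_comp (v : Finset M → ℝ) (t : ℝ) (A : Finset M) (g : M → Fin k)
    (τ : Equiv.Perm (Fin k)) :
    gd v t A (⇑τ ∘ g) = (gd v t A g).map τ.toEmbedding := by
  ext j
  rw [Finset.mem_map_equiv]
  simp only [gd, Finset.mem_filter, Finset.mem_univ, true_and, Function.comp]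
  have : A.filter (fun x => τ (g x) = j) = A.filter (fun x => g x = τ.symm j) := by
    apply Finset.filter_congr
    intro x _
    simp [Equiv.apply_eq_iff_eq_symm_apply]
  rw [this]

lemma wt_comp (v : Finset M → ℝ) (t : ℝ) (A : Finset M) (g : M → Fin k)
    (τ : Equiv.Perm (Fin k)) (j : Fin k) :
    wt v t A (⇑τ ∘ g) j = wt v t A g (τ.symm j) := by
  unfold wt
  rw [gd_comp, Finset.card_map]
  simp only [Finset.mem_map_equiv]

lemma sum_g_wt_eq (v : Finset M → ℝ) (t : ℝ) (A : Finset M) (j j' : Fin k) :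
    ∑ g : M → Fin k, wt v t A g j' = ∑ g : M → Fin k, wt v t A g j := by
  classical
  set τ : Equiv.Perm (Fin k) := Equiv.swap j j' with hτ
  have key : ∀ g : M → Fin k,
      wt v t A ((Equiv.arrowCongr (Equiv.refl M) τ) g) j = wt v t A g j' := by
    intro g
    have hg : ((Equiv.arrowCongr (Equiv.refl M) τ) g) = ⇑τ ∘ g := rfl
    rw [hg, wt_comp]
    congr 1
    rw [hτ, Equiv.symm_swap, Equiv.swap_apply_left]
  calc ∑ g : M → Fin k, wt v t A g j'
      = ∑ g : M → Fin k, wt v t A ((Equiv.arrowCongr (Equiv.refl M) τ) g) j :=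
        (Finset.sum_congr rfl (fun g _ => (key g).symm))
    _ = ∑ g : M → Fin k, wt v t A g j :=
        Equiv.sum_comp (Equiv.arrowCongr (Equiv.refl M) τ) (fun g => wt v t A g j)

noncomputable def mix (A : Finset M) (p : (M → Fin k) × (M → Fin k)) :
    (M → Fin k) × (M → Fin k) :=
  (fun x => if x ∈ A then p.1 x else p.2 x, fun x => if x ∈ A then p.2 x else p.1 x)

lemma mix_invol (A : Finset M) (p : (M → Fin k) × (M → Fin k)) : mix A (mix A p) = p := by
  unfold mix
  apply Prod.ext <;> funext x <;> by_cases hx : x ∈ A <;> simp [hx]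

noncomputable def mixEquiv (A : Finset M) :
    ((M → Fin k) × (M → Fin k)) ≃ ((M → Fin k) × (M → Fin k)) :=
  ⟨mix A, mix A, mix_invol A, mix_invol A⟩

lemma indep (A B : Finset M) (hAB : Disjoint A B) (F H : (M → Fin k) → ℝ)
    (hF : ∀ g g', (∀ x ∈ A, g x = g' x) → F g = F g')
    (hH : ∀ g g', (∀ x ∈ B, g x = g' x) → H g = H g') :
    (∑ g : M → Fin k, F g) * (∑ g : M → Fin k, H g)
      = (Fintype.card (M → Fin k) : ℝ) * ∑ g : M → Fin k, F g * H g := by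
  classical
  have h1 : (∑ g : M → Fin k, F g) * (∑ g : M → Fin k, H g)
      = ∑ p : (M → Fin k) × (M → Fin k), F p.1 * H p.2 := by
    rw [Finset.sum_mul_sum, ← Fintype.sum_prod_type']
  have h2 : ∀ p : (M → Fin k) × (M → Fin k),
      F ((mixEquiv A p).1) * H ((mixEquiv A p).1) = F p.1 * H p.2 := by
    intro p
    have hf : F ((mixEquiv A p).1) = F p.1 := by
      apply hF
      intro x hx
      simp [mixEquiv, mix, hx]
    have hh : H ((mixEquiv A p).1) = H p.2 := by
      apply hH
      intro x hx
      have hxA : x ∉ A := Finset.disjoint_right.mp hAB hx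
      simp [mixEquiv, mix, hxA]
    rw [hf, hh]
  calc (∑ g : M → Fin k, F g) * (∑ g : M → Fin k, H g)
      = ∑ p : (M → Fin k) × (M → Fin k), F p.1 * H p.2 := h1
    _ = ∑ p : (M → Fin k) × (M → Fin k), F ((mixEquiv A p).1) * H ((mixEquiv A p).1) :=
        (Finset.sum_congr rfl (fun p _ => (h2 p).symm))
    _ = ∑ p : (M → Fin k) × (M → Fin k), F p.1 * H p.1 :=
        Equiv.sum_comp (mixEquiv A) (fun p => F p.1 * H p.1)
    _ = (Fintype.card (M → Fin k) : ℝ) * ∑ g : M → Fin k, F g * H g := by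
        rw [Fintype.sum_prod_type]
        simp [Finset.sum_const, nsmul_eq_mul, Finset.mul_sum]

lemma pair_factor {n N : ℕ} (w : Fin n → Fin N → ℝ) (hrow : ∀ m, ∑ j, w m j = 1)
    {i k : Fin n} (hik : i ≠ k) :
    ∑ c : Fin n → Fin N, (if c i = c k then ∏ m, w m (c m) else 0)
      = ∑ j, w i j * w k j := by
  classical
  have step1 : ∀ c : Fin n → Fin N,
      (if c i = c k then ∏ m, w m (c m) else 0)
        = ∑ j, (if c i = j ∧ c k = j then ∏ m, w m (c m) else 0) := by
    intro c
    by_cases h : c i = c k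
    · rw [if_pos h, Finset.sum_eq_single (c i)]
      · rw [if_pos ⟨rfl, h.symm⟩]
      · intro j _ hj
        rw [if_neg]
        rintro ⟨h1, -⟩
        exact hj h1.symm
      · intro h'
        exact absurd (Finset.mem_univ _) h'
    · rw [if_neg h, eq_comm]
      apply Finset.sum_eq_zero
      intro j _
      rw [if_neg]
      rintro ⟨h1, h2⟩
      exact h (h1.trans h2.symm)
  rw [Finset.sum_congr rfl (fun c _ => step1 c), Finset.sum_comm]
  refine Finset.sum_congr rfl (fun j _ => ?_)
  have step2 : ∀ c : Fin n → Fin N,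
      (if c i = j ∧ c k = j then ∏ m, w m (c m) else 0)
        = ∏ m, (if m = i ∨ m = k then (if c m = j then w m j else 0) else w m (c m)) := by
    intro c
    by_cases h : c i = j ∧ c k = j
    · rw [if_pos h]
      refine Finset.prod_congr rfl (fun m _ => ?_)
      by_cases hm : m = i ∨ m = k
      · rw [if_pos hm]
        have hcm : c m = j := by rcases hm with rfl | rfl; exacts [h.1, h.2]
        rw [if_pos hcm, hcm]
      · rw [if_neg hm]
    · rw [if_neg h, eq_comm]
      rcases not_and_or.mp h with h1 | h2
      · apply Finset.prod_eq_zero (Finset.mem_univ i)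
        rw [if_pos (Or.inl rfl), if_neg h1]
      · apply Finset.prod_eq_zero (Finset.mem_univ k)
        rw [if_pos (Or.inr rfl), if_neg h2]
  rw [Finset.sum_congr rfl (fun c _ => step2 c)]
  have hfac : ∀ m : Fin n,
      (∑ x : Fin N, (if m = i ∨ m = k then (if x = j then w m j else 0) else w m x))
        = (if m = i then w i j else 1) * (if m = k then w k j else 1) := by
    intro m
    by_cases hm : m = i ∨ m = k
    · have h1 : (∑ x : Fin N, (if m = i ∨ m = k then (if x = j then w m j else 0) else w m x))
          = ∑ x : Fin N, (if x = j then w m j else 0) :=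
        Finset.sum_congr rfl (fun x _ => if_pos hm)
      rw [h1, Finset.sum_ite_eq' Finset.univ j (fun _ => w m j)]
      simp only [Finset.mem_univ, if_true]
      rcases hm with rfl | rfl
      · rw [if_pos rfl, if_neg hik, mul_one]
      · rw [if_neg (fun hh => hik hh.symm), if_pos rfl, one_mul]
    · obtain ⟨hmi, hmk⟩ := not_or.mp hm
      have h1 : (∑ x : Fin N, (if m = i ∨ m = k then (if x = j then w m j else 0) else w m x))
          = ∑ x : Fin N, w m x :=
        Finset.sum_congr rfl (fun x _ => if_neg hm)
      rw [h1, hrow m, if_neg hmi, if_neg hmk, mul_one]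
  calc ∑ c : Fin n → Fin N,
        ∏ m, (if m = i ∨ m = k then (if c m = j then w m j else 0) else w m (c m))
      = ∏ m, ∑ y : Fin N, (if m = i ∨ m = k then (if y = j then w m j else 0) else w m y) := by
        rw [← Fintype.piFinset_univ]
        exact (Finset.prod_univ_sum (fun _ : Fin n => (Finset.univ : Finset (Fin N)))
          (fun m y => if m = i ∨ m = k then (if y = j then w m j else 0) else w m y)).symm
    _ = ∏ m, ((if m = i then w i j else 1) * (if m = k then w k j else 1)) :=
        Finset.prod_congr rfl (fun m _ => hfac m)
    _ = w i j * w k j := by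
        rw [Finset.prod_mul_distrib, Finset.prod_ite_eq' Finset.univ i (fun _ => w i j),
          Finset.prod_ite_eq' Finset.univ k (fun _ => w k j)]
        simp

end NSWAux




/-- Random partition into `n²` bundles: assigning each item independently and uniformly
to one of `n²` bundles, with probability at least `1/2` one can match the `n` players
(with subadditive valuations) to distinct bundles so that the product of values is at
least `(1/n²)ⁿ` times that of any fixed allocation `(O₁,…,Oₙ)`; i.e. the resulting
Nash Social Welfare is at least `1/n²` times that of `(O₁,…,Oₙ)`. -/
theorem random_partition_n_squared_bundles
    {M : Type} [Fintype M] [DecidableEq M]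
    (n : ℕ) (hn : 1 ≤ n)
    (v : Fin n → Finset M → ℝ)
    (hzero : ∀ i, v i ∅ = 0)
    (hnonneg : ∀ i S, 0 ≤ v i S)
    (hmono : ∀ i, ∀ S T : Finset M, S ⊆ T → v i S ≤ v i T)
    (hsub : ∀ i, ∀ S T : Finset M, v i (S ∪ T) ≤ v i S + v i T)
    (O : Fin n → Finset M) (hO : ∀ i k : Fin n, i ≠ k → Disjoint (O i) (O k)) :
    (1 / 2 : ℝ) * ((n : ℝ) ^ 2) ^ (Fintype.card M) ≤
      ((Finset.univ.filter (fun g : M → Fin (n ^ 2) =>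
          ∃ σ : Fin n → Fin (n ^ 2), Function.Injective σ ∧
            (1 / (n : ℝ) ^ 2) ^ n * ∏ i, v i (O i) ≤
              ∏ i, v i (Finset.univ.filter (fun x => g x = σ i)))).card : ℝ) := by
  classical
  have hnpos : 0 < n := hn
  have hkpos : 0 < n ^ 2 := pow_pos hnpos 2
  have hkR : ((n ^ 2 : ℕ) : ℝ) = (n : ℝ) ^ 2 := by push_cast; ring
  have hkRpos : (0 : ℝ) < ((n ^ 2 : ℕ) : ℝ) := by exact_mod_cast hkpos
  -- thresholds
  set t : Fin n → ℝ := fun i => v i (O i) / ((n ^ 2 : ℕ) : ℝ) with ht_def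
  have htnonneg : ∀ i, 0 ≤ t i := fun i => div_nonneg (hnonneg i _) hkRpos.le
  -- weights
  set W : Fin n → (M → Fin (n ^ 2)) → Fin (n ^ 2) → ℝ :=
    fun i => NSWAux.wt (v i) (t i) (O i) with hW_def
  have hWnonneg : ∀ i g j, 0 ≤ W i g j := fun i g j => NSWAux.wt_nonneg _ _ _ _ _
  have hne : ∀ (i : Fin n) (g : M → Fin (n ^ 2)),
      (NSWAux.gd (v i) (t i) (O i) g).Nonempty := by
    intro i g
    refine NSWAux.gd_nonempty (v i) (hzero i) (hsub i) (O i) (t i) ?_ hkpos g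
    rw [ht_def]
    rw [mul_div_cancel₀ _ hkRpos.ne']
  have hrow : ∀ i g, ∑ j, W i g j = 1 := fun i g => NSWAux.sum_wt _ _ _ _ (hne i g)
  -- total count
  set T : ℝ := ((n ^ 2 : ℕ) : ℝ) ^ (Fintype.card M) with hT_def
  have hTcard : ((Fintype.card (M → Fin (n ^ 2)) : ℕ) : ℝ) = T := by
    rw [hT_def, Fintype.card_fun, Fintype.card_fin]
    push_cast
    ring
  have hTpos : 0 < T := pow_pos hkRpos _
  -- marginal sums
  have hmarg : ∀ (i : Fin n) (j : Fin (n ^ 2)),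
      ∑ g : M → Fin (n ^ 2), W i g j = T / ((n ^ 2 : ℕ) : ℝ) := by
    intro i j
    have hconst : ∀ j' : Fin (n ^ 2),
        ∑ g : M → Fin (n ^ 2), W i g j' = ∑ g : M → Fin (n ^ 2), W i g j :=
      fun j' => NSWAux.sum_g_wt_eq (v i) (t i) (O i) j j'
    have h1 : ((n ^ 2 : ℕ) : ℝ) * (∑ g : M → Fin (n ^ 2), W i g j) = T := by
      calc ((n ^ 2 : ℕ) : ℝ) * (∑ g : M → Fin (n ^ 2), W i g j)
          = ∑ _j' : Fin (n ^ 2), ∑ g : M → Fin (n ^ 2), W i g j := by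
            rw [Finset.sum_const, Finset.card_univ, Fintype.card_fin, nsmul_eq_mul]
        _ = ∑ j' : Fin (n ^ 2), ∑ g : M → Fin (n ^ 2), W i g j' :=
            (Finset.sum_congr rfl (fun j' _ => (hconst j').symm))
        _ = ∑ g : M → Fin (n ^ 2), ∑ j' : Fin (n ^ 2), W i g j' := Finset.sum_comm
        _ = ∑ _g : M → Fin (n ^ 2), (1 : ℝ) :=
            Finset.sum_congr rfl (fun g _ => hrow i g)
        _ = T := by
            rw [Finset.sum_const, Finset.card_univ, nsmul_eq_mul, mul_one, hTcard]
    rw [eq_div_iff hkRpos.ne', mul_comm]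
    exact h1
  -- pair products
  have hpairprod : ∀ (i i' : Fin n), i ≠ i' → ∀ j : Fin (n ^ 2),
      ∑ g : M → Fin (n ^ 2), W i g j * W i' g j
        = T / (((n ^ 2 : ℕ) : ℝ) * ((n ^ 2 : ℕ) : ℝ)) := by
    intro i i' hii' j
    have hind := NSWAux.indep (O i) (O i') (hO i i' hii')
      (fun g => W i g j) (fun g => W i' g j)
      (fun g g' h => NSWAux.wt_congr (v i) (t i) (O i) h j)
      (fun g g' h => NSWAux.wt_congr (v i') (t i') (O i') h j)
    rw [hmarg i j, hmarg i' j, hTcard] at hind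
    have h2 : T * ∑ g : M → Fin (n ^ 2), W i g j * W i' g j
        = T * (T / (((n ^ 2 : ℕ) : ℝ) * ((n ^ 2 : ℕ) : ℝ))) := by
      rw [← hind]
      field_simp
    exact mul_left_cancel₀ hTpos.ne' h2
  -- the set of pairs
  set pairs : Finset (Fin n × Fin n) :=
    Finset.univ.filter (fun p : Fin n × Fin n => p.1 < p.2) with hpairs_def
  have hpairscard : 2 * pairs.card ≤ n ^ 2 := by
    have hmap : (pairs.map (Equiv.prodComm (Fin n) (Fin n)).toEmbedding).card = pairs.card :=
      Finset.card_map _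
    have hdisj : Disjoint pairs (pairs.map (Equiv.prodComm (Fin n) (Fin n)).toEmbedding) := by
      rw [Finset.disjoint_left]
      intro p hp hp2
      rw [Finset.mem_map_equiv] at hp2
      rw [hpairs_def, Finset.mem_filter] at hp hp2
      exact absurd (hp.2.trans hp2.2) (lt_irrefl _)
    have hle : (pairs ∪ pairs.map (Equiv.prodComm (Fin n) (Fin n)).toEmbedding).card
        ≤ Fintype.card (Fin n × Fin n) := Finset.card_le_univ _
    rw [Finset.card_union_of_disjoint hdisj, hmap, Fintype.card_prod, Fintype.card_fin] at hle
    calc 2 * pairs.card = pairs.card + pairs.card := by ring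
      _ ≤ n * n := hle
      _ = n ^ 2 := by ring
  have hmem_pairs : ∀ p : Fin n × Fin n, p ∈ pairs → p.1 ≠ p.2 := by
    intro p hp
    rw [hpairs_def, Finset.mem_filter] at hp
    exact ne_of_lt hp.2
  -- good implication
  have hgood : ∀ (g : M → Fin (n ^ 2)) (c : Fin n → Fin (n ^ 2)),
      Function.Injective c → (∀ i, c i ∈ NSWAux.gd (v i) (t i) (O i) g) →
      (∃ σ : Fin n → Fin (n ^ 2), Function.Injective σ ∧
        (1 / (n : ℝ) ^ 2) ^ n * ∏ i, v i (O i) ≤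
          ∏ i, v i (Finset.univ.filter (fun x => g x = σ i))) := by
    intro g c hinj hmemc
    refine ⟨c, hinj, ?_⟩
    have h1 : ∀ i, t i ≤ v i (Finset.univ.filter (fun x => g x = c i)) := by
      intro i
      have hm := hmemc i
      rw [NSWAux.gd, Finset.mem_filter] at hm
      refine le_trans hm.2 (hmono i _ _ ?_)
      exact Finset.filter_subset_filter _ (Finset.subset_univ (O i))
    have h2 : (1 / (n : ℝ) ^ 2) ^ n * ∏ i, v i (O i) = ∏ i, t i := by
      simp only [ht_def]
      rw [Finset.prod_div_distrib, Finset.prod_const, Finset.card_univ, Fintype.card_fin, hkR]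
      ring
    rw [h2]
    exact Finset.prod_le_prod (fun i _ => htnonneg i) (fun i _ => h1 i)
  -- pointwise bound for bad g
  have hpoint : ∀ g : M → Fin (n ^ 2),
      ¬ (∃ σ : Fin n → Fin (n ^ 2), Function.Injective σ ∧
        (1 / (n : ℝ) ^ 2) ^ n * ∏ i, v i (O i) ≤
          ∏ i, v i (Finset.univ.filter (fun x => g x = σ i))) →
      (1 : ℝ) ≤ ∑ p ∈ pairs, ∑ j, W p.1 g j * W p.2 g j := by
    intro g hbadg
    have step0 : (1 : ℝ) = ∑ c : Fin n → Fin (n ^ 2), ∏ i, W i g (c i) := by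
      calc (1 : ℝ) = ∏ i : Fin n, (1 : ℝ) := (Finset.prod_const_one).symm
        _ = ∏ i : Fin n, ∑ j, W i g j := Finset.prod_congr rfl (fun i _ => (hrow i g).symm)
        _ = ∑ c ∈ Fintype.piFinset (fun _ : Fin n => (Finset.univ : Finset (Fin (n ^ 2)))),
              ∏ i, W i g (c i) := Finset.prod_univ_sum _ _
        _ = ∑ c : Fin n → Fin (n ^ 2), ∏ i, W i g (c i) := by
            rw [Fintype.piFinset_univ]
    have step1 : ∑ c : Fin n → Fin (n ^ 2), ∏ i, W i g (c i)
        ≤ ∑ c : Fin n → Fin (n ^ 2),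
            (∑ p ∈ pairs, if c p.1 = c p.2 then (1 : ℝ) else 0) * ∏ i, W i g (c i) := by
      apply Finset.sum_le_sum
      intro c _
      by_cases hz : ∏ i, W i g (c i) = 0
      · rw [hz, mul_zero]
      · have hmemc : ∀ i, c i ∈ NSWAux.gd (v i) (t i) (O i) g := by
          intro i
          apply NSWAux.mem_gd_of_wt_ne
          intro h0
          exact hz (Finset.prod_eq_zero (Finset.mem_univ i) h0)
        have hninj : ¬ Function.Injective c := fun hinj => hbadg (hgood g c hinj hmemc)
        obtain ⟨a, b, hab, hne_ab⟩ := Function.not_injective_iff.mp hninj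
        have hq : ∃ q ∈ pairs, c q.1 = c q.2 := by
          rcases lt_or_gt_of_ne hne_ab with h | h
          · exact ⟨(a, b), by rw [hpairs_def]; simp [h], hab⟩
          · exact ⟨(b, a), by rw [hpairs_def]; simp [h], hab.symm⟩
        obtain ⟨q, hq1, hq2⟩ := hq
        have hS : (1 : ℝ) ≤ ∑ p ∈ pairs, if c p.1 = c p.2 then (1 : ℝ) else 0 := by
          have hs := Finset.single_le_sum
            (f := fun p : Fin n × Fin n => if c p.1 = c p.2 then (1 : ℝ) else 0)
            (fun p _ => by split <;> norm_num) hq1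
          rw [if_pos hq2] at hs
          exact hs
        calc ∏ i, W i g (c i) = 1 * ∏ i, W i g (c i) := (one_mul _).symm
          _ ≤ (∑ p ∈ pairs, if c p.1 = c p.2 then (1 : ℝ) else 0) * ∏ i, W i g (c i) :=
            mul_le_mul_of_nonneg_right hS
              (Finset.prod_nonneg (fun i _ => hWnonneg i g (c i)))
    have step2 : ∑ c : Fin n → Fin (n ^ 2),
          (∑ p ∈ pairs, if c p.1 = c p.2 then (1 : ℝ) else 0) * ∏ i, W i g (c i)
        = ∑ p ∈ pairs, ∑ j, W p.1 g j * W p.2 g j := by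
      calc ∑ c : Fin n → Fin (n ^ 2),
            (∑ p ∈ pairs, if c p.1 = c p.2 then (1 : ℝ) else 0) * ∏ i, W i g (c i)
          = ∑ c : Fin n → Fin (n ^ 2), ∑ p ∈ pairs,
              (if c p.1 = c p.2 then (1 : ℝ) else 0) * ∏ i, W i g (c i) := by
            exact Finset.sum_congr rfl (fun c _ => Finset.sum_mul _ _ _)
        _ = ∑ p ∈ pairs, ∑ c : Fin n → Fin (n ^ 2),
              (if c p.1 = c p.2 then (1 : ℝ) else 0) * ∏ i, W i g (c i) := Finset.sum_comm
        _ = ∑ p ∈ pairs, ∑ c : Fin n → Fin (n ^ 2),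
              (if c p.1 = c p.2 then ∏ i, W i g (c i) else 0) := by
            refine Finset.sum_congr rfl (fun p _ => Finset.sum_congr rfl (fun c _ => ?_))
            rw [ite_mul, one_mul, zero_mul]
        _ = ∑ p ∈ pairs, ∑ j, W p.1 g j * W p.2 g j := by
            refine Finset.sum_congr rfl (fun p hp => ?_)
            exact NSWAux.pair_factor (fun m j => W m g j) (fun m => hrow m g) (hmem_pairs p hp)
    rw [step0]
    exact le_trans step1 (le_of_eq step2)
  -- counting the bad set
  have hbadcard : ((Finset.univ.filter (fun g : M → Fin (n ^ 2) =>
      ¬ (∃ σ : Fin n → Fin (n ^ 2), Function.Injective σ ∧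
        (1 / (n : ℝ) ^ 2) ^ n * ∏ i, v i (O i) ≤
          ∏ i, v i (Finset.univ.filter (fun x => g x = σ i))))).card : ℝ) ≤ T / 2 := by
    set bad := Finset.univ.filter (fun g : M → Fin (n ^ 2) =>
      ¬ (∃ σ : Fin n → Fin (n ^ 2), Function.Injective σ ∧
        (1 / (n : ℝ) ^ 2) ^ n * ∏ i, v i (O i) ≤
          ∏ i, v i (Finset.univ.filter (fun x => g x = σ i)))) with hbad_def
    have hstep : (bad.card : ℝ) ≤ ∑ p ∈ pairs, ∑ g ∈ bad, ∑ j, W p.1 g j * W p.2 g j := by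
      calc (bad.card : ℝ) = ∑ _g ∈ bad, (1 : ℝ) := by
            rw [Finset.sum_const, nsmul_eq_mul, mul_one]
        _ ≤ ∑ g ∈ bad, ∑ p ∈ pairs, ∑ j, W p.1 g j * W p.2 g j := by
            apply Finset.sum_le_sum
            intro g hg
            rw [hbad_def, Finset.mem_filter] at hg
            exact hpoint g hg.2
        _ = ∑ p ∈ pairs, ∑ g ∈ bad, ∑ j, W p.1 g j * W p.2 g j := Finset.sum_comm
    have hfix : ∀ p ∈ pairs, ∑ g ∈ bad, ∑ j, W p.1 g j * W p.2 g j
        ≤ T / ((n ^ 2 : ℕ) : ℝ) := by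
      intro p hp
      have hsub1 : ∑ g ∈ bad, ∑ j, W p.1 g j * W p.2 g j
          ≤ ∑ g : M → Fin (n ^ 2), ∑ j, W p.1 g j * W p.2 g j := by
        apply Finset.sum_le_sum_of_subset_of_nonneg (Finset.filter_subset _ _)
        intro g _ _
        exact Finset.sum_nonneg (fun j _ => mul_nonneg (hWnonneg _ _ _) (hWnonneg _ _ _))
      have heq : ∑ g : M → Fin (n ^ 2), ∑ j, W p.1 g j * W p.2 g j
          = T / ((n ^ 2 : ℕ) : ℝ) := by
        calc ∑ g : M → Fin (n ^ 2), ∑ j, W p.1 g j * W p.2 g j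
            = ∑ j, ∑ g : M → Fin (n ^ 2), W p.1 g j * W p.2 g j := Finset.sum_comm
          _ = ∑ _j : Fin (n ^ 2), T / (((n ^ 2 : ℕ) : ℝ) * ((n ^ 2 : ℕ) : ℝ)) :=
              Finset.sum_congr rfl (fun j _ => hpairprod p.1 p.2 (hmem_pairs p hp) j)
          _ = T / ((n ^ 2 : ℕ) : ℝ) := by
              rw [Finset.sum_const, Finset.card_univ, Fintype.card_fin, nsmul_eq_mul]
              field_simp
      exact le_trans hsub1 (le_of_eq heq)
    have hfinal : ∑ p ∈ pairs, ∑ g ∈ bad, ∑ j, W p.1 g j * W p.2 g j ≤ T / 2 := by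
      calc ∑ p ∈ pairs, ∑ g ∈ bad, ∑ j, W p.1 g j * W p.2 g j
          ≤ ∑ _p ∈ pairs, T / ((n ^ 2 : ℕ) : ℝ) := Finset.sum_le_sum hfix
        _ = (pairs.card : ℝ) * (T / ((n ^ 2 : ℕ) : ℝ)) := by
            rw [Finset.sum_const, nsmul_eq_mul]
        _ ≤ (((n ^ 2 : ℕ) : ℝ) / 2) * (T / ((n ^ 2 : ℕ) : ℝ)) := by
            apply mul_le_mul_of_nonneg_right
            · have : (2 * pairs.card : ℝ) ≤ ((n ^ 2 : ℕ) : ℝ) := by exact_mod_cast hpairscard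
              linarith
            · positivity
        _ = T / 2 := by
            field_simp
    exact le_trans hstep hfinal
  -- conclusion
  have hsplit := Finset.card_filter_add_card_filter_not
    (s := (Finset.univ : Finset (M → Fin (n ^ 2))))
    (p := fun g : M → Fin (n ^ 2) =>
      ∃ σ : Fin n → Fin (n ^ 2), Function.Injective σ ∧
        (1 / (n : ℝ) ^ 2) ^ n * ∏ i, v i (O i) ≤
          ∏ i, v i (Finset.univ.filter (fun x => g x = σ i)))
  have hsplitR : ((Finset.univ.filter (fun g : M → Fin (n ^ 2) =>
        ∃ σ : Fin n → Fin (n ^ 2), Function.Injective σ ∧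
          (1 / (n : ℝ) ^ 2) ^ n * ∏ i, v i (O i) ≤
            ∏ i, v i (Finset.univ.filter (fun x => g x = σ i)))).card : ℝ)
      + ((Finset.univ.filter (fun g : M → Fin (n ^ 2) =>
        ¬ (∃ σ : Fin n → Fin (n ^ 2), Function.Injective σ ∧
          (1 / (n : ℝ) ^ 2) ^ n * ∏ i, v i (O i) ≤
            ∏ i, v i (Finset.univ.filter (fun x => g x = σ i))))).card : ℝ) = T := by
    rw [← hTcard, ← Finset.card_univ]
    exact_mod_cast hsplit
  have hgoal : (1 / 2 : ℝ) * ((n : ℝ) ^ 2) ^ (Fintype.card M) = T / 2 := by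
    rw [hT_def, hkR]
    ring
  rw [hgoal]
  linarith
end

section
/- Lower tail for subadditive valuations under independent sampling: there exists a constant c > 0 such that the following holds. Let m ≥ 2 be an integer, let S be a finite set with |S| ≤ m, let t > 1 be a real number, and let v : 2^S → ℝ_{≥0} be a subadditive, nondecreasing function with v(∅) = 0. Let S' ⊆ S be a random subset obtained by including every element of S independently with probability 1/t. If v({j}) ≤ v(S)/(c·t·(log m)²) for every j ∈ S, then Pr[ v(S') ≥ v(S)/(c·t·log m) ] > 1 − 1/m², where log denotes the natural logarithm. -/
open scoped Classical

open Finset in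
private lemma sum_split_aux {γ : Type} [DecidableEq γ] (q : ℝ) (s : Finset γ) :
    ∑ T ∈ s.powerset, q ^ T.card * (1 - q) ^ (s.card - T.card) = 1 := by
  have h := (Finset.prod_add (fun _ : γ => q) (fun _ => 1 - q) s).symm
  have h2 : ∑ T ∈ s.powerset, (∏ _i ∈ T, q) * ∏ _i ∈ s \ T, (1 - q)
      = ∑ T ∈ s.powerset, q ^ T.card * (1 - q) ^ (s.card - T.card) := by
    refine Finset.sum_congr rfl fun T hT => ?_
    rw [Finset.prod_const, Finset.prod_const, Finset.card_sdiff_of_subset (Finset.mem_powerset.mp hT)]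
  rw [← h2, h]
  simp

open Finset in
private lemma sum_w_compl_aux {α : Type} [Fintype α] [DecidableEq α] (q : ℝ) (W : Finset α) :
    ∑ T ∈ (Wᶜ).powerset, q ^ T.card * (1 - q) ^ (Fintype.card α - T.card)
      = (1 - q) ^ W.card := by
  have h : ∀ T ∈ (Wᶜ).powerset, q ^ T.card * (1 - q) ^ (Fintype.card α - T.card)
      = (1 - q) ^ W.card * (q ^ T.card * (1 - q) ^ ((Wᶜ).card - T.card)) := by
    intro T hT
    have h1 : T.card ≤ (Wᶜ).card := Finset.card_le_card (Finset.mem_powerset.mp hT)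
    have h2 : (Wᶜ).card = Fintype.card α - W.card := Finset.card_compl W
    have h3 : W.card ≤ Fintype.card α := Finset.card_le_univ W
    have h4 : Fintype.card α - T.card = W.card + ((Wᶜ).card - T.card) := by omega
    rw [h4, pow_add]; ring
  rw [Finset.sum_congr rfl h, ← Finset.mul_sum, sum_split_aux, mul_one]

private lemma sum_le_sum_biUnion_aux {γ δ : Type*} [DecidableEq δ] (s : Finset γ)
    (E : γ → Finset δ) (f : δ → ℝ) (hf : ∀ x, 0 ≤ f x) :
    ∑ x ∈ s.biUnion E, f x ≤ ∑ i ∈ s, ∑ x ∈ E i, f x := by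
  classical
  induction s using Finset.induction with
  | empty => simp
  | @insert a s ha ih =>
    rw [Finset.biUnion_insert, Finset.sum_insert ha]
    have h1 := Finset.sum_union_inter (s₁ := E a) (s₂ := s.biUnion E) (f := f)
    have h2 : 0 ≤ ∑ x ∈ E a ∩ s.biUnion E, f x := Finset.sum_nonneg fun x _ => hf x
    linarith

set_option maxHeartbeats 1000000

/-- Lower tail for subadditive valuations under independent sampling: there is a
universal constant `c > 0` such that if `v` is a subadditive nondecreasing valuation on
a ground set of at most `m` elements with no single element worth more than
`v(S)/(c·t·(log m)²)`, then a random subset keeping each element independently with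
probability `1/t` has value at least `v(S)/(c·t·log m)` with probability more than
`1 − 1/m²`.  The probability is written out as a sum of Bernoulli product weights. -/
theorem subadditive_lower_tail :
    ∃ c : ℝ, 0 < c ∧
      ∀ (m : ℕ) (α : Type) [Fintype α] [DecidableEq α] (t : ℝ) (v : Finset α → ℝ),
        2 ≤ m → Fintype.card α ≤ m → 1 < t →
        v ∅ = 0 →
        (∀ A : Finset α, 0 ≤ v A) →
        (∀ A B : Finset α, A ⊆ B → v A ≤ v B) →
        (∀ A B : Finset α, v (A ∪ B) ≤ v A + v B) →
        (∀ j : α, v {j} ≤ v Finset.univ / (c * t * Real.log m ^ 2)) →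
        1 - 1 / (m : ℝ) ^ 2 <
          ∑ T ∈ Finset.univ.filter
              (fun T : Finset α => v Finset.univ / (c * t * Real.log m) ≤ v T),
            (1 / t) ^ T.card * (1 - 1 / t) ^ (Fintype.card α - T.card) := by
  refine ⟨100, by norm_num, ?_⟩
  intro m α _ _ t v hm hcard ht hv0 hvnn hmono hsub hsingle
  have hm2 : (2 : ℝ) ≤ (m : ℝ) := by exact_mod_cast hm
  have hm0 : (0 : ℝ) < (m : ℝ) := by linarith
  set n := Fintype.card α with hn
  set L := Real.log m with hLdef
  have hlog2pos : (0 : ℝ) < Real.log 2 := Real.log_pos (by norm_num)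
  have hlog2 : Real.log 2 ≤ L := Real.log_le_log (by norm_num) hm2
  have hLpos : 0 < L := lt_of_lt_of_le hlog2pos hlog2
  have ht0 : (0 : ℝ) < t := by linarith
  have hq0 : (0 : ℝ) < 1 / t := by positivity
  have hq1 : 1 / t < 1 := by rw [div_lt_one ht0]; linarith
  have h1q0 : (0 : ℝ) ≤ 1 - 1 / t := by linarith
  set w : Finset α → ℝ := fun T => (1 / t) ^ T.card * (1 - 1 / t) ^ (n - T.card) with hw
  have hwnn : ∀ T, 0 ≤ w T := fun T => by
    exact mul_nonneg (pow_nonneg hq0.le _) (pow_nonneg h1q0 _)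
  have htotal : ∑ T : Finset α, w T = 1 := by
    rw [← Finset.powerset_univ]
    have h := sum_split_aux (1 / t) (Finset.univ : Finset α)
    rw [Finset.card_univ] at h
    exact h
  set θ := v Finset.univ / (100 * t * L) with hθ
  have hsplit := Finset.sum_filter_add_sum_filter_not Finset.univ
    (fun T : Finset α => θ ≤ v T) w
  have key : ∑ T ∈ Finset.univ.filter (fun T : Finset α => ¬ θ ≤ v T), w T
      < 1 / (m : ℝ) ^ 2 := by
    set p := ∑ T ∈ Finset.univ.filter (fun T : Finset α => ¬ θ ≤ v T), w T with hp
    have hpnn : 0 ≤ p := Finset.sum_nonneg fun T _ => hwnn T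
    have hm2pos : (0:ℝ) < 1 / (m:ℝ)^2 := by positivity
    by_cases hV : v Finset.univ = 0
    · have hempty : Finset.univ.filter (fun T : Finset α => ¬ θ ≤ v T) = ∅ := by
        refine Finset.filter_false_of_mem fun T _ => ?_
        rw [not_not]
        rw [hθ, hV, zero_div]
        exact hvnn T
      rw [hp, hempty, Finset.sum_empty]
      exact hm2pos
    have hVpos : 0 < v Finset.univ := (hvnn _).lt_of_ne (Ne.symm hV)
    -- number of samples
    set k := ⌈2 * t * L⌉₊ with hk
    have htL : (0:ℝ) < 2 * t * L := by positivity
    have hkreal : 2 * t * L ≤ (k : ℝ) := Nat.le_ceil _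
    have hk1 : 0 < k := Nat.ceil_pos.mpr htL
    have hkub : (k : ℝ) ≤ 3.5 * t * L := by
      have h1 : (k : ℝ) < 2 * t * L + 1 := Nat.ceil_lt_add_one htL.le
      have h2 : (1:ℝ) ≤ 1.5 * L := by nlinarith [Real.log_two_gt_d9]
      nlinarith
    set R := 50 * t * L ^ 2 with hR
    have hRpos : (0:ℝ) < R := by positivity
    set r := ⌊R⌋₊ + 1 with hr
    have hrR : R < (r : ℝ) := by
      rw [hr]; push_cast; exact Nat.lt_floor_add_one R
    set Bad := Finset.univ.filter (fun T : Finset α => ¬ θ ≤ v T) with hBad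
    -- p^k as a sum over tuples of samples
    have hpk : p ^ k = ∑ g ∈ Fintype.piFinset (fun _ : Fin k => Bad),
        ∏ i : Fin k, w (g i) := by
      rw [← Finset.prod_univ_sum]
      simp [hp]
    -- subadditivity over finite sup
    have hsup_le : ∀ (s : Finset (Fin k)) (g : Fin k → Finset α),
        v (s.sup g) ≤ ∑ i ∈ s, v (g i) := by
      intro s g
      induction s using Finset.induction with
      | empty => simp [hv0]
      | @insert a s ha ih =>
        rw [Finset.sup_insert, Finset.sum_insert ha]
        calc v (g a ⊔ s.sup g) ≤ v (g a) + v (s.sup g) := hsub _ _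
          _ ≤ v (g a) + ∑ i ∈ s, v (g i) := by linarith
    -- value bounded by sum of singletons
    have hsing_sum : ∀ B : Finset α, v B ≤ ∑ j ∈ B, v {j} := by
      intro B
      induction B using Finset.induction with
      | empty => simp [hv0]
      | @insert a B ha ih =>
        rw [Finset.sum_insert ha, Finset.insert_eq]
        calc v ({a} ∪ B) ≤ v {a} + v B := hsub _ _
          _ ≤ v {a} + ∑ j ∈ B, v {j} := by linarith
    -- deterministic core: all-bad tuples leave many elements uncovered
    have hdet : ∀ g : Fin k → Finset α, (∀ i, g i ∈ Bad) →
        ∃ W ∈ Finset.powersetCard r (Finset.univ : Finset α),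
          ∀ i, g i ∈ (Wᶜ).powerset := by
      intro g hg
      set U := Finset.univ.sup g with hU
      have hvals : ∀ i : Fin k, v (g i) < θ := by
        intro i
        have := hg i
        rw [hBad, Finset.mem_filter] at this
        exact lt_of_not_ge this.2
      have h1 : v Finset.univ ≤ v U + v (Uᶜ) := by
        calc v Finset.univ = v (U ∪ Uᶜ) := by rw [Finset.union_compl]
          _ ≤ v U + v (Uᶜ) := hsub _ _
      have h2 : v U < (k : ℝ) * θ := by
        have hne : (Finset.univ : Finset (Fin k)).Nonempty := by
          have : Nonempty (Fin k) := ⟨⟨0, hk1⟩⟩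
          exact Finset.univ_nonempty
        have := Finset.sum_lt_sum_of_nonempty hne (fun i _ => hvals i)
        have hsum : ∑ _i : Fin k, θ = (k : ℝ) * θ := by
          rw [Finset.sum_const, Finset.card_univ, Fintype.card_fin, nsmul_eq_mul]
        calc v U ≤ ∑ i : Fin k, v (g i) := hsup_le _ _
          _ < ∑ _i : Fin k, θ := this
          _ = (k : ℝ) * θ := hsum
      have h3 : v (Uᶜ) ≤ ((Uᶜ).card : ℝ) * (v Finset.univ / (100 * t * L ^ 2)) := by
        calc v (Uᶜ) ≤ ∑ j ∈ Uᶜ, v {j} := hsing_sum _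
          _ ≤ (Uᶜ).card • (v Finset.univ / (100 * t * L ^ 2)) :=
            Finset.sum_le_card_nsmul _ _ _ (fun j _ => hsingle j)
          _ = ((Uᶜ).card : ℝ) * (v Finset.univ / (100 * t * L ^ 2)) := by
            rw [nsmul_eq_mul]
      -- conclude R < card of uncovered set
      set X := ((Uᶜ).card : ℝ) with hX
      have hXnn : (0:ℝ) ≤ X := Nat.cast_nonneg _
      have h4 : v Finset.univ < (k:ℝ) * θ + X * (v Finset.univ / (100 * t * L ^ 2)) := by
        linarith
      have h5 : (k:ℝ) * θ ≤ 0.035 * v Finset.univ := by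
        have h100 : (0:ℝ) < 100 * t * L := by positivity
        rw [hθ, ← mul_div_assoc, div_le_iff₀ h100]
        calc (k:ℝ) * v Finset.univ ≤ 3.5 * t * L * v Finset.univ :=
            mul_le_mul_of_nonneg_right hkub hVpos.le
          _ = 0.035 * v Finset.univ * (100 * t * L) := by ring
      have h6 : 0.965 * v Finset.univ < X * (v Finset.univ / (100 * t * L ^ 2)) := by
        linarith
      have h7 : R < X := by
        have hden : (0:ℝ) < 100 * t * L ^ 2 := by positivity
        rw [← mul_div_assoc, lt_div_iff₀ hden] at h6
        have h6' : 0.965 * (100 * t * L ^ 2) * v Finset.univ < X * v Finset.univ := by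
          calc 0.965 * (100 * t * L ^ 2) * v Finset.univ
              = 0.965 * v Finset.univ * (100 * t * L ^ 2) := by ring
            _ < X * v Finset.univ := h6
        have h6'' : 0.965 * (100 * t * L ^ 2) < X :=
          lt_of_mul_lt_mul_right h6' hVpos.le
        have htL2 : (0:ℝ) < t * L ^ 2 := by positivity
        rw [hR]
        nlinarith [htL2]
      have h8 : r ≤ (Uᶜ).card := by
        have := (Nat.floor_lt hRpos.le).mpr h7
        omega
      obtain ⟨W, hWsub, hWcard⟩ := Finset.exists_subset_card_eq h8
      refine ⟨W, Finset.mem_powersetCard.mpr ⟨Finset.subset_univ _, hWcard⟩, ?_⟩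
      intro i
      rw [Finset.mem_powerset]
      have hU_sub : U ⊆ Wᶜ := Finset.subset_compl_comm.mp hWsub
      exact (Finset.le_sup (Finset.mem_univ i)).trans hU_sub
    -- union bound
    have hsubE : Fintype.piFinset (fun _ : Fin k => Bad) ⊆
        (Finset.powersetCard r (Finset.univ : Finset α)).biUnion
          (fun W => Fintype.piFinset (fun _ : Fin k => (Wᶜ).powerset)) := by
      intro g hg
      rw [Fintype.mem_piFinset] at hg
      obtain ⟨W, hW1, hW2⟩ := hdet g hg
      exact Finset.mem_biUnion.mpr ⟨W, hW1, Fintype.mem_piFinset.mpr hW2⟩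
    have hprodnn : ∀ g : Fin k → Finset α, 0 ≤ ∏ i : Fin k, w (g i) :=
      fun g => Finset.prod_nonneg fun i _ => hwnn _
    have hbound1 : p ^ k ≤ ∑ W ∈ Finset.powersetCard r (Finset.univ : Finset α),
        ∑ g ∈ Fintype.piFinset (fun _ : Fin k => (Wᶜ).powerset), ∏ i : Fin k, w (g i) := by
      rw [hpk]
      refine le_trans (Finset.sum_le_sum_of_subset_of_nonneg hsubE
        (fun g _ _ => hprodnn g)) ?_
      exact sum_le_sum_biUnion_aux _ _ _ hprodnn
    have hWsum : ∀ W ∈ Finset.powersetCard r (Finset.univ : Finset α),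
        ∑ g ∈ Fintype.piFinset (fun _ : Fin k => (Wᶜ).powerset), ∏ i : Fin k, w (g i)
          = ((1 - 1/t) ^ r) ^ k := by
      intro W hW
      have hWcard : W.card = r := (Finset.mem_powersetCard.mp hW).2
      have hcomp : ∑ T ∈ (Wᶜ).powerset, w T = (1 - 1/t) ^ r := by
        rw [hw]
        rw [← hWcard]
        exact sum_w_compl_aux (1/t) W
      rw [← Finset.prod_univ_sum]
      simp [hcomp]
    have hbound2 : p ^ k ≤ (m : ℝ) ^ r * ((1 - 1/t) ^ k) ^ r := by
      refine hbound1.trans ?_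
      rw [Finset.sum_congr rfl hWsum, Finset.sum_const, nsmul_eq_mul]
      rw [Finset.card_powersetCard, Finset.card_univ]
      have hc1 : (n.choose r : ℝ) ≤ (m : ℝ) ^ r := by
        calc (n.choose r : ℝ) ≤ ((n ^ r : ℕ) : ℝ) := by exact_mod_cast Nat.choose_le_pow n r
          _ ≤ (m : ℝ) ^ r := by
            push_cast
            exact pow_le_pow_left₀ (Nat.cast_nonneg n) (by exact_mod_cast hcard) r
      have hpow : ((1 - 1/t) ^ r) ^ k = ((1 - 1/t) ^ k) ^ r := by
        rw [← pow_mul, ← pow_mul, Nat.mul_comm]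
      rw [hpow]
      exact mul_le_mul_of_nonneg_right hc1 (by positivity)
    -- exponential bound
    have hexp : (1 - 1/t) ^ k ≤ 1 / (m : ℝ) ^ 2 := by
      have h1 : 1 - 1/t ≤ Real.exp (-(1/t)) := by
        have := Real.add_one_le_exp (-(1/t)); linarith
      have h2 : (1 - 1/t) ^ k ≤ Real.exp (-(1/t)) ^ k := pow_le_pow_left₀ h1q0 h1 k
      rw [← Real.exp_nat_mul] at h2
      have h3 : Real.exp ((k:ℝ) * -(1/t)) ≤ Real.exp (-(2 * L)) := by
        rw [Real.exp_le_exp]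
        rw [mul_neg, neg_le_neg_iff, mul_one_div, le_div_iff₀ ht0]
        linarith
      have h4 : Real.exp (-(2 * L)) = 1 / (m : ℝ) ^ 2 := by
        rw [Real.exp_neg, hLdef]
        rw [two_mul, Real.exp_add, Real.exp_log hm0]
        rw [one_div, sq]
      linarith
    have hbase : (m : ℝ) * (1 - 1/t) ^ k ≤ 1 / (m : ℝ) := by
      calc (m : ℝ) * (1 - 1/t) ^ k ≤ (m : ℝ) * (1 / (m:ℝ)^2) :=
          mul_le_mul_of_nonneg_left hexp hm0.le
        _ = 1 / (m : ℝ) := by field_simp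
    have hbound3 : p ^ k ≤ (1 / (m : ℝ)) ^ r := by
      calc p ^ k ≤ (m : ℝ) ^ r * ((1 - 1/t) ^ k) ^ r := hbound2
        _ = ((m : ℝ) * (1 - 1/t) ^ k) ^ r := by rw [mul_pow]
        _ ≤ (1 / (m : ℝ)) ^ r :=
          pow_le_pow_left₀ (by positivity) hbase r
    -- r > 2k
    have hr2k : 2 * k < r := by
      have h1 : (2 * (k:ℝ)) ≤ 7 * t * L := by linarith
      have h2 : 7 * t * L < R := by nlinarith [Real.log_two_gt_d9]
      have : (2 * (k:ℝ)) < (r : ℝ) := by linarith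
      exact_mod_cast this
    have hfin : (1 / (m : ℝ)) ^ r < (1 / (m : ℝ) ^ 2) ^ k := by
      have hb0 : (0:ℝ) < 1 / (m : ℝ) := by positivity
      have hb1 : 1 / (m : ℝ) < 1 := by rw [div_lt_one hm0]; linarith
      have := pow_lt_pow_right_of_lt_one₀ hb0 hb1 hr2k
      calc (1 / (m : ℝ)) ^ r < (1 / (m : ℝ)) ^ (2 * k) := this
        _ = (1 / (m : ℝ) ^ 2) ^ k := by
          rw [pow_mul, div_pow, one_pow]
    by_contra hcon
    push_neg at hcon
    have hle : (1 / (m : ℝ) ^ 2) ^ k ≤ p ^ k := pow_le_pow_left₀ hm2pos.le hcon k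
    linarith
  have hm2pos : (0:ℝ) < 1 / (m:ℝ)^2 := by positivity
  rw [htotal] at hsplit
  have hgnn : 0 ≤ ∑ T ∈ Finset.univ.filter (fun T : Finset α => θ ≤ v T), w T :=
    Finset.sum_nonneg fun T _ => hwnn T
  linarith
end

section
/- Random partition into 2n bundles combined with singletons: there exists a constant C > 0 such that the following holds. Let M be a finite set of m ≥ 2 items, n ≥ 1 players with subadditive, nondecreasing valuations v₁,…,vₙ : 2^M → ℝ_{≥0} with vᵢ(∅) = 0, and let (O₁,…,Oₙ) be any allocation of M. Let g : M → {1,…,2n} be random, where each item is assigned to one of the 2n bundles uniformly and independently. Then with probability at least 1 − 1/m over g, there exist pairwise disjoint sets A₁,…,Aₙ ⊆ M, where each Aᵢ is either a singleton {x} for some x ∈ M or equals g⁻¹(jᵢ) for some jᵢ ∈ {1,…,2n} (with the indices jᵢ pairwise distinct among players receiving whole bundles), such that ∏ᵢ vᵢ(Aᵢ) ≥ (1/(C·n·(log m)²))ⁿ · ∏ᵢ vᵢ(Oᵢ), where log denotes the natural logarithm. -/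
set_option maxHeartbeats 8000000

open scoped Classical
open Finset

section Aux
set_option linter.unusedSectionVars false

variable {M F : Type} [Fintype M] [DecidableEq M] [Fintype F] [DecidableEq F]

/-- `E` is determined by the coordinates in `S`. -/
def DetOn (S : Finset M) (E : Finset (M → F)) : Prop :=
  ∀ g g' : M → F, (∀ x ∈ S, g x = g' x) → g ∈ E → g' ∈ E

lemma detOn_mono {S S' : Finset M} {E : Finset (M → F)} (h : S ⊆ S') (hE : DetOn S E) :
    DetOn S' E := fun g g' hag => hE g g' (fun x hx => hag x (h hx))

lemma det_card_inter_mul (S : Finset M) (E Fe : Finset (M → F))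
    (hE : DetOn S E) (hF : DetOn Sᶜ Fe) :
    (E ∩ Fe).card * Fintype.card (M → F) = E.card * Fe.card := by
  classical
  have key : ((E ∩ Fe) ×ˢ (univ : Finset (M → F))).card = (E ×ˢ Fe).card := by
    apply Finset.card_nbij'
      (i := fun p => (fun x => if x ∈ S then p.1 x else p.2 x,
                      fun x => if x ∈ S then p.2 x else p.1 x))
      (j := fun p => (fun x => if x ∈ S then p.1 x else p.2 x,
                      fun x => if x ∈ S then p.2 x else p.1 x))
    · rintro ⟨c, d⟩ hp
      simp only [Finset.mem_coe, Finset.mem_product, Finset.mem_inter] at hp ⊢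
      obtain ⟨⟨hcE, hcF⟩, -⟩ := hp
      constructor
      · exact hE c _ (fun x hx => by simp [hx]) hcE
      · refine hF c _ (fun x hx => ?_) hcF
        simp [Finset.mem_compl.mp hx]
    · rintro ⟨g, h⟩ hp
      simp only [Finset.mem_coe, Finset.mem_product, Finset.mem_inter] at hp ⊢
      obtain ⟨hgE, hhF⟩ := hp
      refine ⟨⟨?_, ?_⟩, Finset.mem_univ _⟩
      · exact hE g _ (fun x hx => by simp [hx]) hgE
      · refine hF h _ (fun x hx => ?_) hhF
        simp [Finset.mem_compl.mp hx]
    · rintro ⟨c, d⟩ -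
      refine Prod.ext ?_ ?_ <;> funext x <;> by_cases hx : x ∈ S <;> simp [hx]
    · rintro ⟨g, h⟩ -
      refine Prod.ext ?_ ?_ <;> funext x <;> by_cases hx : x ∈ S <;> simp [hx]
  simpa [Finset.card_product, Finset.card_univ, mul_comm] using key

lemma detOn_filter_forall {ι : Type} (s : Finset ι) (S : ι → Finset M)
    (E : ι → Finset (M → F)) (U : Finset M)
    (hsub : ∀ t ∈ s, S t ⊆ U) (hdet : ∀ t ∈ s, DetOn (S t) (E t)) :
    DetOn U (univ.filter (fun g : M → F => ∀ t ∈ s, g ∈ E t)) := by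
  intro g g' hag hg
  simp only [Finset.mem_filter, Finset.mem_univ, true_and] at hg ⊢
  intro t ht
  exact hdet t ht g g' (fun x hx => hag x (hsub t ht hx)) (hg t ht)

lemma det_card_inter_family {ι : Type} (s : Finset ι)
    (S : ι → Finset M) (E : ι → Finset (M → F))
    (hdisj : ∀ t ∈ s, ∀ t' ∈ s, t ≠ t' → Disjoint (S t) (S t'))
    (hdet : ∀ t ∈ s, DetOn (S t) (E t)) :
    (univ.filter (fun g : M → F => ∀ t ∈ s, g ∈ E t)).card
        * Fintype.card (M → F) ^ s.card
      ≤ Fintype.card (M → F) * ∏ t ∈ s, (E t).card := by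
  classical
  induction s using Finset.cons_induction with
  | empty => simp
  | cons a s ha ih =>
    have hrest : (univ.filter (fun g : M → F => ∀ t ∈ Finset.cons a s ha, g ∈ E t))
        = E a ∩ (univ.filter (fun g : M → F => ∀ t ∈ s, g ∈ E t)) := by
      ext g
      simp only [Finset.mem_filter, Finset.mem_univ, true_and, Finset.mem_inter,
        Finset.mem_cons]
      constructor
      · intro h; exact ⟨h a (Or.inl rfl), fun t ht => h t (Or.inr ht)⟩
      · rintro ⟨h1, h2⟩ t (rfl | ht); exacts [h1, h2 t ht]
    have hdetrest : DetOn (S a)ᶜ (univ.filter (fun g : M → F => ∀ t ∈ s, g ∈ E t)) := by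
      refine detOn_filter_forall s S E (S a)ᶜ (fun t ht => ?_)
        (fun t ht => hdet t (Finset.mem_cons.mpr (Or.inr ht)))
      intro x hx
      simp only [Finset.mem_compl]
      intro hxa
      exact (Finset.disjoint_left.mp (hdisj a (Finset.mem_cons_self a s) t
        (Finset.mem_cons.mpr (Or.inr ht)) (by rintro rfl; exact ha ht)) hxa) hx
    have hsplit := det_card_inter_mul (S a) (E a)
      (univ.filter (fun g : M → F => ∀ t ∈ s, g ∈ E t))
      (hdet a (Finset.mem_cons_self a s)) hdetrest
    rw [hrest, Finset.card_cons, Finset.prod_cons, pow_succ]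
    have ih' := ih
      (fun t ht t' ht' htt' => hdisj t (Finset.mem_cons.mpr (Or.inr ht)) t'
        (Finset.mem_cons.mpr (Or.inr ht')) htt')
      (fun t ht => hdet t (Finset.mem_cons.mpr (Or.inr ht)))
    set N := Fintype.card (M → F)
    set R := (univ.filter (fun g : M → F => ∀ t ∈ s, g ∈ E t))
    calc (E a ∩ R).card * (N ^ s.card * N)
        = ((E a ∩ R).card * N) * N ^ s.card := by ring
      _ = ((E a).card * R.card) * N ^ s.card := by rw [hsplit]
      _ = (E a).card * (R.card * N ^ s.card) := by ring
      _ ≤ (E a).card * (N * ∏ t ∈ s, (E t).card) := Nat.mul_le_mul_left _ ih'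
      _ = N * ((E a).card * ∏ t ∈ s, (E t).card) := by ring
end Aux

section Aux2
set_option linter.unusedSectionVars false
variable {M F : Type} [Fintype M] [DecidableEq M] [Fintype F] [DecidableEq F]

lemma half_count (T : Finset F) (hT : 2 * T.card = Fintype.card F)
    (v : Finset M → ℝ) (hsub : ∀ A B : Finset M, v (A ∪ B) ≤ v A + v B)
    (Q : Finset M) (h : ℝ) (hh : 2 * h ≤ v Q) :
    2 * (univ.filter (fun g : M → F => v (Q.filter (fun x => g x ∈ T)) < h)).card
      ≤ Fintype.card (M → F) := by
  classical
  have hcard : Fintype.card {x // x ∈ T} = Fintype.card {x // x ∈ Tᶜ} := by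
    simp only [Fintype.card_coe, Finset.card_compl]
    omega
  let e := Fintype.equivOfCardEq hcard
  let σ : F → F := fun j => if hj : j ∈ T then (e ⟨j, hj⟩ : F)
    else (e.symm ⟨j, Finset.mem_compl.mpr hj⟩ : F)
  have hσT : ∀ j (hj : j ∈ T), σ j = (e ⟨j, hj⟩ : F) := fun j hj => dif_pos hj
  have hσTc : ∀ j (hj : j ∉ T), σ j = (e.symm ⟨j, Finset.mem_compl.mpr hj⟩ : F) :=
    fun j hj => dif_neg hj
  have hmemT : ∀ j, j ∈ T → σ j ∉ T := by
    intro j hj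
    rw [hσT j hj]
    exact Finset.mem_compl.mp (e ⟨j, hj⟩).2
  have hmemTc : ∀ j, j ∉ T → σ j ∈ T := by
    intro j hj
    rw [hσTc j hj]
    exact (e.symm ⟨j, Finset.mem_compl.mpr hj⟩).2
  have hσinj : Function.Injective σ := by
    have hinv : ∀ j, σ (σ j) = j := by
      intro j
      by_cases hj : j ∈ T
      · have h1 : (e ⟨j, hj⟩ : F) ∉ T := Finset.mem_compl.mp (e ⟨j, hj⟩).2
        rw [hσT j hj, hσTc _ h1]
        have heq : (⟨(e ⟨j, hj⟩ : F), Finset.mem_compl.mpr h1⟩ : {x // x ∈ Tᶜ})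
            = e ⟨j, hj⟩ := Subtype.ext rfl
        rw [heq, Equiv.symm_apply_apply]
      · have h1 : (e.symm ⟨j, Finset.mem_compl.mpr hj⟩ : F) ∈ T :=
          (e.symm ⟨j, Finset.mem_compl.mpr hj⟩).2
        rw [hσTc j hj, hσT _ h1]
        have heq : (⟨(e.symm ⟨j, Finset.mem_compl.mpr hj⟩ : F), h1⟩ : {x // x ∈ T})
            = e.symm ⟨j, Finset.mem_compl.mpr hj⟩ := Subtype.ext rfl
        rw [heq, Equiv.apply_symm_apply]
    intro a b hab
    have := congrArg σ hab
    rwa [hinv, hinv] at this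
  set Bad := univ.filter (fun g : M → F => v (Q.filter (fun x => g x ∈ T)) < h) with hBad
  have hmaps : ∀ g ∈ Bad, (fun x => σ (g x)) ∈ univ \ Bad := by
    intro g hg
    simp only [hBad, Finset.mem_filter, Finset.mem_univ, true_and] at hg
    simp only [Finset.mem_sdiff, Finset.mem_univ, true_and, hBad, Finset.mem_filter,
      not_and, not_lt]
    have hfilter : Q.filter (fun x => σ (g x) ∈ T) = Q.filter (fun x => g x ∉ T) := by
      apply Finset.filter_congr
      intro x hx
      constructor
      · intro hσx hgx; exact hmemT _ hgx hσx
      · intro hgx; exact hmemTc _ hgx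
    rw [hfilter]
    have hunion : Q.filter (fun x => g x ∈ T) ∪ Q.filter (fun x => g x ∉ T) = Q :=
      Finset.filter_union_filter_not_eq _ Q
    have hs := hsub (Q.filter (fun x => g x ∈ T)) (Q.filter (fun x => g x ∉ T))
    rw [hunion] at hs
    linarith
  have hinj : Set.InjOn (fun g : M → F => fun x => σ (g x)) Bad := by
    intro g1 _ g2 _ heq
    funext x
    exact hσinj (congrFun heq x)
  have hle : Bad.card ≤ (univ \ Bad).card :=
    Finset.card_le_card_of_injOn _ hmaps hinj
  have h2 : (univ \ Bad).card = Fintype.card (M → F) - Bad.card := by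
    rw [Finset.card_sdiff_of_subset (Finset.subset_univ _), Finset.card_univ]
  have h3 : Bad.card ≤ Fintype.card (M → F) := by
    rw [← Finset.card_univ]; exact Finset.card_le_card (Finset.subset_univ _)
  omega

lemma sum_agree (D : Finset M) :
    ∑ b ∈ D.pi (fun _ => (univ : Finset F)),
      (univ.filter (fun g : M → F => ∀ x (hx : x ∈ D), g x = b x hx)).card
      = Fintype.card (M → F) := by
  classical
  rw [← Finset.card_biUnion]
  · congr 1
    apply Finset.eq_univ_of_forall
    intro g
    rw [Finset.mem_biUnion]
    refine ⟨fun x _ => g x, ?_, ?_⟩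
    · rw [Finset.mem_pi]; intro a ha; exact Finset.mem_univ _
    · simp
  · intro b1 h1 b2 h2 hne
    rw [Function.onFun, Finset.disjoint_left]
    intro g hg1 hg2
    simp only [Finset.mem_filter, Finset.mem_univ, true_and] at hg1 hg2
    apply hne
    funext x hx
    rw [← hg1 x hx, hg2 x hx]

lemma v_filter_le_sum (v : Finset M → ℝ) (hv0 : v ∅ = 0)
    (hsub : ∀ A B : Finset M, v (A ∪ B) ≤ v A + v B)
    (S : Finset M) (g : M → F) (T : Finset F) :
    v (S.filter (fun x => g x ∈ T)) ≤ ∑ j ∈ T, v (S.filter (fun x => g x = j)) := by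
  classical
  induction T using Finset.cons_induction with
  | empty => simp [hv0]
  | cons j T hj ih =>
    have hsplit : S.filter (fun x => g x ∈ Finset.cons j T hj)
        = S.filter (fun x => g x = j) ∪ S.filter (fun x => g x ∈ T) := by
      ext x
      simp only [Finset.mem_filter, Finset.mem_union, Finset.mem_cons]
      tauto
    rw [hsplit, Finset.sum_cons]
    calc v (S.filter (fun x => g x = j) ∪ S.filter (fun x => g x ∈ T))
        ≤ v (S.filter (fun x => g x = j)) + v (S.filter (fun x => g x ∈ T)) := hsub _ _
      _ ≤ _ := by linarith

lemma exists_chunks (v : Finset M → ℝ) (hv0 : v ∅ = 0)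
    (hmono : ∀ A B : Finset M, A ⊆ B → v A ≤ v B)
    (hsub : ∀ A B : Finset M, v (A ∪ B) ≤ v A + v B)
    (τ δ : ℝ) (hδ : 0 < δ) (hτ : 0 < τ) :
    ∀ (K : ℕ) (O : Finset M), (∀ x ∈ O, v {x} < τ) → (K : ℝ) * (δ + τ) ≤ v O →
    ∃ Q : ℕ → Finset M, (∀ l < K, Q l ⊆ O ∧ δ ≤ v (Q l)) ∧
      (∀ l < K, ∀ l' < K, l ≠ l' → Disjoint (Q l) (Q l')) := by
  intro K
  induction K with
  | zero => intro O _ _; exact ⟨fun _ => ∅, by omega, by omega⟩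
  | succ K ih =>
    intro O hsing hval
    have hOδ : δ ≤ v O := by
      have : (1 : ℝ) ≤ (K + 1 : ℕ) := by exact_mod_cast Nat.one_le_iff_ne_zero.mpr (by omega)
      nlinarith
    -- minimal subset of O with value ≥ δ
    have hne : (O.powerset.filter (fun Q => δ ≤ v Q)).Nonempty :=
      ⟨O, by simp [Finset.mem_powerset, hOδ]⟩
    obtain ⟨Q₀, hQ₀mem, hQ₀min⟩ := Finset.exists_min_image _ Finset.card hne
    simp only [Finset.mem_filter, Finset.mem_powerset] at hQ₀mem
    obtain ⟨hQ₀O, hQ₀δ⟩ := hQ₀mem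
    have hQ₀ne : Q₀.Nonempty := by
      rcases Finset.eq_empty_or_nonempty Q₀ with rfl | h
      · exfalso; rw [hv0] at hQ₀δ; linarith
      · exact h
    obtain ⟨x₀, hx₀⟩ := hQ₀ne
    have hQ₀up : v Q₀ < δ + τ := by
      have herase : v (Q₀.erase x₀) < δ := by
        by_contra hcon
        push_neg at hcon
        have hmem : Q₀.erase x₀ ∈ O.powerset.filter (fun Q => δ ≤ v Q) := by
          simp only [Finset.mem_filter, Finset.mem_powerset]
          exact ⟨(Finset.erase_subset _ _).trans hQ₀O, hcon⟩
        have := hQ₀min _ hmem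
        have := Finset.card_erase_lt_of_mem hx₀
        omega
      have hins : Q₀ = {x₀} ∪ Q₀.erase x₀ := by
        rw [← Finset.insert_eq, Finset.insert_erase hx₀]
      calc v Q₀ = v ({x₀} ∪ Q₀.erase x₀) := by rw [← hins]
        _ ≤ v {x₀} + v (Q₀.erase x₀) := hsub _ _
        _ < τ + δ := by
            have := hsing x₀ (hQ₀O hx₀)
            linarith
        _ = δ + τ := by ring
    -- recurse
    have hrest : (K : ℝ) * (δ + τ) ≤ v (O \ Q₀) := by
      have hun : Q₀ ∪ (O \ Q₀) = O := Finset.union_sdiff_of_subset hQ₀O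
      have := hsub Q₀ (O \ Q₀)
      rw [hun] at this
      have hK1 : ((K + 1 : ℕ) : ℝ) = (K : ℝ) + 1 := by push_cast; ring
      rw [hK1] at hval
      nlinarith
    obtain ⟨Q, hQ1, hQ2⟩ := ih (O \ Q₀) (fun x hx => hsing x (Finset.mem_sdiff.mp hx).1) hrest
    refine ⟨fun l => if l = 0 then Q₀ else Q (l - 1), ?_, ?_⟩
    · intro l hl
      by_cases h0 : l = 0
      · simp only [h0, if_pos rfl]; exact ⟨hQ₀O, hQ₀δ⟩
      · simp only [if_neg h0]
        have hl' : l - 1 < K := by omega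
        exact ⟨(hQ1 _ hl').1.trans (Finset.sdiff_subset), (hQ1 _ hl').2⟩
    · intro l hl l' hl' hne'
      by_cases h0 : l = 0 <;> by_cases h0' : l' = 0
      · omega
      · simp only [h0, if_pos rfl, if_neg h0']
        exact Finset.disjoint_sdiff.mono_right (hQ1 _ (by omega : l' - 1 < K)).1
      · simp only [h0', if_pos rfl, if_neg h0]
        exact (Finset.disjoint_sdiff.mono_right (hQ1 _ (by omega : l - 1 < K)).1).symm
      · simp only [if_neg h0, if_neg h0']
        exact hQ2 _ (by omega) _ (by omega) (by omega)

lemma one_add_pow_le (x : ℝ) (hx : 0 ≤ x) :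
    ∀ ℓ : ℕ, (ℓ : ℝ) * x ≤ 1 / 2 → (1 + x) ^ ℓ ≤ 1 + 2 * ℓ * x := by
  intro ℓ
  induction ℓ with
  | zero => intro _; norm_num
  | succ ℓ ih =>
    intro h
    have hℓ : (ℓ : ℝ) * x ≤ 1 / 2 := by
      have : (ℓ : ℝ) ≤ (ℓ + 1 : ℕ) := by push_cast; linarith
      nlinarith
    have hih := ih hℓ
    have hcast : ((ℓ + 1 : ℕ) : ℝ) = (ℓ : ℝ) + 1 := by push_cast; ring
    rw [pow_succ, hcast]
    have h1 : (0:ℝ) ≤ 1 + x := by linarith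
    have h2ℓx : 2 * (ℓ:ℝ) * x * x ≤ x := by nlinarith
    nlinarith [pow_nonneg (by linarith : (0:ℝ) ≤ 1 + x) ℓ]

lemma sum_powerset_pow {ι : Type} [DecidableEq ι] (s : Finset ι) (x : ℝ) :
    ∑ P ∈ s.powerset, x ^ P.card = (1 + x) ^ s.card := by
  classical
  induction s using Finset.induction_on with
  | empty => simp
  | @insert a s ha ih =>
    rw [Finset.powerset_insert, Finset.sum_union, Finset.sum_image, Finset.card_insert_of_notMem ha]
    · have : ∀ P ∈ s.powerset, x ^ (insert a P).card = x * x ^ P.card := by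
        intro P hP
        rw [Finset.card_insert_of_notMem (fun h => ha ((Finset.mem_powerset.mp hP) h)), pow_succ]
        ring
      rw [Finset.sum_congr rfl this, ← Finset.mul_sum, ih, pow_succ]
      ring
    · intro P hP P' hP' heq
      have hP1 := Finset.mem_powerset.mp hP
      have hP2 := Finset.mem_powerset.mp hP'
      have : ∀ R ∈ s.powerset, (insert a R).erase a = R := by
        intro R hR
        rw [Finset.erase_insert_eq_erase, Finset.erase_eq_of_notMem
          (fun h => ha ((Finset.mem_powerset.mp hR) h))]
      rw [← this P hP, ← this P' hP', heq]
    · rw [Finset.disjoint_left]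
      intro P hP hP2
      rw [Finset.mem_image] at hP2
      obtain ⟨R, hR, rfl⟩ := hP2
      exact ha (Finset.mem_powerset.mp hP (Finset.mem_insert_self a R))

end Aux2

/-- Random partition into `2n` bundles combined with singletons: there is a universal
constant `C > 0` such that, assigning each of the `m ≥ 2` items independently and
uniformly to one of `2n` bundles, with probability at least `1 − 1/m` there are pairwise
disjoint sets `A₁,…,Aₙ`, each either a singleton or a whole bundle `g⁻¹(jᵢ)` (with the
bundle indices pairwise distinct among players receiving whole bundles), whose product
of values is at least `(1/(C·n·(log m)²))ⁿ` times that of any fixed allocation. -/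
theorem random_partition_two_n_bundles_with_singletons :
    ∃ C : ℝ, 0 < C ∧
      ∀ (M : Type) [Fintype M] [DecidableEq M] (n : ℕ)
        (v : Fin n → Finset M → ℝ) (O : Fin n → Finset M),
        2 ≤ Fintype.card M → 1 ≤ n →
        (∀ i, v i ∅ = 0) →
        (∀ i S, 0 ≤ v i S) →
        (∀ i, ∀ S T : Finset M, S ⊆ T → v i S ≤ v i T) →
        (∀ i, ∀ S T : Finset M, v i (S ∪ T) ≤ v i S + v i T) →
        (∀ i k : Fin n, i ≠ k → Disjoint (O i) (O k)) →
        (1 - 1 / (Fintype.card M : ℝ)) * ((2 * n : ℝ)) ^ (Fintype.card M) ≤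
          ((Finset.univ.filter (fun g : M → Fin (2 * n) =>
              ∃ (A : Fin n → Finset M) (J : Fin n → Option (Fin (2 * n))),
                (∀ i k : Fin n, i ≠ k → Disjoint (A i) (A k)) ∧
                (∀ i, (J i = none ∧ ∃ x : M, A i = {x}) ∨
                  ∃ j, J i = some j ∧ A i = Finset.univ.filter (fun x => g x = j)) ∧
                (∀ (i k : Fin n) (j : Fin (2 * n)),
                  i ≠ k → J i = some j → J k ≠ some j) ∧
                (1 / (C * n * Real.log (Fintype.card M) ^ 2)) ^ n * ∏ i, v i (O i) ≤
                  ∏ i, v i (A i))).card : ℝ) := by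
  classical
  refine ⟨100, by norm_num, ?_⟩
  intro M _ _ n v O hm hn hv0 hvnn hvmono hvsub hOdis
  set m := Fintype.card M with hmdef
  have hmpos : 0 < m := by omega
  have hmR : (2:ℝ) ≤ (m:ℝ) := by exact_mod_cast hm
  have hmRpos : (0:ℝ) < (m:ℝ) := by linarith
  have hnR : (1:ℝ) ≤ (n:ℝ) := by exact_mod_cast hn
  have hnRpos : (0:ℝ) < (n:ℝ) := by linarith
  have hX : ((univ : Finset (M → Fin (2*n))).card : ℝ) = (2*(n:ℝ))^m := by
    rw [Finset.card_univ, Fintype.card_fun, Fintype.card_fin, ← hmdef]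
    push_cast; ring
  have hXnn : (0:ℝ) ≤ (2*(n:ℝ))^m := by positivity
  by_cases h0 : ∃ i, v i (O i) = 0
  · -- trivial case : every g admits the all-bundles allocation
    obtain ⟨i0, hi0⟩ := h0
    have hall : ∀ g : M → Fin (2 * n),
        ∃ (A : Fin n → Finset M) (J : Fin n → Option (Fin (2 * n))),
          (∀ i k : Fin n, i ≠ k → Disjoint (A i) (A k)) ∧
          (∀ i, (J i = none ∧ ∃ x : M, A i = {x}) ∨
            ∃ j, J i = some j ∧ A i = Finset.univ.filter (fun x => g x = j)) ∧
          (∀ (i k : Fin n) (j : Fin (2 * n)),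
            i ≠ k → J i = some j → J k ≠ some j) ∧
          (1 / (100 * (n:ℝ) * Real.log (m:ℝ) ^ 2)) ^ n * ∏ i, v i (O i) ≤
            ∏ i, v i (A i) := by
      intro g
      refine ⟨fun i => univ.filter (fun x => g x = ⟨i.1, by have := i.isLt; omega⟩),
        fun i => some ⟨i.1, by have := i.isLt; omega⟩, ?_, ?_, ?_, ?_⟩
      · intro i k hik
        rw [Finset.disjoint_left]
        intro x hx1 hx2
        simp only [Finset.mem_filter] at hx1 hx2
        apply hik
        have heq : (⟨i.1, by have := i.isLt; omega⟩ : Fin (2*n))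
            = ⟨k.1, by have := k.isLt; omega⟩ := by rw [← hx1.2, hx2.2]
        rw [Fin.mk.injEq] at heq
        exact Fin.ext heq
      · intro i
        exact Or.inr ⟨⟨i.1, by have := i.isLt; omega⟩, rfl, rfl⟩
      · intro i k j hik hJi hJk
        apply hik
        have h1 := Option.some.inj hJi
        have h2 := Option.some.inj hJk
        rw [← h2] at h1
        rw [Fin.mk.injEq] at h1
        exact Fin.ext h1
      · have hz : ∏ i, v i (O i) = 0 := Finset.prod_eq_zero (Finset.mem_univ i0) hi0
        rw [hz, mul_zero]
        exact Finset.prod_nonneg (fun i _ => hvnn i _)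
    have h1 : (1 - 1/(m:ℝ)) * (2*(n:ℝ))^m ≤ ((univ : Finset (M → Fin (2*n))).card : ℝ) := by
      rw [hX]
      have h2 : (0:ℝ) ≤ 1/(m:ℝ) := by positivity
      nlinarith [mul_nonneg h2 hXnn]
    exact le_trans h1 (Nat.cast_le.mpr (Finset.card_le_card
      (fun g _ => Finset.mem_filter.mpr ⟨Finset.mem_univ g, hall g⟩)))
  · -- main case
    have hvO : ∀ i, 0 < v i (O i) := fun i =>
      lt_of_le_of_ne (hvnn i _) (fun he => h0 ⟨i, he.symm⟩)
    have hOne : ∀ i, (O i).Nonempty := by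
      intro i
      rcases Finset.eq_empty_or_nonempty (O i) with h | h
      · exfalso; exact h0 ⟨i, by rw [h, hv0 i]⟩
      · exact h
    have hnm : n ≤ m := by
      have hinj : Function.Injective (fun i : Fin n => (hOne i).choose) := by
        intro i k hik
        by_contra hne
        have h1 := (hOne i).choose_spec
        have h2 := (hOne k).choose_spec
        have hik' : (hOne i).choose = (hOne k).choose := hik
        rw [hik'] at h1
        exact (Finset.disjoint_left.mp (hOdis i k hne) h1) h2
      calc n = Fintype.card (Fin n) := (Fintype.card_fin n).symm
        _ ≤ m := Fintype.card_le_of_injective _ hinj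
    have hMne : Nonempty M := Fintype.card_pos_iff.mp (by omega)
    set L := Real.log (m:ℝ) with hLdef
    have hlog2 : (0.6931471803:ℝ) < Real.log 2 := Real.log_two_gt_d9
    have hL : (0.6931471803:ℝ) < L := by
      rw [hLdef]
      exact lt_of_lt_of_le hlog2 (Real.log_le_log (by norm_num) hmR)
    have hLpos : (0:ℝ) < L := by linarith
    set cst := 1 / (100 * (n:ℝ) * L ^ 2) with hcstdef
    have hdenpos : (0:ℝ) < 100 * (n:ℝ) * L ^ 2 :=
      mul_pos (mul_pos (by norm_num) hnRpos) (pow_pos hLpos 2)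
    have hcstpos : 0 < cst := by
      rw [hcstdef]
      exact div_pos one_pos hdenpos
    set τ : Fin n → ℝ := fun i => cst * v i (O i) with hτdef
    have hτpos : ∀ i, 0 < τ i := fun i => mul_pos hcstpos (hvO i)
    set δ : Fin n → ℝ := fun i => 4 * (n:ℝ) * τ i with hδdef
    have hδpos : ∀ i, 0 < δ i := fun i => by
      have := hτpos i
      simp only [hδdef]
      nlinarith
    set heavy : Fin n → Prop := fun i => ∃ x ∈ O i, τ i ≤ v i {x} with hheavydef
    set d : Fin n → M := fun i => if h : heavy i then h.choose else Classical.arbitrary M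
      with hddef
    have hd : ∀ i, heavy i → d i ∈ O i ∧ τ i ≤ v i {d i} := by
      intro i h
      simp only [hddef, dif_pos h]
      exact h.choose_spec
    set lightIdx := univ.filter (fun i : Fin n => ¬ heavy i) with hlightdef
    set HIdx := univ.filter (fun i : Fin n => heavy i) with hHIdxdef
    have hlh : HIdx.card + lightIdx.card = n := by
      rw [hHIdxdef, hlightdef]
      rw [Finset.card_filter_add_card_filter_not]
      rw [Finset.card_univ, Fintype.card_fin]
    set D : Finset M := HIdx.image d with hDdef
    have hDcard : D.card ≤ HIdx.card := Finset.card_image_le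
    have hDO : ∀ i, ¬ heavy i → ∀ x ∈ D, x ∉ O i := by
      intro i hi x hx hxO
      rw [hDdef] at hx
      obtain ⟨h, hh, rfl⟩ := Finset.mem_image.mp hx
      have hh' : heavy h := (Finset.mem_filter.mp hh).2
      have hne : h ≠ i := fun he => hi (he ▸ hh')
      exact (Finset.disjoint_left.mp (hOdis h i hne) (hd h hh').1) hxO
    set K := Nat.clog 2 (4 * n^2 * m) with hKdef
    have hn2 : 1 ≤ n^2 := Nat.one_le_pow _ _ hn
    have h8 : 8 ≤ 4 * n^2 * m := by nlinarith
    have hK2 : 4 * n^2 * m ≤ 2^K := Nat.le_pow_clog one_lt_two _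
    have hKpos : 0 < K := Nat.clog_pos one_lt_two (by omega)
    have hKlt : 2^(K-1) < 4 * n^2 * m := by
      have := Nat.pow_pred_clog_lt_self (b := 2) one_lt_two (x := 4 * n^2 * m) (by omega)
      simpa [Nat.pred_eq_sub_one] using this
    have hKR : (K:ℝ) ≤ 9 * L := by
      have h5 : 4 * n^2 * m ≤ m^5 := by
        have h4 : 4 ≤ m^2 := by nlinarith
        have hn2m : n^2 ≤ m^2 := Nat.pow_le_pow_left hnm 2
        calc 4 * n^2 * m ≤ (m^2 * m^2) * m :=
              Nat.mul_le_mul (Nat.mul_le_mul h4 hn2m) le_rfl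
          _ = m^5 := by ring
      have hlt : (2:ℕ)^(K-1) < m^5 := lt_of_lt_of_le hKlt h5
      have hltR : (2:ℝ)^(K-1) < (m:ℝ)^5 := by exact_mod_cast hlt
      have hlog : ((K-1:ℕ):ℝ) * Real.log 2 < 5 * L := by
        have hll := Real.log_lt_log (by positivity) hltR
        rw [Real.log_pow, Real.log_pow] at hll
        rw [hLdef]
        exact_mod_cast hll
      have hcast : ((K-1:ℕ):ℝ) = (K:ℝ) - 1 := by
        rw [Nat.cast_sub hKpos, Nat.cast_one]
      rw [hcast] at hlog
      have hK1R : (0:ℝ) ≤ (K:ℝ) - 1 := by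
        have : (1:ℝ) ≤ (K:ℝ) := by exact_mod_cast hKpos
        linarith
      have step : ((K:ℝ) - 1) * 0.6931471803 ≤ 5 * L :=
        le_trans (mul_le_mul_of_nonneg_left (le_of_lt hlog2) hK1R) (le_of_lt hlog)
      linarith
    have hchunkval : ∀ i, (K:ℝ) * (δ i + τ i) ≤ v i (O i) := by
      intro i
      have hτi := hτpos i
      have hKnn : (0:ℝ) ≤ (K:ℝ) := Nat.cast_nonneg K
      have h1 : (K:ℝ) * (δ i + τ i) = (K:ℝ) * (4*(n:ℝ)+1) * τ i := by
        simp only [hδdef]; ring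
      rw [h1, hτdef]
      have h2 : (K:ℝ) * (4*(n:ℝ)+1) ≤ 45 * ((n:ℝ) * L) := by
        have ha : (4*(n:ℝ)+1) ≤ 5*(n:ℝ) := by linarith
        have hb : (K:ℝ) * (4*(n:ℝ)+1) ≤ (9*L) * (5*(n:ℝ)) := by
          apply mul_le_mul hKR ha (by linarith) (by positivity)
        linarith
      have h3 : 45 * ((n:ℝ) * L) * cst ≤ 1 := by
        have key2 : (0:ℝ) ≤ ((n:ℝ)*L)*(20*L-9) :=
          mul_nonneg (le_of_lt (mul_pos hnRpos hLpos)) (by linarith)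
        have key : 45 * ((n:ℝ) * L) ≤ 100 * (n:ℝ) * L ^ 2 := by nlinarith [key2]
        rw [hcstdef, mul_one_div, div_le_one hdenpos]
        exact key
      have h4 : (K:ℝ) * (4*(n:ℝ)+1) * cst ≤ 1 := by
        have := mul_le_mul_of_nonneg_right h2 (le_of_lt hcstpos)
        linarith
      have h5 := mul_le_mul_of_nonneg_right h4 (le_of_lt (hvO i))
      calc (K:ℝ) * (4*(n:ℝ)+1) * (cst * v i (O i))
          = ((K:ℝ) * (4*(n:ℝ)+1) * cst) * v i (O i) := by ring
        _ ≤ 1 * v i (O i) := h5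
        _ = v i (O i) := by ring
    -- chunks
    have hQex : ∀ i : Fin n, ∃ Q : ℕ → Finset M, ¬ heavy i →
        ((∀ l, l < K → Q l ⊆ O i ∧ δ i ≤ v i (Q l)) ∧
          (∀ l, l < K → ∀ l', l' < K → l ≠ l' → Disjoint (Q l) (Q l'))) := by
      intro i
      by_cases h : heavy i
      · exact ⟨fun _ => ∅, fun h' => absurd h h'⟩
      · have hsing : ∀ x ∈ O i, v i {x} < τ i := by
          intro x hx
          by_contra hcon
          push_neg at hcon
          exact h ⟨x, hx, hcon⟩
        obtain ⟨Q, h1, h2⟩ := exists_chunks (v i) (hv0 i) (hvmono i) (hvsub i)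
          (τ i) (δ i) (hδpos i) (hτpos i) K (O i) hsing (hchunkval i)
        exact ⟨Q, fun _ => ⟨fun l hl => h1 l hl, fun l hl l' hl' => h2 l hl l' hl'⟩⟩
    choose Qc hQc using hQex
    set goodSet : Fin n → (M → Fin (2*n)) → Finset (Fin (2*n)) := fun i g =>
      (univ.filter (fun j => τ i ≤ v i ((O i).filter (fun x => g x = j)))) \ (D.image g)
      with hgooddef
    set Hall : (M → Fin (2*n)) → Prop := fun g =>
      ∀ P : Finset (Fin n), P ⊆ lightIdx →
        P.card ≤ (P.biUnion (fun i => goodSet i g)).card with hHalldef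
    have hTex : ∀ B'' : Finset (Fin (2*n)), ∃ T : Finset (Fin (2*n)),
        T.card = n ∧ (B''.card ≤ n → ∀ j ∈ T, j ∉ B'') := by
      intro B''
      by_cases h : B''.card ≤ n
      · have hc : n ≤ B''ᶜ.card := by
          rw [Finset.card_compl, Fintype.card_fin]; omega
        obtain ⟨T, hT1, hT2⟩ := Finset.exists_subset_card_eq hc
        exact ⟨T, hT2, fun _ j hj => Finset.mem_compl.mp (hT1 hj)⟩
      · have hc : n ≤ (univ : Finset (Fin (2*n))).card := by
          rw [Finset.card_univ, Fintype.card_fin]; omega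
        obtain ⟨T, _, hT2⟩ := Finset.exists_subset_card_eq hc
        exact ⟨T, hT2, fun h' => absurd h' h⟩
    choose Tsel hTcard hTdisj using hTex
    set blockedOf : (∀ x ∈ D, Fin (2*n)) → Finset (Fin (2*n)) := fun b =>
      D.attach.image (fun x => b x.1 x.2) with hblockdef
    set Event : Finset (Fin n) → Finset (Fin (2*n)) → (∀ x ∈ D, Fin (2*n)) →
        Finset (M → Fin (2*n)) := fun P B' b =>
      univ.filter (fun g => (∀ x (hx : x ∈ D), g x = b x hx) ∧
        ∀ t ∈ P ×ˢ Finset.range K,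
          v t.1 ((Qc t.1 t.2).filter (fun x => g x ∈ Tsel (B' ∪ blockedOf b)))
            < δ t.1 / 2) with hEventdef
    have hGoodOfHall : ∀ g : M → Fin (2*n), Hall g →
        ∃ (A : Fin n → Finset M) (J : Fin n → Option (Fin (2 * n))),
          (∀ i k : Fin n, i ≠ k → Disjoint (A i) (A k)) ∧
          (∀ i, (J i = none ∧ ∃ x : M, A i = {x}) ∨
            ∃ j, J i = some j ∧ A i = Finset.univ.filter (fun x => g x = j)) ∧
          (∀ (i k : Fin n) (j : Fin (2 * n)),
            i ≠ k → J i = some j → J k ≠ some j) ∧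
          cst ^ n * ∏ i, v i (O i) ≤ ∏ i, v i (A i) := by
      intro g hg
      rw [hHalldef] at hg
      -- Hall's theorem for the light players
      have hHallSub : ∀ s : Finset {i : Fin n // i ∈ lightIdx},
          s.card ≤ (s.biUnion (fun i => goodSet i.1 g)).card := by
        intro s
        have himg : s.image Subtype.val ⊆ lightIdx := by
          intro i hi
          obtain ⟨a, _, rfl⟩ := Finset.mem_image.mp hi
          exact a.2
        have hcardeq : (s.image Subtype.val).card = s.card :=
          Finset.card_image_of_injective _ Subtype.val_injective
        have hbi : (s.image Subtype.val).biUnion (fun i => goodSet i g)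
            = s.biUnion (fun i => goodSet i.1 g) := Finset.image_biUnion
        calc s.card = (s.image Subtype.val).card := hcardeq.symm
          _ ≤ ((s.image Subtype.val).biUnion (fun i => goodSet i g)).card :=
              hg _ himg
          _ = _ := by rw [hbi]
      obtain ⟨f, hfinj, hfmem⟩ :=
        (Finset.all_card_le_biUnion_card_iff_exists_injective
          (fun i : {i : Fin n // i ∈ lightIdx} => goodSet i.1 g)).mp hHallSub
      have hfgood : ∀ (i : Fin n) (h : i ∈ lightIdx),
          τ i ≤ v i ((O i).filter (fun x => g x = f ⟨i, h⟩)) ∧ f ⟨i, h⟩ ∉ D.image g := by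
        intro i h
        have := hfmem ⟨i, h⟩
        rw [hgooddef] at this
        simp only [Finset.mem_sdiff, Finset.mem_filter, Finset.mem_univ, true_and] at this
        exact this
      refine ⟨fun i => if h : i ∈ lightIdx then univ.filter (fun x => g x = f ⟨i, h⟩)
          else {d i},
        fun i => if h : i ∈ lightIdx then some (f ⟨i, h⟩) else none, ?_, ?_, ?_, ?_⟩
      · -- pairwise disjoint
        intro i k hik
        have hheavymem : ∀ j : Fin n, j ∉ lightIdx → heavy j := by
          intro j hj
          by_contra hcon
          exact hj (by rw [hlightdef]; exact Finset.mem_filter.mpr ⟨Finset.mem_univ _, hcon⟩)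
        by_cases hi : i ∈ lightIdx <;> by_cases hk : k ∈ lightIdx
        · simp only [dif_pos hi, dif_pos hk]
          rw [Finset.disjoint_left]
          intro x hx1 hx2
          simp only [Finset.mem_filter] at hx1 hx2
          have : (⟨i, hi⟩ : {i : Fin n // i ∈ lightIdx}) = ⟨k, hk⟩ :=
            hfinj (by rw [← hx1.2, hx2.2])
          exact hik (congrArg Subtype.val this)
        · simp only [dif_pos hi, dif_neg hk]
          rw [Finset.disjoint_singleton_right]
          intro hmem
          have hdk : d k ∈ D := by
            rw [hDdef]
            exact Finset.mem_image_of_mem d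
              (Finset.mem_filter.mpr ⟨Finset.mem_univ _, hheavymem k hk⟩)
          have : g (d k) = f ⟨i, hi⟩ := (Finset.mem_filter.mp hmem).2
          exact (hfgood i hi).2 (Finset.mem_image.mpr ⟨d k, hdk, this⟩)
        · simp only [dif_neg hi, dif_pos hk]
          rw [Finset.disjoint_singleton_left]
          intro hmem
          have hdi : d i ∈ D := by
            rw [hDdef]
            exact Finset.mem_image_of_mem d
              (Finset.mem_filter.mpr ⟨Finset.mem_univ _, hheavymem i hi⟩)
          have : g (d i) = f ⟨k, hk⟩ := (Finset.mem_filter.mp hmem).2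
          exact (hfgood k hk).2 (Finset.mem_image.mpr ⟨d i, hdi, this⟩)
        · simp only [dif_neg hi, dif_neg hk]
          rw [Finset.disjoint_singleton_left, Finset.mem_singleton]
          intro hcon
          have h1 := (hd i (hheavymem i hi)).1
          have h2 := (hd k (hheavymem k hk)).1
          rw [hcon] at h1
          exact (Finset.disjoint_left.mp (hOdis i k hik) h1) h2
      · -- shape of each A i
        intro i
        by_cases hi : i ∈ lightIdx
        · exact Or.inr ⟨f ⟨i, hi⟩, by simp only [dif_pos hi], by simp only [dif_pos hi]⟩
        · exact Or.inl ⟨by simp only [dif_neg hi], ⟨d i, by simp only [dif_neg hi]⟩⟩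
      · -- distinct bundle indices
        intro i k j hik hJi hJk
        by_cases hi : i ∈ lightIdx
        · by_cases hk : k ∈ lightIdx
          · simp only [dif_pos hi] at hJi
            simp only [dif_pos hk] at hJk
            have h1 := Option.some.inj hJi
            have h2 := Option.some.inj hJk
            rw [← h2] at h1
            have : (⟨i, hi⟩ : {i : Fin n // i ∈ lightIdx}) = ⟨k, hk⟩ := hfinj h1
            exact hik (congrArg Subtype.val this)
          · simp only [dif_neg hk] at hJk
            exact nomatch hJk
        · simp only [dif_neg hi] at hJi
          exact nomatch hJi
      · -- product bound
        have hprod : cst ^ n * ∏ i, v i (O i) = ∏ i, τ i := by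
          rw [hτdef]
          rw [Finset.prod_mul_distrib, Finset.prod_const, Finset.card_univ, Fintype.card_fin]
        rw [hprod]
        apply Finset.prod_le_prod
        · intro i _
          exact le_of_lt (hτpos i)
        · intro i _
          by_cases hi : i ∈ lightIdx
          · simp only [dif_pos hi]
            calc τ i ≤ v i ((O i).filter (fun x => g x = f ⟨i, hi⟩)) := (hfgood i hi).1
              _ ≤ v i (univ.filter (fun x => g x = f ⟨i, hi⟩)) :=
                  hvmono i _ _ (Finset.filter_subset_filter _ (Finset.subset_univ _))
          · simp only [dif_neg hi]
            have hh : heavy i := by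
              by_contra hcon
              apply hi
              rw [hlightdef]
              exact Finset.mem_filter.mpr ⟨Finset.mem_univ _, hcon⟩
            exact (hd i hh).2

    have hFailsub : univ.filter (fun g : M → Fin (2*n) => ¬ Hall g) ⊆
        (lightIdx.powerset.filter (fun P => P.Nonempty)).biUnion (fun P =>
          (Finset.powersetCard (P.card - 1) (univ : Finset (Fin (2*n)))).biUnion (fun B' =>
            (D.pi (fun _ => (univ : Finset (Fin (2*n))))).biUnion (fun b =>
              Event P B' b))) := by
      intro g hgmem
      simp only [Finset.mem_filter, Finset.mem_univ, true_and] at hgmem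
      rw [hHalldef] at hgmem
      simp only [not_forall, not_le] at hgmem
      obtain ⟨P, hPsub, hPcard⟩ := hgmem
      have hPne : P.Nonempty := Finset.card_pos.mp (by omega)
      have hPlen : P.card ≤ lightIdx.card := Finset.card_le_card hPsub
      have hlcard : lightIdx.card ≤ n := by omega
      have hcard1 : (P.biUnion (fun i => goodSet i g)).card ≤ P.card - 1 := by omega
      have hcard2 : P.card - 1 ≤ Fintype.card (Fin (2*n)) := by
        rw [Fintype.card_fin]; omega
      obtain ⟨B', hB'sub, hB'card⟩ := Finset.exists_superset_card_eq hcard1 hcard2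
      refine Finset.mem_biUnion.mpr ⟨P, ?_, Finset.mem_biUnion.mpr ⟨B', ?_,
        Finset.mem_biUnion.mpr ⟨fun x _ => g x, ?_, ?_⟩⟩⟩
      · exact Finset.mem_filter.mpr ⟨Finset.mem_powerset.mpr hPsub, hPne⟩
      · exact Finset.mem_powersetCard.mpr ⟨Finset.subset_univ _, hB'card⟩
      · rw [Finset.mem_pi]; intro a _; exact Finset.mem_univ _
      · rw [hEventdef]
        refine Finset.mem_filter.mpr ⟨Finset.mem_univ _, fun x hx => rfl, ?_⟩
        intro t ht
        obtain ⟨hti, htl⟩ := Finset.mem_product.mp ht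
        have htK : t.2 < K := Finset.mem_range.mp htl
        have hlight : ¬ heavy t.1 := by
          have := hPsub hti
          rw [hlightdef] at this
          exact (Finset.mem_filter.mp this).2
        have hbl : blockedOf (fun x _ => g x) = D.image g := by
          rw [hblockdef]
          ext j
          constructor
          · intro hj
            obtain ⟨x, -, rfl⟩ := Finset.mem_image.mp hj
            exact Finset.mem_image_of_mem g x.2
          · intro hj
            obtain ⟨a, ha, rfl⟩ := Finset.mem_image.mp hj
            exact Finset.mem_image.mpr ⟨⟨a, ha⟩, Finset.mem_attach _ _, rfl⟩
        have hB''card : (B' ∪ blockedOf (fun x _ => g x)).card ≤ n := by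
          rw [hbl]
          have hu : (B' ∪ D.image g).card ≤ B'.card + (D.image g).card :=
            Finset.card_union_le _ _
          have h1 : (D.image g).card ≤ D.card := Finset.card_image_le
          omega
        have hTno := hTdisj _ hB''card
        have hjbad : ∀ j ∈ Tsel (B' ∪ blockedOf (fun x _ => g x)),
            v t.1 ((O t.1).filter (fun x => g x = j)) < τ t.1 := by
          intro j hj
          have hjT := hTno j hj
          rw [Finset.mem_union] at hjT
          push_neg at hjT
          obtain ⟨hjB', hjbl⟩ := hjT
          rw [hbl] at hjbl
          have hjgood : j ∉ goodSet t.1 g := fun hjg =>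
            hjB' (hB'sub (Finset.mem_biUnion.mpr ⟨t.1, hti, hjg⟩))
          rw [hgooddef] at hjgood
          simp only [Finset.mem_sdiff, Finset.mem_filter, Finset.mem_univ, true_and,
            not_and, not_not] at hjgood
          by_contra hcon
          push_neg at hcon
          exact hjbl (hjgood hcon)
        have hQsub : Qc t.1 t.2 ⊆ O t.1 := ((hQc t.1 hlight).1 t.2 htK).1
        have hchain : v t.1 ((Qc t.1 t.2).filter
              (fun x => g x ∈ Tsel (B' ∪ blockedOf (fun x _ => g x))))
            ≤ ∑ j ∈ Tsel (B' ∪ blockedOf (fun x _ => g x)),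
                v t.1 ((O t.1).filter (fun x => g x = j)) := by
          calc v t.1 ((Qc t.1 t.2).filter
                (fun x => g x ∈ Tsel (B' ∪ blockedOf (fun x _ => g x))))
              ≤ v t.1 ((O t.1).filter
                (fun x => g x ∈ Tsel (B' ∪ blockedOf (fun x _ => g x)))) :=
                hvmono _ _ _ (Finset.filter_subset_filter _ hQsub)
            _ ≤ _ := v_filter_le_sum (v t.1) (hv0 t.1) (hvsub t.1) _ g _
        have hTne : (Tsel (B' ∪ blockedOf (fun x _ => g x))).Nonempty :=
          Finset.card_pos.mp (by rw [hTcard]; omega)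
        have hsum := Finset.sum_lt_sum_of_nonempty hTne hjbad
        rw [Finset.sum_const, hTcard, nsmul_eq_mul] at hsum
        have hfin : v t.1 ((Qc t.1 t.2).filter
            (fun x => g x ∈ Tsel (B' ∪ blockedOf (fun x _ => g x)))) < (n:ℝ) * τ t.1 := by
          linarith
        have hδτ : (n:ℝ) * τ t.1 ≤ δ t.1 / 2 := by
          rw [hδdef]
          have := hτpos t.1
          nlinarith
        linarith

    have hEventbound : ∀ P : Finset (Fin n), P ⊆ lightIdx →
        ∀ (B' : Finset (Fin (2*n))) (b : ∀ x ∈ D, Fin (2*n)),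
        ((Event P B' b).card : ℝ) ≤
          ((univ.filter (fun g : M → Fin (2*n) =>
            ∀ x (hx : x ∈ D), g x = b x hx)).card : ℝ) * (1/2)^(P.card * K) := by
      intro P hPsub B' b
      set T := Tsel (B' ∪ blockedOf b) with hTdef2
      set s := P ×ˢ Finset.range K with hsdef
      set E : Fin n × ℕ → Finset (M → Fin (2*n)) := fun t =>
        univ.filter (fun g : M → Fin (2*n) =>
          v t.1 ((Qc t.1 t.2).filter (fun x => g x ∈ T)) < δ t.1 / 2) with hEdef
      set Agr := univ.filter (fun g : M → Fin (2*n) =>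
        ∀ x (hx : x ∈ D), g x = b x hx) with hAgrdef
      set CI := univ.filter (fun g : M → Fin (2*n) => ∀ t ∈ s, g ∈ E t) with hCIdef
      have hlight : ∀ t : Fin n × ℕ, t ∈ s → ¬ heavy t.1 := by
        intro t ht
        rw [hsdef] at ht
        have h1 := (Finset.mem_product.mp ht).1
        have h2 := hPsub h1
        rw [hlightdef] at h2
        exact (Finset.mem_filter.mp h2).2
      have htK : ∀ t : Fin n × ℕ, t ∈ s → t.2 < K := by
        intro t ht
        rw [hsdef] at ht
        exact Finset.mem_range.mp (Finset.mem_product.mp ht).2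
      have hEv : Event P B' b = Agr ∩ CI := by
        rw [hEventdef, hAgrdef, hCIdef]
        ext g
        simp only [Finset.mem_filter, Finset.mem_univ, true_and, Finset.mem_inter,
          hEdef, hsdef, hTdef2]
      have hAgrDet : DetOn D Agr := by
        intro g g' hag hgm
        simp only [hAgrdef, Finset.mem_filter, Finset.mem_univ, true_and] at hgm ⊢
        intro x hx
        rw [← hag x hx]
        exact hgm x hx
      have hEDet : ∀ t ∈ s, DetOn (Qc t.1 t.2) (E t) := by
        intro t ht g g' hag hgm
        simp only [hEdef, Finset.mem_filter, Finset.mem_univ, true_and] at hgm ⊢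
        have hfe : (Qc t.1 t.2).filter (fun x => g' x ∈ T)
            = (Qc t.1 t.2).filter (fun x => g x ∈ T) := by
          apply Finset.filter_congr
          intro x hx
          rw [hag x hx]
        rw [hfe]
        exact hgm
      have hQD : ∀ t ∈ s, Qc t.1 t.2 ⊆ Dᶜ := by
        intro t ht x hx
        rw [Finset.mem_compl]
        intro hxD
        exact hDO t.1 (hlight t ht) x hxD (((hQc t.1 (hlight t ht)).1 t.2 (htK t ht)).1 hx)
      have hCIDet : DetOn Dᶜ CI := by
        rw [hCIdef]
        exact detOn_filter_forall s (fun t => Qc t.1 t.2) E Dᶜ hQD hEDet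
      have hsplit : (Agr ∩ CI).card * Fintype.card (M → Fin (2*n)) = Agr.card * CI.card :=
        det_card_inter_mul D Agr CI hAgrDet hCIDet
      have hdisjfam : ∀ t ∈ s, ∀ t' ∈ s, t ≠ t' → Disjoint (Qc t.1 t.2) (Qc t'.1 t'.2) := by
        intro t ht t' ht' hne
        by_cases hii : t.1 = t'.1
        · have hll : t.2 ≠ t'.2 := by
            intro h2; exact hne (Prod.ext hii h2)
          have h := (hQc t.1 (hlight t ht)).2 t.2 (htK t ht) t'.2 (htK t' ht') hll
          rw [← hii]
          exact h
        · have hsub1 : Qc t.1 t.2 ⊆ O t.1 := ((hQc t.1 (hlight t ht)).1 t.2 (htK t ht)).1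
          have hsub2 : Qc t'.1 t'.2 ⊆ O t'.1 :=
            ((hQc t'.1 (hlight t' ht')).1 t'.2 (htK t' ht')).1
          exact (hOdis t.1 t'.1 hii).mono hsub1 hsub2
      have hfam : CI.card * Fintype.card (M → Fin (2*n)) ^ s.card
          ≤ Fintype.card (M → Fin (2*n)) * ∏ t ∈ s, (E t).card := by
        rw [hCIdef]
        exact det_card_inter_family s (fun t => Qc t.1 t.2) E hdisjfam hEDet
      have hEhalf : ∀ t ∈ s, 2 * (E t).card ≤ Fintype.card (M → Fin (2*n)) := by
        intro t ht
        have hδv : 2 * (δ t.1 / 2) ≤ v t.1 (Qc t.1 t.2) := by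
          have := ((hQc t.1 (hlight t ht)).1 t.2 (htK t ht)).2
          linarith
        have hTc2 : 2 * T.card = Fintype.card (Fin (2*n)) := by
          rw [hTdef2, hTcard, Fintype.card_fin]
        have hhc := half_count T hTc2 (v t.1) (hvsub t.1) (Qc t.1 t.2) (δ t.1 / 2) hδv
        rw [hEdef]
        exact hhc
      obtain ⟨NN, hNN⟩ : ∃ NN : ℕ, Fintype.card (M → Fin (2*n)) = NN := ⟨_, rfl⟩
      rw [hNN] at hsplit hfam
      have hNNpos : 0 < NN := by
        rw [← hNN]
        exact Fintype.card_pos_iff.mpr ⟨fun _ => ⟨0, by omega⟩⟩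
      have hNR : (0:ℝ) < (NN:ℝ) := by exact_mod_cast hNNpos
      have hEhalf' : ∀ t ∈ s, 2 * (E t).card ≤ NN := by
        intro t ht; rw [← hNN]; exact hEhalf t ht
      have hscard : s.card = P.card * K := by
        rw [hsdef, Finset.card_product, Finset.card_range]
      have hprodE : ∏ t ∈ s, ((E t).card : ℝ) ≤ ((NN : ℝ)/2) ^ s.card := by
        rw [← Finset.prod_const]
        apply Finset.prod_le_prod
        · intro t _; exact Nat.cast_nonneg _
        · intro t ht
          have h1 := hEhalf' t ht
          have h2 : ((2 * (E t).card : ℕ) : ℝ) ≤ (NN : ℝ) := by exact_mod_cast h1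
          push_cast at h2
          linarith
      have hCIR : (CI.card : ℝ) ≤ (NN : ℝ) * (1/2) ^ (P.card * K) := by
        have h1 : (CI.card : ℝ) * (NN : ℝ) ^ s.card ≤ (NN : ℝ) * ∏ t ∈ s, ((E t).card : ℝ) := by
          exact_mod_cast hfam
        have h2 : (CI.card : ℝ) * (NN : ℝ) ^ s.card
            ≤ (NN : ℝ) * (((NN : ℝ)/2) ^ s.card) :=
          le_trans h1 (mul_le_mul_of_nonneg_left hprodE (le_of_lt hNR))
        have h3 : ((NN : ℝ)/2) ^ s.card = (NN : ℝ) ^ s.card * (1/2) ^ s.card := by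
          rw [← mul_pow]; ring_nf
        rw [h3] at h2
        have hpowpos : (0:ℝ) < (NN : ℝ) ^ s.card := pow_pos hNR _
        have h5 : (CI.card : ℝ) * (NN : ℝ) ^ s.card
            ≤ ((NN : ℝ) * (1/2) ^ s.card) * (NN : ℝ) ^ s.card := by
          calc (CI.card : ℝ) * (NN : ℝ) ^ s.card
              ≤ (NN : ℝ) * ((NN : ℝ) ^ s.card * (1/2) ^ s.card) := h2
            _ = ((NN : ℝ) * (1/2) ^ s.card) * (NN : ℝ) ^ s.card := by ring
        have h6 := le_of_mul_le_mul_right h5 hpowpos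
        rw [hscard] at h6
        exact h6
      have hEvR : ((Event P B' b).card : ℝ) * (NN : ℝ) = (Agr.card : ℝ) * CI.card := by
        rw [hEv]
        exact_mod_cast hsplit
      have hAgrnn : (0:ℝ) ≤ (Agr.card:ℝ) := Nat.cast_nonneg _
      have h6 : ((Event P B' b).card : ℝ) * (NN : ℝ)
          ≤ ((Agr.card:ℝ) * (1/2)^(P.card*K)) * (NN : ℝ) := by
        rw [hEvR]
        calc (Agr.card:ℝ) * CI.card
            ≤ (Agr.card:ℝ) * ((NN : ℝ) * (1/2)^(P.card*K)) :=
              mul_le_mul_of_nonneg_left hCIR hAgrnn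
          _ = ((Agr.card:ℝ) * (1/2)^(P.card*K)) * (NN : ℝ) := by ring
      exact le_of_mul_le_mul_right h6 hNR

    have hFailcard : ((univ.filter (fun g : M → Fin (2*n) => ¬ Hall g)).card : ℝ) ≤
        ((univ : Finset (M → Fin (2*n))).card : ℝ) / (m:ℝ) := by
      have hle1 : (univ.filter (fun g : M → Fin (2*n) => ¬ Hall g)).card ≤
          ∑ P ∈ lightIdx.powerset.filter (fun P => P.Nonempty),
            ∑ B' ∈ Finset.powersetCard (P.card - 1) (univ : Finset (Fin (2*n))),
              ∑ b ∈ D.pi (fun _ => (univ : Finset (Fin (2*n)))), (Event P B' b).card := by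
        calc (univ.filter (fun g : M → Fin (2*n) => ¬ Hall g)).card
            ≤ _ := Finset.card_le_card hFailsub
          _ ≤ _ := by
            apply le_trans Finset.card_biUnion_le
            apply Finset.sum_le_sum
            intro P _
            apply le_trans Finset.card_biUnion_le
            apply Finset.sum_le_sum
            intro B' _
            exact Finset.card_biUnion_le
      have hcastle : ((univ.filter (fun g : M → Fin (2*n) => ¬ Hall g)).card : ℝ) ≤
          ∑ P ∈ lightIdx.powerset.filter (fun P => P.Nonempty),
            ∑ B' ∈ Finset.powersetCard (P.card - 1) (univ : Finset (Fin (2*n))),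
              ∑ b ∈ D.pi (fun _ => (univ : Finset (Fin (2*n)))),
                ((Event P B' b).card : ℝ) := by
        exact_mod_cast hle1
      obtain ⟨NN, hNN⟩ : ∃ NN : ℕ, Fintype.card (M → Fin (2*n)) = NN := ⟨_, rfl⟩
      rw [Finset.card_univ, hNN]
      have hNNpos : 0 < NN := by
        rw [← hNN]; exact Fintype.card_pos_iff.mpr ⟨fun _ => ⟨0, by omega⟩⟩
      have hNR : (0:ℝ) < (NN:ℝ) := by exact_mod_cast hNNpos
      have h2n0 : (2*(n:ℝ)) ≠ 0 := ne_of_gt (by linarith)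
      have hstep : ∀ P ∈ lightIdx.powerset.filter (fun P => P.Nonempty),
          ∑ B' ∈ Finset.powersetCard (P.card - 1) (univ : Finset (Fin (2*n))),
            ∑ b ∈ D.pi (fun _ => (univ : Finset (Fin (2*n)))), ((Event P B' b).card : ℝ)
          ≤ ((NN:ℝ)/(2*(n:ℝ))) * ((2*(n:ℝ)) * (1/2)^K)^P.card := by
        intro P hP
        rw [Finset.mem_filter, Finset.mem_powerset] at hP
        obtain ⟨hPsub, hPne⟩ := hP
        have hPpos : 0 < P.card := Finset.card_pos.mpr hPne
        have hinner : ∀ B' ∈ Finset.powersetCard (P.card - 1) (univ : Finset (Fin (2*n))),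
            ∑ b ∈ D.pi (fun _ => (univ : Finset (Fin (2*n)))), ((Event P B' b).card : ℝ)
            ≤ (NN:ℝ) * (1/2)^(P.card * K) := by
          intro B' _
          calc ∑ b ∈ D.pi (fun _ => (univ : Finset (Fin (2*n)))), ((Event P B' b).card : ℝ)
              ≤ ∑ b ∈ D.pi (fun _ => (univ : Finset (Fin (2*n)))),
                  ((univ.filter (fun g : M → Fin (2*n) =>
                    ∀ x (hx : x ∈ D), g x = b x hx)).card : ℝ) * (1/2)^(P.card * K) :=
                Finset.sum_le_sum (fun b _ => hEventbound P hPsub B' b)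
            _ = (∑ b ∈ D.pi (fun _ => (univ : Finset (Fin (2*n)))),
                  ((univ.filter (fun g : M → Fin (2*n) =>
                    ∀ x (hx : x ∈ D), g x = b x hx)).card : ℝ)) * (1/2)^(P.card * K) := by
                rw [Finset.sum_mul]
            _ = (NN:ℝ) * (1/2)^(P.card * K) := by
                have hsa := sum_agree (M := M) (F := Fin (2*n)) D
                rw [hNN] at hsa
                have hcast2 : (∑ b ∈ D.pi (fun _ => (univ : Finset (Fin (2*n)))),
                    ((univ.filter (fun g : M → Fin (2*n) =>
                      ∀ x (hx : x ∈ D), g x = b x hx)).card : ℝ)) = (NN:ℝ) := by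
                  exact_mod_cast congrArg (Nat.cast : ℕ → ℝ) hsa
                rw [hcast2]
        calc ∑ B' ∈ Finset.powersetCard (P.card - 1) (univ : Finset (Fin (2*n))),
              ∑ b ∈ D.pi (fun _ => (univ : Finset (Fin (2*n)))), ((Event P B' b).card : ℝ)
            ≤ ∑ _B' ∈ Finset.powersetCard (P.card - 1) (univ : Finset (Fin (2*n))),
                (NN:ℝ) * (1/2)^(P.card * K) := Finset.sum_le_sum hinner
          _ = ((Finset.powersetCard (P.card - 1) (univ : Finset (Fin (2*n)))).card : ℝ)
                * ((NN:ℝ) * (1/2)^(P.card * K)) := by rw [Finset.sum_const, nsmul_eq_mul]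
          _ ≤ (2*(n:ℝ))^(P.card - 1) * ((NN:ℝ) * (1/2)^(P.card * K)) := by
              apply mul_le_mul_of_nonneg_right _ (by positivity)
              rw [Finset.card_powersetCard, Finset.card_univ, Fintype.card_fin]
              calc (((2*n).choose (P.card - 1) : ℕ) : ℝ)
                  ≤ (((2*n)^(P.card-1) : ℕ) : ℝ) := by
                    exact_mod_cast Nat.choose_le_pow (2*n) (P.card - 1)
                _ = (2*(n:ℝ))^(P.card - 1) := by push_cast; ring
          _ = ((NN:ℝ)/(2*(n:ℝ))) * ((2*(n:ℝ)) * (1/2)^K)^P.card := by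
              have hk : P.card - 1 + 1 = P.card := Nat.succ_pred_eq_of_pos hPpos
              have hp1 : (2*(n:ℝ))^(P.card) = (2*(n:ℝ))^(P.card - 1) * (2*(n:ℝ)) := by
                rw [← pow_succ, hk]
              have hp2 : ((2*(n:ℝ)) * (1/2)^K)^P.card
                  = (2*(n:ℝ))^P.card * ((1/2:ℝ)^K)^P.card := mul_pow _ _ _
              have hp3 : ((1/2:ℝ)^K)^P.card = (1/2:ℝ)^(P.card * K) := by
                rw [← pow_mul, Nat.mul_comm]
              rw [hp2, hp3, hp1]
              field_simp
      set ε := (2*(n:ℝ)) * (1/2)^K with hεdef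
      have hεnn : (0:ℝ) ≤ ε := by
        rw [hεdef]; positivity
      have h2KR : (4*(n:ℝ)^2*(m:ℝ)) ≤ (2:ℝ)^K := by exact_mod_cast hK2
      have h2Kpos : (0:ℝ) < (2:ℝ)^K := by positivity
      have hhalfK : ((1:ℝ)/2)^K = 1/(2:ℝ)^K := by
        rw [one_div, inv_pow, one_div]
      have h2nm : (0:ℝ) < 2*(n:ℝ)*(m:ℝ) := by nlinarith
      have hεle : ε ≤ 1/(2*(n:ℝ)*(m:ℝ)) := by
        rw [hεdef, hhalfK, mul_one_div, div_le_div_iff₀ h2Kpos h2nm]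
        nlinarith [h2KR]
      have hℓn : lightIdx.card ≤ n := by omega
      have hℓε : (lightIdx.card:ℝ) * ε ≤ 1/2 := by
        have hc1 : (lightIdx.card:ℝ) ≤ (n:ℝ) := by exact_mod_cast hℓn
        have hc2 : (lightIdx.card:ℝ) * ε ≤ (n:ℝ) * ε := mul_le_mul_of_nonneg_right hc1 hεnn
        have hc3 : (n:ℝ) * ε ≤ (n:ℝ) * (1/(2*(n:ℝ)*(m:ℝ))) :=
          mul_le_mul_of_nonneg_left hεle (by linarith)
        have hc4 : (n:ℝ) * (1/(2*(n:ℝ)*(m:ℝ))) = 1/(2*(m:ℝ)) := by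
          field_simp
        have hc5 : (1:ℝ)/(2*(m:ℝ)) ≤ 1/2 := by
          rw [div_le_div_iff₀ (by linarith) (by norm_num)]
          linarith
        linarith
      have hbinom := sum_powerset_pow lightIdx ε
      have hnotne : lightIdx.powerset.filter (fun P => ¬ P.Nonempty)
          = ({∅} : Finset (Finset (Fin n))) := by
        ext P
        simp only [Finset.mem_filter, Finset.mem_powerset, Finset.not_nonempty_iff_eq_empty,
          Finset.mem_singleton]
        constructor
        · rintro ⟨-, h⟩; exact h
        · rintro rfl; exact ⟨Finset.empty_subset _, rfl⟩
      have hsplitsum := Finset.sum_filter_add_sum_filter_not lightIdx.powerset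
        (fun P => P.Nonempty) (fun P => ε ^ P.card)
      rw [hnotne] at hsplitsum
      have hsing : ∑ P ∈ ({∅} : Finset (Finset (Fin n))), ε ^ P.card = 1 := by simp
      have hsumP : ∑ P ∈ lightIdx.powerset.filter (fun P => P.Nonempty), ε ^ P.card
          = (1+ε)^lightIdx.card - 1 := by
        rw [← hbinom, ← hsplitsum, hsing]
        ring
      have honeadd := one_add_pow_le ε hεnn lightIdx.card hℓε
      have hsumPle : ∑ P ∈ lightIdx.powerset.filter (fun P => P.Nonempty), ε ^ P.card
          ≤ 2*(lightIdx.card:ℝ)*ε := by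
        rw [hsumP]; linarith
      calc ((univ.filter (fun g : M → Fin (2*n) => ¬ Hall g)).card : ℝ)
          ≤ ∑ P ∈ lightIdx.powerset.filter (fun P => P.Nonempty),
              ∑ B' ∈ Finset.powersetCard (P.card - 1) (univ : Finset (Fin (2*n))),
                ∑ b ∈ D.pi (fun _ => (univ : Finset (Fin (2*n)))),
                  ((Event P B' b).card : ℝ) := hcastle
        _ ≤ ∑ P ∈ lightIdx.powerset.filter (fun P => P.Nonempty),
              ((NN:ℝ)/(2*(n:ℝ))) * ε^P.card := Finset.sum_le_sum hstep
        _ = ((NN:ℝ)/(2*(n:ℝ))) * ∑ P ∈ lightIdx.powerset.filter (fun P => P.Nonempty),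
              ε ^ P.card := by rw [Finset.mul_sum]
        _ ≤ ((NN:ℝ)/(2*(n:ℝ))) * (2*(lightIdx.card:ℝ)*ε) := by
              apply mul_le_mul_of_nonneg_left hsumPle (by positivity)
        _ ≤ (NN:ℝ)/(m:ℝ) := by
              have s1 : 2*(lightIdx.card:ℝ)*ε ≤ 2*(n:ℝ)*ε := by
                have hc1 : (lightIdx.card:ℝ) ≤ (n:ℝ) := by exact_mod_cast hℓn
                nlinarith [hεnn]
              have s2 : ((NN:ℝ)/(2*(n:ℝ))) * (2*(lightIdx.card:ℝ)*ε)
                  ≤ ((NN:ℝ)/(2*(n:ℝ))) * (2*(n:ℝ)*ε) :=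
                mul_le_mul_of_nonneg_left s1 (by positivity)
              have s3 : ((NN:ℝ)/(2*(n:ℝ))) * (2*(n:ℝ)*ε) = (NN:ℝ) * ε := by
                field_simp
              have s4 : (NN:ℝ) * ε ≤ (NN:ℝ) * (1/(2*(n:ℝ)*(m:ℝ))) :=
                mul_le_mul_of_nonneg_left hεle (le_of_lt hNR)
              have s5 : (NN:ℝ) * (1/(2*(n:ℝ)*(m:ℝ))) ≤ (NN:ℝ)/(m:ℝ) := by
                rw [mul_one_div, div_le_div_iff₀ h2nm hmRpos]
                nlinarith [mul_nonneg (mul_nonneg hNR.le hmRpos.le)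
                  (by linarith : (0:ℝ) ≤ 2*(n:ℝ)-1)]
              linarith

    -- conclude
    have hgoalrw : (1 - 1/(m:ℝ)) * (2*(n:ℝ))^m =
        ((univ : Finset (M → Fin (2*n))).card : ℝ)
          - ((univ : Finset (M → Fin (2*n))).card : ℝ)/(m:ℝ) := by
      rw [hX]
      field_simp
    have hHallcard : ((univ : Finset (M → Fin (2*n))).card : ℝ)
        - ((univ.filter (fun g : M → Fin (2*n) => ¬ Hall g)).card : ℝ)
        ≤ ((univ.filter (fun g : M → Fin (2*n) => Hall g)).card : ℝ) := by
      have hh := Finset.card_filter_add_card_filter_not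
        (s := (univ : Finset (M → Fin (2*n)))) (p := Hall)
      have : ((univ.filter (fun g : M → Fin (2*n) => Hall g)).card : ℝ)
          + ((univ.filter (fun g : M → Fin (2*n) => ¬ Hall g)).card : ℝ)
          = ((univ : Finset (M → Fin (2*n))).card : ℝ) := by exact_mod_cast hh
      linarith
    have hsub2 : ((univ.filter (fun g : M → Fin (2*n) => Hall g)).card : ℝ) ≤
        ((univ.filter (fun g : M → Fin (2 * n) =>
              ∃ (A : Fin n → Finset M) (J : Fin n → Option (Fin (2 * n))),
                (∀ i k : Fin n, i ≠ k → Disjoint (A i) (A k)) ∧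
                (∀ i, (J i = none ∧ ∃ x : M, A i = {x}) ∨
                  ∃ j, J i = some j ∧ A i = Finset.univ.filter (fun x => g x = j)) ∧
                (∀ (i k : Fin n) (j : Fin (2 * n)),
                  i ≠ k → J i = some j → J k ≠ some j) ∧
                cst ^ n * ∏ i, v i (O i) ≤ ∏ i, v i (A i))).card : ℝ) := by
      apply Nat.cast_le.mpr
      apply Finset.card_le_card
      intro g hg
      rw [Finset.mem_filter] at hg ⊢
      exact ⟨hg.1, hGoodOfHall g hg.2⟩
    calc (1 - 1/(m:ℝ)) * (2*(n:ℝ))^m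
        = ((univ : Finset (M → Fin (2*n))).card : ℝ)
          - ((univ : Finset (M → Fin (2*n))).card : ℝ)/(m:ℝ) := hgoalrw
      _ ≤ ((univ : Finset (M → Fin (2*n))).card : ℝ)
          - ((univ.filter (fun g : M → Fin (2*n) => ¬ Hall g)).card : ℝ) := by
            linarith [hFailcard]
      _ ≤ ((univ.filter (fun g : M → Fin (2*n) => Hall g)).card : ℝ) := hHallcard
      _ ≤ _ := hsub2
end
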